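/- arXiv:2304.14578 — 8 statements merged into one kernel-verified Lean document; each statement's English description precedes it below -/
import Mathlib

section
/- Consider the discrete-time stochastic system x_{k+1} = f(x_k, d_k) with disturbances d_k drawn i.i.d. from a distribution D on ℝ^m, and suppose V : ℝⁿ → ℝ_{≥0} satisfies the expected drift condition E_{d∼D}[V(f(x,d))] ≤ (1−α)V(x) + φ for all x ∈ ℝⁿ, where α ∈ (0,1) and φ ≥ 0. Fix K ∈ ℕ, let θ = 1/(1−α), and define the process W_k = θ^k V(x_k) − φ Σ_{i=1}^{k} θ^i + φ Σ_{i=1}^{K} θ^i for k = 0, 1, …, K, where (x_k) is the trajectory generated from a fixed initial state x₀ by the i.i.d. disturbances. Then (W_k)_{k=0}^{K} is a nonnegative supermartingale with respect to the natural filtration generated by the state trajectory: W_k ≥ 0 and E[W_{k+1} | x_{0:k}] ≤ W_k almost surely for all k < K. -/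
open MeasureTheory ProbabilityTheory Filter Set

/-- Trajectory of the system as a function of the first `k` disturbances. -/
def sysTraj {X D : Type*} (f : X → D → X) (x₀ : X) : (k : ℕ) → (Fin k → D) → X
  | 0, _ => x₀
  | (k + 1), v => f (sysTraj f x₀ k (fun j => v j.castSucc)) (v (Fin.last k))

lemma sysTraj_continuous {X D : Type*} [TopologicalSpace X] [TopologicalSpace D]
    (f : X → D → X) (hf : Continuous (Function.uncurry f)) (x₀ : X) (k : ℕ) :
    Continuous (sysTraj f x₀ k) := by
  induction k with
  | zero => exact continuous_const
  | succ i ih =>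
    have h1 : Continuous fun v : Fin (i + 1) → D =>
        ((sysTraj f x₀ i fun j => v j.castSucc), v (Fin.last i)) :=
      (ih.comp (continuous_pi fun j => continuous_apply _)).prodMk (continuous_apply _)
    exact hf.comp h1

/-- **Supermartingale construction.** For the system `x_{k+1} = f(x_k, d_k)` with `d_k` i.i.d.
from `μ`, if the nonnegative function `V` satisfies the expected drift condition
`E_d[V(f(x,d))] ≤ (1-α) V(x) + φ` for all `x`, then with `θ = 1/(1-α)` the process
`W_k = θ^k V(x_k) - φ ∑_{i=1}^k θ^i + φ ∑_{i=1}^K θ^i` is (on the horizon `0,…,K`) a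
nonnegative supermartingale with respect to the natural filtration of the state process:
it is adapted, integrable, `W_k ≥ 0`, and `E[W_{k+1} | x_{0:k}] ≤ W_k` a.s. for `k < K`. -/
theorem supermartingale_construction {n m : ℕ}
    (f : EuclideanSpace ℝ (Fin n) → EuclideanSpace ℝ (Fin m) → EuclideanSpace ℝ (Fin n))
    (hf : Continuous (Function.uncurry f))
    (μ : Measure (EuclideanSpace ℝ (Fin m))) [IsProbabilityMeasure μ]
    (V : EuclideanSpace ℝ (Fin n) → ℝ) (hVmeas : Measurable V) (hVnonneg : ∀ x, 0 ≤ V x)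
    (α φ : ℝ) (hα : α ∈ Set.Ioo (0 : ℝ) 1) (hφ : 0 ≤ φ)
    (hVint : ∀ x, Integrable (fun v => V (f x v)) μ)
    (hdrift : ∀ x, (∫ v, V (f x v) ∂μ) ≤ (1 - α) * V x + φ)
    (K : ℕ) (x₀ : EuclideanSpace ℝ (Fin n))
    {Ω : Type*} {mΩ : MeasurableSpace Ω} (P : Measure Ω) [IsProbabilityMeasure P]
    (d : ℕ → Ω → EuclideanSpace ℝ (Fin m)) (hdmeas : ∀ k, Measurable (d k))
    (hindep : iIndepFun d P)
    (hdist : ∀ k, Measure.map (d k) P = μ)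
    (x : ℕ → Ω → EuclideanSpace ℝ (Fin n))
    (hx0 : ∀ ω, x 0 ω = x₀)
    (hxstep : ∀ k ω, x (k + 1) ω = f (x k ω) (d k ω))
    (hxmeas : ∀ k, StronglyMeasurable (x k))
    (θ : ℝ) (hθ : θ = (1 - α)⁻¹)
    (W : ℕ → Ω → ℝ)
    (hW : ∀ k ω, W k ω =
      θ ^ k * V (x k ω) - φ * ∑ i ∈ Finset.Icc 1 k, θ ^ i + φ * ∑ i ∈ Finset.Icc 1 K, θ ^ i) :
    (∀ k ≤ K, ∀ ω, 0 ≤ W k ω) ∧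
    (∀ k ≤ K, StronglyMeasurable[(Filtration.natural x hxmeas) k] (W k)) ∧
    (∀ k ≤ K, Integrable (W k) P) ∧
    (∀ k < K, P[W (k + 1) | (Filtration.natural x hxmeas) k] ≤ᵐ[P] W k) := by
  obtain ⟨hα0, hα1⟩ := hα
  have h1α : (0:ℝ) < 1 - α := by linarith
  have hθpos : 0 < θ := by rw [hθ]; positivity
  have hθα : (1 - α) * θ = 1 := by rw [hθ]; field_simp
  set g : (k : ℕ) → (Fin k → EuclideanSpace ℝ (Fin m)) → EuclideanSpace ℝ (Fin n) :=
    sysTraj f x₀ with hgdef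
  have hgc : ∀ k, Continuous (g k) := sysTraj_continuous f hf x₀
  have hxg : ∀ k ω, x k ω = g k (fun i : Fin k => d i ω) := by
    intro k
    induction k with
    | zero => intro ω; rw [hx0]; rfl
    | succ i ih =>
      intro ω
      rw [hxstep, ih]
      show _ = f (g i fun j => d ((j.castSucc : Fin (i+1)) : ℕ) ω) (d ((Fin.last i : Fin (i+1)) : ℕ) ω)
      simp [Fin.coe_castSucc, Fin.val_last]
  set D : (k : ℕ) → Ω → (Fin k → EuclideanSpace ℝ (Fin m)) :=
    fun k ω i => d i ω with hDdef
  have hD : ∀ k, Measurable (D k) := fun k => measurable_pi_lambda _ fun i => hdmeas i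
  have hDind : ∀ k, IndepFun (D k) (d k) P := by
    intro k
    have h := hindep.indepFun_finset (Finset.range k) {k}
      (by simp [Finset.disjoint_left]; omega) hdmeas
    have hφm : Measurable fun (u : (Finset.range k) → EuclideanSpace ℝ (Fin m)) (i : Fin k) =>
        u ⟨(i : ℕ), Finset.mem_range.mpr i.isLt⟩ :=
      measurable_pi_lambda _ fun i => measurable_pi_apply _
    have hψm : Measurable fun (u : ({k} : Finset ℕ) → EuclideanSpace ℝ (Fin m)) =>
        u ⟨k, Finset.mem_singleton_self k⟩ := measurable_pi_apply _
    exact h.comp hφm hψm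
  have hνprob : ∀ k, IsProbabilityMeasure (P.map (D k)) := fun k =>
    Measure.isProbabilityMeasure_map (hD k).aemeasurable
  have hmap : ∀ k, P.map (fun ω => (D k ω, d k ω)) = (P.map (D k)).prod μ := by
    intro k
    rw [((indepFun_iff_map_prod_eq_prod_map_map (hD k).aemeasurable
      (hdmeas k).aemeasurable).mp (hDind k)), hdist k]
  set Φ : (k : ℕ) → ((Fin k → EuclideanSpace ℝ (Fin m)) × EuclideanSpace ℝ (Fin m)) → ℝ :=
    fun k p => V (f (g k p.1) p.2) with hΦdef
  have hΦm : ∀ k, Measurable (Φ k) := fun k =>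
    hVmeas.comp (hf.comp (((hgc k).comp continuous_fst).prodMk continuous_snd)).measurable
  have hgiff : ∀ k, (Integrable (fun u => V (g k u)) (P.map (D k)) ↔
      Integrable (fun ω => V (x k ω)) P) := by
    intro k
    have h := integrable_map_measure (μ := P) (f := D k) (g := fun u => V (g k u))
      (hVmeas.comp (hgc k).measurable).aestronglyMeasurable (hD k).aemeasurable
    rw [h]
    constructor <;> intro hh <;> refine hh.congr (Eventually.of_forall fun ω => ?_)
    · show V (g k (D k ω)) = V (x k ω)
      rw [hxg]
    · show V (x k ω) = V (g k (D k ω))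
      rw [hxg]
  have hdomint : ∀ k, Integrable (fun ω => V (x k ω)) P →
      Integrable (fun u => (1 - α) * V (g k u) + φ) (P.map (D k)) := by
    intro k hk
    haveI := hνprob k
    exact (((hgiff k).mpr hk).const_mul (1 - α)).add (integrable_const φ)
  have hΦprod' : ∀ k, Integrable (fun ω => V (x k ω)) P → Integrable (Φ k) ((P.map (D k)).prod μ) := by
    intro k hk
    haveI := hνprob k
    rw [integrable_prod_iff (hΦm k).aestronglyMeasurable]
    constructor
    · exact Eventually.of_forall fun u => hVint (g k u)
    · have heq : (fun u => ∫ v, ‖Φ k (u, v)‖ ∂μ) = fun u => ∫ v, V (f (g k u) v) ∂μ := by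
        funext u
        exact integral_congr_ae (Eventually.of_forall fun v =>
          Real.norm_of_nonneg (hVnonneg _))
      rw [heq]
      refine Integrable.mono (hdomint k hk)
        ((hΦm k).stronglyMeasurable.integral_prod_right').aestronglyMeasurable
        (Eventually.of_forall fun u => ?_)
      have h0 : 0 ≤ ∫ v, V (f (g k u) v) ∂μ := integral_nonneg fun v => hVnonneg _
      have h1 : 0 ≤ (1 - α) * V (g k u) + φ :=
        add_nonneg (mul_nonneg h1α.le (hVnonneg _)) hφ
      rw [Real.norm_of_nonneg h0, Real.norm_of_nonneg h1]
      exact hdrift _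
  have hVxint : ∀ k, Integrable (fun ω => V (x k ω)) P := by
    intro k
    induction k with
    | zero =>
      refine (integrable_const (V x₀)).congr (Eventually.of_forall fun ω => ?_)
      show V x₀ = V (x 0 ω)
      rw [hx0]
    | succ i ih =>
      have hprod := hΦprod' i ih
      haveI := hνprob i
      have hpair : AEMeasurable (fun ω => (D i ω, d i ω)) P :=
        ((hD i).prodMk (hdmeas i)).aemeasurable
      have h2 : Integrable ((Φ i) ∘ (fun ω => (D i ω, d i ω))) P := by
        rw [← integrable_map_measure (by rw [hmap i]; exact (hΦm i).aestronglyMeasurable) hpair,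
          hmap i]
        exact hprod
      refine h2.congr (Eventually.of_forall fun ω => ?_)
      show V (f (g i (D i ω)) (d i ω)) = V (x (i + 1) ω)
      rw [hxstep, hxg]
  have hFle : ∀ k, (Filtration.natural x hxmeas) k ≤
      MeasurableSpace.comap (D k) MeasurableSpace.pi := by
    intro k
    refine iSup₂_le fun i hik => ?_
    have hxi : x i = (fun u : Fin k → EuclideanSpace ℝ (Fin m) =>
        g i (fun j : Fin i => u (Fin.castLE hik j))) ∘ D k := by
      funext ω
      rw [hxg]
      simp [Function.comp, hDdef, Fin.coe_castLE]
    have hres : Measurable fun (u : Fin k → EuclideanSpace ℝ (Fin m)) (j : Fin i) =>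
        u (Fin.castLE hik j) := measurable_pi_lambda _ fun j => measurable_pi_apply _
    rw [hxi, ← MeasurableSpace.comap_comp]
    exact MeasurableSpace.comap_mono (((hgc i).measurable.comp hres).comap_le)
  have hkey : ∀ k, ∀ A : Set Ω,
      MeasurableSet[MeasurableSpace.comap (D k) MeasurableSpace.pi] A →
      ∫ ω in A, V (x (k + 1) ω) ∂P ≤ ∫ ω in A, ((1 - α) * V (x k ω) + φ) ∂P := by
    intro k A hA
    obtain ⟨S, hS, rfl⟩ := hA
    haveI := hνprob k
    have hprod := hΦprod' k (hVxint k)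
    have hgk : Integrable (fun u => V (g k u)) (P.map (D k)) := (hgiff k).mpr (hVxint k)
    have hAmeas : MeasurableSet (D k ⁻¹' S) := (hD k) hS
    set Ψ : ((Fin k → EuclideanSpace ℝ (Fin m)) × EuclideanSpace ℝ (Fin m)) → ℝ :=
      (Prod.fst ⁻¹' S).indicator (Φ k) with hΨdef
    have hΨm : Measurable Ψ := (hΦm k).indicator (hS.preimage measurable_fst)
    have hΨint : Integrable Ψ ((P.map (D k)).prod μ) := hprod.indicator (hS.preimage measurable_fst)
    have hpair : AEMeasurable (fun ω => (D k ω, d k ω)) P :=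
      ((hD k).prodMk (hdmeas k)).aemeasurable
    have step1 : ∫ ω in D k ⁻¹' S, V (x (k + 1) ω) ∂P = ∫ ω, Ψ (D k ω, d k ω) ∂P := by
      rw [← integral_indicator hAmeas]
      congr 1
      funext ω
      by_cases h : ω ∈ D k ⁻¹' S
      · rw [Set.indicator_of_mem h, hΨdef,
          Set.indicator_of_mem (show (D k ω, d k ω) ∈ Prod.fst ⁻¹' S from h)]
        show V (x (k + 1) ω) = V (f (g k (D k ω)) (d k ω))
        rw [hxstep, hxg]
      · rw [Set.indicator_of_notMem h, hΨdef,
          Set.indicator_of_notMem (show (D k ω, d k ω) ∉ Prod.fst ⁻¹' S from h)]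
    have step2 : ∫ ω, Ψ (D k ω, d k ω) ∂P = ∫ p, Ψ p ∂((P.map (D k)).prod μ) := by
      rw [← hmap k]
      exact (integral_map hpair (by rw [hmap k]; exact hΨm.aestronglyMeasurable)).symm
    have step3 : ∫ p, Ψ p ∂((P.map (D k)).prod μ) = ∫ u, ∫ v, Ψ (u, v) ∂μ ∂(P.map (D k)) :=
      integral_prod _ hΨint
    have step4 : ∫ u, ∫ v, Ψ (u, v) ∂μ ∂(P.map (D k)) ≤
        ∫ u, (S.indicator (fun u => (1 - α) * V (g k u) + φ)) u ∂(P.map (D k)) := by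
      have hint2 : Integrable (fun u => (1 - α) * V (g k u) + φ) (P.map (D k)) :=
        hdomint k (hVxint k)
      refine integral_mono hΨint.integral_prod_left (hint2.indicator hS) fun u => ?_
      by_cases hu : u ∈ S
      · have h1 : (fun v => Ψ (u, v)) = fun v => V (f (g k u) v) := by
          funext v
          rw [hΨdef, Set.indicator_of_mem (show (u, v) ∈ Prod.fst ⁻¹' S from hu)]
        show ∫ v, Ψ (u, v) ∂μ ≤ _
        rw [h1, Set.indicator_of_mem hu]
        exact hdrift _
      · have h1 : (fun v => Ψ (u, v)) = fun _ => (0:ℝ) := by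
          funext v
          rw [hΨdef, Set.indicator_of_notMem (show (u, v) ∉ Prod.fst ⁻¹' S from hu)]
        show ∫ v, Ψ (u, v) ∂μ ≤ _
        rw [h1, Set.indicator_of_notMem hu]
        simp
    have step5 : ∫ u, (S.indicator (fun u => (1 - α) * V (g k u) + φ)) u ∂(P.map (D k)) =
        ∫ ω in D k ⁻¹' S, ((1 - α) * V (x k ω) + φ) ∂P := by
      have hmble : AEStronglyMeasurable (fun u => (1 - α) * V (g k u) + φ) (P.map (D k)) :=
        (((hVmeas.comp (hgc k).measurable).const_mul (1 - α)).add_const φ).aestronglyMeasurable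
      rw [integral_indicator hS,
        setIntegral_map (g := D k) (f := fun u => (1 - α) * V (g k u) + φ) hS hmble
          (hD k).aemeasurable]
      refine integral_congr_ae (Eventually.of_forall fun ω => ?_)
      show (1 - α) * V (g k (D k ω)) + φ = (1 - α) * V (x k ω) + φ
      rw [hxg]
    calc ∫ ω in D k ⁻¹' S, V (x (k + 1) ω) ∂P
        = ∫ u, ∫ v, Ψ (u, v) ∂μ ∂(P.map (D k)) := by rw [step1, step2, step3]
      _ ≤ _ := step4
      _ = _ := step5
  -- Part 1: nonnegativity
  have part1 : ∀ k ≤ K, ∀ ω, 0 ≤ W k ω := by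
    intro k hk ω
    rw [hW]
    have hsum : φ * ∑ i ∈ Finset.Icc 1 k, θ ^ i ≤ φ * ∑ i ∈ Finset.Icc 1 K, θ ^ i := by
      refine mul_le_mul_of_nonneg_left ?_ hφ
      exact Finset.sum_le_sum_of_subset_of_nonneg (Finset.Icc_subset_Icc_right hk)
        (fun i _ _ => (pow_pos hθpos i).le)
    have h0 : 0 ≤ θ ^ k * V (x k ω) := mul_nonneg (pow_pos hθpos k).le (hVnonneg _)
    linarith
  -- Part 2: adaptedness
  have part2 : ∀ k, StronglyMeasurable[(Filtration.natural x hxmeas) k] (W k) := by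
    intro k
    have hxk : Measurable[(Filtration.natural x hxmeas) k] (x k) := by
      have h1 : Measurable[MeasurableSpace.comap (x k) inferInstance] (x k) :=
        measurable_iff_comap_le.mpr le_rfl
      refine h1.mono ?_ le_rfl
      exact le_iSup₂ (f := fun j (_ : j ≤ k) =>
        MeasurableSpace.comap (x j) inferInstance) k le_rfl
    have hWeq : W k = fun ω => θ ^ k * V (x k ω) - φ * ∑ i ∈ Finset.Icc 1 k, θ ^ i
        + φ * ∑ i ∈ Finset.Icc 1 K, θ ^ i := funext fun ω => hW k ω
    rw [hWeq]
    exact ((((hVmeas.comp hxk).const_mul (θ ^ k)).sub_const _).add_const _).stronglyMeasurable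
  -- Part 3: integrability
  have part3 : ∀ k, Integrable (W k) P := by
    intro k
    have hWeq : W k = fun ω => θ ^ k * V (x k ω) - φ * ∑ i ∈ Finset.Icc 1 k, θ ^ i
        + φ * ∑ i ∈ Finset.Icc 1 K, θ ^ i := funext fun ω => hW k ω
    rw [hWeq]
    exact (((hVxint k).const_mul (θ ^ k)).sub (integrable_const _)).add (integrable_const _)
  -- Part 4: supermartingale property
  have part4 : ∀ k < K, P[W (k + 1) | (Filtration.natural x hxmeas) k] ≤ᵐ[P] W k := by
    intro k hkK
    have hle : (Filtration.natural x hxmeas) k ≤ mΩ := (Filtration.natural x hxmeas).le k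
    haveI : SigmaFinite (P.trim hle) := inferInstance
    -- set-integral expansion of W
    have expand : ∀ (j : ℕ) (s : Set Ω), MeasurableSet s →
        ∫ ω in s, W j ω ∂P = θ ^ j * ∫ ω in s, V (x j ω) ∂P +
          (φ * ∑ i ∈ Finset.Icc 1 K, θ ^ i - φ * ∑ i ∈ Finset.Icc 1 j, θ ^ i) *
            (P s).toReal := by
      intro j s hs
      have hWeq : ∀ ω, W j ω = θ ^ j * V (x j ω) +
          (φ * ∑ i ∈ Finset.Icc 1 K, θ ^ i - φ * ∑ i ∈ Finset.Icc 1 j, θ ^ i) :=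
        fun ω => by rw [hW]; ring
      calc ∫ ω in s, W j ω ∂P
          = ∫ ω in s, (θ ^ j * V (x j ω) +
            (φ * ∑ i ∈ Finset.Icc 1 K, θ ^ i - φ * ∑ i ∈ Finset.Icc 1 j, θ ^ i)) ∂P := by
            exact integral_congr_ae (Eventually.of_forall fun ω => hWeq ω)
        _ = (∫ ω in s, θ ^ j * V (x j ω) ∂P) +
            (∫ ω in s, (φ * ∑ i ∈ Finset.Icc 1 K, θ ^ i
              - φ * ∑ i ∈ Finset.Icc 1 j, θ ^ i) ∂P) :=
            integral_add ((hVxint j).const_mul (θ ^ j)).integrableOn ((integrableOn_const_iff (by finiteness)).mpr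
              (Or.inr (measure_lt_top P s)))
        _ = θ ^ j * ∫ ω in s, V (x j ω) ∂P +
            (φ * ∑ i ∈ Finset.Icc 1 K, θ ^ i - φ * ∑ i ∈ Finset.Icc 1 j, θ ^ i) *
              (P s).toReal := by
            rw [integral_const_mul, setIntegral_const, smul_eq_mul, measureReal_def]
            ring
    -- set-integral inequality for W
    have hsetineq : ∀ s : Set Ω, MeasurableSet[(Filtration.natural x hxmeas) k] s →
        ∫ ω in s, W (k + 1) ω ∂P ≤ ∫ ω in s, W k ω ∂P := by
      intro s hs
      have hsm : MeasurableSet s := hle s hs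
      have hks := hkey k s (hFle k s hs)
      have expandR : ∫ ω in s, ((1 - α) * V (x k ω) + φ) ∂P
          = (1 - α) * ∫ ω in s, V (x k ω) ∂P + φ * (P s).toReal := by
        rw [integral_add ((hVxint k).const_mul (1 - α)).integrableOn ((integrableOn_const_iff (by finiteness)).mpr
          (Or.inr (measure_lt_top P s))), integral_const_mul, setIntegral_const, smul_eq_mul, measureReal_def]
        ring
      rw [expandR] at hks
      rw [expand (k + 1) s hsm, expand k s hsm]
      set I1 := ∫ ω in s, V (x (k + 1) ω) ∂P
      set I0 := ∫ ω in s, V (x k ω) ∂P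
      set p := (P s).toReal
      have hppos : 0 ≤ p := ENNReal.toReal_nonneg
      have hS : ∑ i ∈ Finset.Icc 1 (k + 1), θ ^ i
          = (∑ i ∈ Finset.Icc 1 k, θ ^ i) + θ ^ (k + 1) :=
        Finset.sum_Icc_succ_top (by omega) _
      have hpow : (1 - α) * θ ^ (k + 1) = θ ^ k := by
        rw [pow_succ]
        calc (1 - α) * (θ ^ k * θ) = θ ^ k * ((1 - α) * θ) := by ring
          _ = θ ^ k := by rw [hθα, mul_one]
      have h2 : θ ^ (k + 1) * I1 ≤ θ ^ (k + 1) * ((1 - α) * I0 + φ * p) :=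
        mul_le_mul_of_nonneg_left hks (pow_nonneg hθpos.le _)
      have h3 : θ ^ (k + 1) * ((1 - α) * I0 + φ * p)
          = θ ^ k * I0 + θ ^ (k + 1) * (φ * p) := by
        rw [← hpow]; ring
      rw [hS]
      nlinarith [h2, h3]
    refine ae_le_of_ae_le_trim (hm := hle) ?_
    refine ae_le_of_forall_setIntegral_le (μ := P.trim hle)
      (integrable_condExp.trim hle stronglyMeasurable_condExp)
      ((part3 k).trim hle (part2 k)) ?_
    intro t ht hμt
    rw [← setIntegral_trim hle stronglyMeasurable_condExp ht,
      ← setIntegral_trim hle (part2 k) ht,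
      setIntegral_condExp hle (part3 (k + 1)) ht]
    exact hsetineq t ht
  exact ⟨part1, fun k _ => part2 k, fun k _ => part3 k, part4⟩
end

section
/- Consider the discrete-time stochastic system x_{k+1} = f(x_k, d_k) with disturbances d_k drawn i.i.d. from a distribution D on ℝ^m, and suppose V : ℝⁿ → ℝ_{≥0} satisfies E_{d∼D}[V(f(x,d))] ≤ (1−α)V(x) + φ for all x ∈ ℝⁿ, where α ∈ (0,1) and φ ≥ 0. Fix K ∈ ℕ, an initial state x₀, and λ > 0, and define ρ_k = (λ − θ^{K+1}φ/(θ−1)) θ^{−k} + θφ/(θ−1) with θ = 1/(1−α). Then P{ V(x_k) ≤ ρ_k for all k ≤ K } ≥ 1 − (V(x₀) + (φ/α)((1−α)^{−K} − 1)) / λ, where the probability is over the i.i.d. disturbance sequence and x_k is the trajectory generated from x₀. -/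
open MeasureTheory ProbabilityTheory Filter Set
open scoped ENNReal NNReal

noncomputable def villeTraj {n m : ℕ}
    (f : EuclideanSpace ℝ (Fin n) → EuclideanSpace ℝ (Fin m) → EuclideanSpace ℝ (Fin n))
    (x₀ : EuclideanSpace ℝ (Fin n)) :
    (k : ℕ) → (Fin k → EuclideanSpace ℝ (Fin m)) → EuclideanSpace ℝ (Fin n)
  | 0, _ => x₀
  | (k+1), u => f (villeTraj f x₀ k (Fin.init u)) (u (Fin.last k))

lemma villeTraj_measurable {n m : ℕ}
    {f : EuclideanSpace ℝ (Fin n) → EuclideanSpace ℝ (Fin m) → EuclideanSpace ℝ (Fin n)}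
    (hf : Continuous (Function.uncurry f)) (x₀ : EuclideanSpace ℝ (Fin n)) :
    ∀ k, Measurable (villeTraj f x₀ k)
  | 0 => measurable_const
  | (k+1) => by
    have h1 : Measurable fun u : Fin (k+1) → EuclideanSpace ℝ (Fin m) =>
        villeTraj f x₀ k (Fin.init u) :=
      (villeTraj_measurable hf x₀ k).comp (measurable_pi_lambda _ fun i => measurable_pi_apply _)
    exact hf.measurable.comp (h1.prodMk (measurable_pi_apply _))

/-- **Finite-horizon exit probability bound (Ville's inequality applied to the constructed
supermartingale).** For `x_{k+1} = f(x_k, d_k)` with `d_k` i.i.d. from `μ`, if the nonnegative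
`V` satisfies `E_d[V(f(x,d))] ≤ (1-α)V(x) + φ`, then with `θ = 1/(1-α)` and
`ρ_k = (λ - θ^{K+1} φ/(θ-1)) θ^{-k} + θ φ/(θ-1)`,
`P{ V(x_k) ≤ ρ_k, ∀ k ≤ K } ≥ 1 - (V(x₀) + (φ/α)((1-α)^{-K} - 1))/λ`. -/
theorem finite_horizon_exit_probability_bound {n m : ℕ}
    (f : EuclideanSpace ℝ (Fin n) → EuclideanSpace ℝ (Fin m) → EuclideanSpace ℝ (Fin n))
    (hf : Continuous (Function.uncurry f))
    (μ : Measure (EuclideanSpace ℝ (Fin m))) [IsProbabilityMeasure μ]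
    (V : EuclideanSpace ℝ (Fin n) → ℝ) (hVmeas : Measurable V) (hVnonneg : ∀ x, 0 ≤ V x)
    (α φ : ℝ) (hα : α ∈ Set.Ioo (0 : ℝ) 1) (hφ : 0 ≤ φ)
    (hVint : ∀ x, Integrable (fun v => V (f x v)) μ)
    (hdrift : ∀ x, (∫ v, V (f x v) ∂μ) ≤ (1 - α) * V x + φ)
    (K : ℕ) (x₀ : EuclideanSpace ℝ (Fin n)) (lam : ℝ) (hlam : 0 < lam)
    {Ω : Type*} {mΩ : MeasurableSpace Ω} (P : Measure Ω) [IsProbabilityMeasure P]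
    (d : ℕ → Ω → EuclideanSpace ℝ (Fin m)) (hdmeas : ∀ k, Measurable (d k))
    (hindep : iIndepFun d P)
    (hdist : ∀ k, Measure.map (d k) P = μ)
    (x : ℕ → Ω → EuclideanSpace ℝ (Fin n))
    (hx0 : ∀ ω, x 0 ω = x₀)
    (hxstep : ∀ k ω, x (k + 1) ω = f (x k ω) (d k ω))
    (θ : ℝ) (hθ : θ = (1 - α)⁻¹) :
    P {ω | ∀ k ≤ K, V (x k ω) ≤
        (lam - θ ^ (K + 1) * φ / (θ - 1)) * θ ^ (-(k : ℤ)) + θ * φ / (θ - 1)} ≥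
      ENNReal.ofReal (1 - (V x₀ + (φ / α) * ((1 - α) ^ (-(K : ℤ)) - 1)) / lam) := by
  obtain ⟨hα0, hα1⟩ := hα
  have h1α : 0 < 1 - α := by linarith
  have hθ1 : 1 < θ := by
    rw [hθ]
    rw [lt_inv_comm₀] <;> simp <;> linarith
  have hθpos : 0 < θ := by linarith
  have hθm1 : 0 < θ - 1 := by linarith
  have hθα : θ * (1 - α) = 1 := by rw [hθ]; field_simp
  -- trajectory representation
  set X : (k : ℕ) → Ω → (Fin k → EuclideanSpace ℝ (Fin m)) := fun k ω i => d i ω with hX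
  have hXmeas : ∀ k, Measurable (X k) := fun k => measurable_pi_lambda _ fun i => hdmeas i
  have hxtraj : ∀ k ω, x k ω = villeTraj f x₀ k (X k ω) := by
    intro k
    induction k with
    | zero => intro ω; rw [hx0]; rfl
    | succ k ih =>
      intro ω
      rw [hxstep k ω, ih ω]
      rfl
  have hxmeas : ∀ k, Measurable (x k) := by
    intro k
    have : x k = fun ω => villeTraj f x₀ k (X k ω) := funext (hxtraj k)
    rw [this]
    exact (villeTraj_measurable hf x₀ k).comp (hXmeas k)
  -- the supermartingale shift constants
  set c : ℕ → ℝ := fun k => φ * (θ ^ (K + 1) - θ ^ (k + 1)) / (θ - 1) with hc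
  have hcnn : ∀ k, k ≤ K → 0 ≤ c k := by
    intro k hk
    apply div_nonneg _ hθm1.le
    apply mul_nonneg hφ
    have : θ ^ (k+1) ≤ θ ^ (K+1) := pow_le_pow_right₀ hθ1.le (by omega)
    linarith
  have hcrec : ∀ k, c k = θ ^ (k+1) * φ + c (k+1) := by
    intro k
    simp only [hc]
    field_simp
    ring
  set W : ℕ → Ω → ℝ := fun k ω => θ ^ k * V (x k ω) + c k with hW
  have hWmeas : ∀ k, Measurable (W k) :=
    fun k => (((hVmeas.comp (hxmeas k)).const_mul _).add_const _)
  -- event reformulation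
  have hrho : ∀ (k : ℕ) ω, (V (x k ω) ≤
      (lam - θ ^ (K + 1) * φ / (θ - 1)) * θ ^ (-(k : ℤ)) + θ * φ / (θ - 1)) ↔ W k ω ≤ lam := by
    intro k ω
    have hzp : (θ : ℝ) ^ (-(k : ℤ)) = (θ ^ k)⁻¹ := by
      rw [zpow_neg, zpow_natCast]
    have hpk : 0 < θ ^ k := pow_pos hθpos k
    have key : θ ^ k * ((lam - θ ^ (K + 1) * φ / (θ - 1)) * (θ ^ k)⁻¹ + θ * φ / (θ - 1)) + c k
        = lam := by
      simp only [hc]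
      field_simp
      ring
    rw [hzp]
    constructor
    · intro h
      rw [← key]
      simp only [hW]
      exact add_le_add_left (mul_le_mul_of_nonneg_left h hpk.le) _
    · intro h
      rw [← key] at h
      simp only [hW] at h
      exact le_of_mul_le_mul_left (le_of_add_le_add_right h) hpk
  set Cs : ℕ → Set Ω := fun k => {ω | ∀ j < k, W j ω ≤ lam} with hCs
  set Bs : ℕ → Set Ω := fun k => Cs k ∩ {ω | lam < W k ω} with hBs
  have hCmeas : ∀ k, MeasurableSet (Cs k) := by
    intro k
    have : Cs k = ⋂ (j : ℕ) (_ : j < k), {ω | W j ω ≤ lam} := by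
      ext ω; simp [hCs]
    rw [this]
    exact MeasurableSet.iInter fun j => MeasurableSet.iInter fun _ =>
      measurableSet_le (hWmeas j) measurable_const
  have hBmeas : ∀ k, MeasurableSet (Bs k) := fun k =>
    (hCmeas k).inter (measurableSet_lt measurable_const (hWmeas k))
  -- supermartingale step
  have hstep : ∀ k, k < K → ∀ S : Set (Fin k → EuclideanSpace ℝ (Fin m)), MeasurableSet S →
      (∫⁻ ω, S.indicator 1 (X k ω) * ENNReal.ofReal (W (k+1) ω) ∂P)
        ≤ ∫⁻ ω, S.indicator 1 (X k ω) * ENNReal.ofReal (W k ω) ∂P := by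
    intro k hk S hS
    have hgm : Measurable (fun u : Fin k → EuclideanSpace ℝ (Fin m) => S.indicator (1 : (Fin k → EuclideanSpace ℝ (Fin m)) → ℝ≥0∞) u) :=
      measurable_one.indicator hS
    have hgne : ∀ u : Fin k → EuclideanSpace ℝ (Fin m), S.indicator (1 : (Fin k → EuclideanSpace ℝ (Fin m)) → ℝ≥0∞) u ≠ (⊤ : ℝ≥0∞) := by
      intro u; by_cases h : u ∈ S <;> simp [h]
    -- independence and product structure
    have hmap : P.map (fun ω => (X k ω, d k ω)) = (P.map (X k)).prod μ := by
      have hdisj : Disjoint (Finset.range k) ({k} : Finset ℕ) := by simp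
      have hIF := hindep.indepFun_finset (Finset.range k) {k} hdisj hdmeas
      have hφ1 : Measurable (fun (g : ↥(Finset.range k) → EuclideanSpace ℝ (Fin m))
          (i : Fin k) => g ⟨i, Finset.mem_range.mpr i.isLt⟩) :=
        measurable_pi_lambda _ fun i => measurable_pi_apply _
      have hφ2 : Measurable (fun (g : ↥({k} : Finset ℕ) → EuclideanSpace ℝ (Fin m)) =>
          g ⟨k, Finset.mem_singleton_self k⟩) := measurable_pi_apply _
      have hInd : IndepFun (X k) (d k) P := hIF.comp hφ1 hφ2
      rw [← hdist k]
      exact (indepFun_iff_map_prod_eq_prod_map_map (hXmeas k).aemeasurable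
        (hdmeas k).aemeasurable).mp hInd
    have : IsProbabilityMeasure (P.map (X k)) := Measure.isProbabilityMeasure_map (hXmeas k).aemeasurable
    have htrajm := villeTraj_measurable hf x₀ k
    -- the key one-step drift bound
    have hinner : ∀ y : EuclideanSpace ℝ (Fin n), (∫⁻ v, ENNReal.ofReal (θ ^ (k+1) * V (f y v) + c (k+1)) ∂μ)
        ≤ ENNReal.ofReal (θ ^ k * V y + c k) := by
      intro y
      have hint : Integrable (fun v => θ ^ (k+1) * V (f y v) + c (k+1)) μ :=
        ((hVint y).const_mul _).add (integrable_const _)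
      have hnn : 0 ≤ᵐ[μ] fun v => θ ^ (k+1) * V (f y v) + c (k+1) :=
        Eventually.of_forall fun v => add_nonneg
          (mul_nonneg (pow_pos hθpos _).le (hVnonneg _)) (hcnn (k+1) (by omega))
      rw [← ofReal_integral_eq_lintegral_ofReal hint hnn]
      apply ENNReal.ofReal_le_ofReal
      rw [integral_add ((hVint y).const_mul _) (integrable_const _), integral_const_mul,
        integral_const, Measure.real, measure_univ, ENNReal.toReal_one, one_smul]
      have h2 : θ ^ (k+1) * (∫ v, V (f y v) ∂μ) ≤ θ ^ (k+1) * ((1 - α) * V y + φ) :=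
        mul_le_mul_of_nonneg_left (hdrift y) (pow_pos hθpos _).le
      have h3 : θ ^ (k+1) * ((1 - α) * V y + φ) + c (k+1) = θ ^ k * V y + c k := by
        rw [hcrec k]
        have h4 : θ ^ (k+1) * (1 - α) = θ ^ k := by
          rw [pow_succ, mul_assoc, hθα, mul_one]
        linear_combination (V y) * h4
      linarith
    -- measurable integrand on the product space
    set F : (Fin k → EuclideanSpace ℝ (Fin m)) × EuclideanSpace ℝ (Fin m) → ℝ≥0∞ := fun p =>
      S.indicator 1 p.1 * ENNReal.ofReal (θ ^ (k+1) * V (f (villeTraj f x₀ k p.1) p.2) + c (k+1))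
      with hF
    have hVt : Measurable fun p : (Fin k → EuclideanSpace ℝ (Fin m)) × EuclideanSpace ℝ (Fin m) => V (f (villeTraj f x₀ k p.1) p.2) :=
      hVmeas.comp (hf.measurable.comp ((htrajm.comp measurable_fst).prodMk measurable_snd))
    have hFm : Measurable F :=
      (hgm.comp measurable_fst).mul
        (ENNReal.measurable_ofReal.comp ((hVt.const_mul _).add_const _))
    set G : (Fin k → EuclideanSpace ℝ (Fin m)) → ℝ≥0∞ := fun u =>
      S.indicator 1 u * ENNReal.ofReal (θ ^ k * V (villeTraj f x₀ k u) + c k) with hG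
    have hGm : Measurable G :=
      hgm.mul (ENNReal.measurable_ofReal.comp (((hVmeas.comp htrajm).const_mul _).add_const _))
    calc (∫⁻ ω, S.indicator 1 (X k ω) * ENNReal.ofReal (W (k+1) ω) ∂P)
        = ∫⁻ ω, F (X k ω, d k ω) ∂P := by
          apply lintegral_congr
          intro ω
          simp only [hF, hW]
          congr 2
          rw [hxstep k ω, hxtraj k ω]
      _ = ∫⁻ p, F p ∂((P.map (X k)).prod μ) := by
          rw [← hmap, lintegral_map hFm ((hXmeas k).prodMk (hdmeas k))]
      _ = ∫⁻ u, ∫⁻ v, F (u, v) ∂μ ∂(P.map (X k)) := lintegral_prod _ hFm.aemeasurable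
      _ ≤ ∫⁻ u, G u ∂(P.map (X k)) := by
          apply lintegral_mono
          intro u
          simp only [hF, hG]
          rw [lintegral_const_mul' _ _ (hgne u)]
          exact mul_le_mul_right (hinner _) _
      _ = ∫⁻ ω, G (X k ω) ∂P := lintegral_map hGm (hXmeas k)
      _ = ∫⁻ ω, S.indicator 1 (X k ω) * ENNReal.ofReal (W k ω) ∂P := by
          apply lintegral_congr
          intro ω
          simp only [hG, hW]
          rw [hxtraj k ω]
  -- the C sets are preimages of measurable cylinder sets
  have hCpre : ∀ k : ℕ, ∃ S : Set (Fin k → EuclideanSpace ℝ (Fin m)), MeasurableSet S ∧ Cs (k+1) = (X k) ⁻¹' S := by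
    intro k
    refine ⟨{u : Fin k → EuclideanSpace ℝ (Fin m) | ∀ j (hj : j < k + 1), θ ^ j *
      V (villeTraj f x₀ j (fun i : Fin j => u (Fin.castLE (Nat.lt_succ_iff.mp hj) i))) + c j
        ≤ lam}, ?_, ?_⟩
    · have : {u : Fin k → EuclideanSpace ℝ (Fin m) | ∀ j (hj : j < k + 1), θ ^ j *
          V (villeTraj f x₀ j (fun i : Fin j => u (Fin.castLE (Nat.lt_succ_iff.mp hj) i))) + c j
            ≤ lam} = ⋂ (j : ℕ) (hj : j < k + 1), {u : Fin k → EuclideanSpace ℝ (Fin m) | θ ^ j *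
          V (villeTraj f x₀ j (fun i : Fin j => u (Fin.castLE (Nat.lt_succ_iff.mp hj) i))) + c j
            ≤ lam} := by
        ext u; simp
      rw [this]
      refine MeasurableSet.iInter fun j => MeasurableSet.iInter fun hj => ?_
      refine measurableSet_le (Measurable.add_const (Measurable.const_mul ?_ _) _) measurable_const
      exact hVmeas.comp ((villeTraj_measurable hf x₀ j).comp
        (measurable_pi_lambda _ fun i => measurable_pi_apply _))
    · ext ω
      simp only [hCs, Set.mem_setOf_eq, Set.mem_preimage]
      refine forall_congr' fun j => forall_congr' fun hj => ?_
      have harg : (fun i : Fin j => X k ω (Fin.castLE (Nat.lt_succ_iff.mp hj) i)) = X j ω := by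
        funext i; rfl
      rw [harg, ← hxtraj j ω]
  -- the descending chain
  set T : ℕ → ℝ≥0∞ := fun k => ∫⁻ ω in Cs k, ENNReal.ofReal (W k ω) ∂P with hT
  set L : ℕ → ℝ≥0∞ := fun k => ∫⁻ ω in Bs k, ENNReal.ofReal (W k ω) ∂P with hL
  have hindconv : ∀ (k : ℕ) (S : Set (Fin k → EuclideanSpace ℝ (Fin m))), MeasurableSet S → ∀ g : Ω → ℝ≥0∞,
      (∫⁻ ω, S.indicator 1 (X k ω) * g ω ∂P) = ∫⁻ ω in (X k) ⁻¹' S, g ω ∂P := by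
    intro k S hS g
    rw [← lintegral_indicator ((hXmeas k) hS)]
    apply lintegral_congr
    intro ω
    by_cases h : X k ω ∈ S <;> simp [h, Set.indicator]
  have hCsucc : ∀ k, Cs (k+1) = Cs k ∩ {ω | W k ω ≤ lam} := by
    intro k
    ext ω
    simp only [hCs, Set.mem_setOf_eq, Set.mem_inter_iff]
    exact Nat.forall_lt_succ_right
  have hchainstep : ∀ k, k < K → T (k+1) + L k ≤ T k := by
    intro k hk
    obtain ⟨S, hSm, hpre⟩ := hCpre k
    have h1 : T (k+1) ≤ ∫⁻ ω in Cs (k+1), ENNReal.ofReal (W k ω) ∂P := by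
      have := hstep k hk S hSm
      rw [hindconv k S hSm, hindconv k S hSm, ← hpre] at this
      exact this
    have h2 : (∫⁻ ω in Cs (k+1), ENNReal.ofReal (W k ω) ∂P) + L k = T k := by
      have hdisjCB : Disjoint (Cs (k+1)) (Bs k) := by
        rw [Set.disjoint_left]
        intro ω h3 h4
        rw [hCsucc k] at h3
        simp only [hBs, Set.mem_inter_iff, Set.mem_setOf_eq] at h3 h4
        exact absurd h4.2 (not_lt.mpr h3.2)
      have hunion : Cs (k+1) ∪ Bs k = Cs k := by
        rw [hCsucc k]
        simp only [hBs]
        rw [← Set.inter_union_distrib_left]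
        have huniv : {ω | W k ω ≤ lam} ∪ {ω | lam < W k ω} = Set.univ := by
          ext ω; simp [le_or_gt]
        rw [huniv, Set.inter_univ]
      rw [hT, hL]
      rw [← lintegral_union (hBmeas k) hdisjCB, hunion]
    calc T (k+1) + L k ≤ (∫⁻ ω in Cs (k+1), ENNReal.ofReal (W k ω) ∂P) + L k :=
          add_le_add_left h1 _
      _ = T k := h2
  have hLK : L K ≤ T K := by
    exact lintegral_mono' (Measure.restrict_mono Set.inter_subset_left le_rfl) le_rfl
  have hchain : ∀ j, j ≤ K → (∑ k ∈ Finset.range j, L k) + T j ≤ T 0 := by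
    intro j
    induction j with
    | zero => intro _; simp
    | succ j ih =>
      intro hj
      have h1 := ih (by omega)
      have h2 := hchainstep j (by omega)
      rw [Finset.sum_range_succ]
      calc (∑ k ∈ Finset.range j, L k) + L j + T (j+1)
          = (∑ k ∈ Finset.range j, L k) + (T (j+1) + L j) := by ring
        _ ≤ (∑ k ∈ Finset.range j, L k) + T j := add_le_add_right h2 _
        _ ≤ T 0 := h1
  have htotal : (∑ k ∈ Finset.range (K+1), L k) ≤ T 0 := by
    rw [Finset.sum_range_succ]
    calc (∑ k ∈ Finset.range K, L k) + L K ≤ (∑ k ∈ Finset.range K, L k) + T K :=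
        add_le_add_right hLK _
      _ ≤ T 0 := hchain K le_rfl
  -- value of T 0
  set M : ℝ := V x₀ + (φ / α) * ((1 - α) ^ (-(K : ℤ)) - 1) with hM
  have hzpK : ((1 : ℝ) - α) ^ (-(K : ℤ)) = θ ^ K := by
    rw [zpow_neg, zpow_natCast, ← inv_pow, ← hθ]
  have hMnn : 0 ≤ M := by
    have : (1 : ℝ) ≤ θ ^ K := one_le_pow₀ hθ1.le
    rw [hM, hzpK]
    have := hVnonneg x₀
    have h5 : 0 ≤ φ / α := div_nonneg hφ hα0.le
    nlinarith
  have hT0 : T 0 = ENNReal.ofReal M := by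
    have hC0 : Cs 0 = Set.univ := by ext ω; simp [hCs]
    have hW0 : ∀ ω, W 0 ω = M := by
      intro ω
      simp only [hW, pow_zero, one_mul, hx0 ω, hM, hzpK]
      congr 1
      simp only [hc]
      have := hα0.ne'
      have := hθpos.ne'
      rw [show θ - 1 = θ * α by linear_combination hθα]
      field_simp
      ring
    rw [hT]
    simp only [hC0, Measure.restrict_univ]
    rw [lintegral_congr (fun ω => by rw [hW0 ω] : ∀ ω, ENNReal.ofReal (W 0 ω) = ENNReal.ofReal M)]
    simp [lintegral_const]
  -- Markov bound on each first-exit slice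
  have hMar : ∀ k : ℕ, ENNReal.ofReal lam * P (Bs k) ≤ L k := by
    intro k
    have h1 : ENNReal.ofReal lam * P (Bs k) = ∫⁻ _ω in Bs k, ENNReal.ofReal lam ∂P := by
      rw [setLIntegral_const]
    rw [hL, h1]
    refine setLIntegral_mono' (hBmeas k) fun ω hω => ?_
    simp only [hBs, Set.mem_inter_iff, Set.mem_setOf_eq] at hω
    exact ENNReal.ofReal_le_ofReal hω.2.le
  -- covering of the exit event by first-exit slices
  have hcover : (Cs (K+1))ᶜ ⊆ ⋃ k ∈ Finset.range (K+1), Bs k := by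
    intro ω hω
    simp only [hCs, Set.mem_compl_iff, Set.mem_setOf_eq, not_forall, not_le] at hω
    obtain ⟨j, hj1, hj2⟩ := hω
    classical
    have hexQ : ∃ j, j < K + 1 ∧ lam < W j ω := ⟨j, hj1, hj2⟩
    have hspec := Nat.find_spec hexQ
    apply Set.mem_biUnion (show Nat.find hexQ ∈ Finset.range (K+1) from
      Finset.mem_range.mpr hspec.1)
    simp only [hBs, hCs, Set.mem_inter_iff, Set.mem_setOf_eq]
    refine ⟨fun i hi => ?_, hspec.2⟩
    by_contra hcon
    exact Nat.find_min hexQ hi ⟨lt_trans hi hspec.1, lt_of_not_ge hcon⟩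
  have hsum : P ((Cs (K+1))ᶜ) ≤ ∑ k ∈ Finset.range (K+1), P (Bs k) :=
    (measure_mono hcover).trans (measure_biUnion_finset_le _ _)
  have hfinal1 : ENNReal.ofReal lam * P ((Cs (K+1))ᶜ) ≤ ENNReal.ofReal M := by
    calc ENNReal.ofReal lam * P ((Cs (K+1))ᶜ)
        ≤ ENNReal.ofReal lam * ∑ k ∈ Finset.range (K+1), P (Bs k) := mul_le_mul_right hsum _
      _ = ∑ k ∈ Finset.range (K+1), ENNReal.ofReal lam * P (Bs k) := Finset.mul_sum _ _ _
      _ ≤ ∑ k ∈ Finset.range (K+1), L k := Finset.sum_le_sum fun k _ => hMar k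
      _ ≤ T 0 := htotal
      _ = ENNReal.ofReal M := hT0
  have hcompl : P ((Cs (K+1))ᶜ) ≤ ENNReal.ofReal (M / lam) := by
    rw [ENNReal.ofReal_div_of_pos hlam]
    rw [ENNReal.le_div_iff_mul_le (Or.inl (ENNReal.ofReal_pos.mpr hlam).ne')
      (Or.inl ENNReal.ofReal_ne_top)]
    rw [mul_comm]
    exact hfinal1
  have hgoalset : {ω | ∀ k ≤ K, V (x k ω) ≤
      (lam - θ ^ (K + 1) * φ / (θ - 1)) * θ ^ (-(k : ℤ)) + θ * φ / (θ - 1)} = Cs (K+1) := by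
    ext ω
    simp only [hCs, Set.mem_setOf_eq]
    constructor
    · intro h j hj
      exact (hrho j ω).mp (h j (by omega))
    · intro h k hk
      exact (hrho k ω).mpr (h k (by omega))
  rw [ge_iff_le, hgoalset]
  have hkey : (1 : ℝ≥0∞) ≤ P (Cs (K+1)) + ENNReal.ofReal (M / lam) := by
    have hcc := measure_add_measure_compl (μ := P) (hCmeas (K+1))
    rw [measure_univ] at hcc
    calc (1 : ℝ≥0∞) = P (Cs (K+1)) + P ((Cs (K+1))ᶜ) := hcc.symm
      _ ≤ _ := add_le_add_right hcompl _
  have hMl : 0 ≤ M / lam := div_nonneg hMnn hlam.le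
  calc ENNReal.ofReal (1 - M / lam)
      = ENNReal.ofReal 1 - ENNReal.ofReal (M / lam) := ENNReal.ofReal_sub 1 hMl
    _ = 1 - ENNReal.ofReal (M / lam) := by rw [ENNReal.ofReal_one]
    _ ≤ P (Cs (K+1)) := tsub_le_iff_right.mpr hkey
end

section
/- Consider the additive-disturbance discrete-time system x_{k+1} = f̂(x_k) + d_k with f̂ : ℝⁿ → ℝⁿ continuous and d_k drawn i.i.d. from a distribution D on ℝⁿ with E[d] = 0 and E[‖d‖²] < ∞. Suppose V : ℝⁿ → ℝ_{≥0} is twice continuously differentiable and convex with sup_{x∈ℝⁿ} ‖∇²V(x)‖₂ ≤ λ_max for some λ_max ≥ 0, and suppose there exists α ∈ (0,1) such that the deterministic decrease condition V(f̂(x)) − V(x) ≤ −α V(x) holds for all x ∈ ℝⁿ. Then for all x ∈ ℝⁿ, E_{d∼D}[V(f̂(x) + d)] − V(x) ≤ −α V(x) + (λ_max/2) · tr(cov(d)); i.e., V satisfies the expected exponential-drift condition with additive constant (λ_max/2)·tr(cov(d)), which is finite whenever d ∈ L². -/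
open MeasureTheory

section Aux

variable {E : Type*} [NormedAddCommGroup E] [NormedSpace ℝ E]

lemma hasDerivAt_line (V : E → ℝ) (hdV : Differentiable ℝ V) (y v : E) (t : ℝ) :
    HasDerivAt (fun t : ℝ => V (y + t • v)) (fderiv ℝ V (y + t • v) v) t := by
  have h1 : HasDerivAt (fun t : ℝ => y + t • v) v t := by
    simpa using ((hasDerivAt_id t).smul_const v).const_add y
  exact (hdV (y + t • v)).hasFDerivAt.comp_hasDerivAt t h1

lemma taylor_upper (V : E → ℝ) (hV : ContDiff ℝ 2 V)
    (lammax : ℝ) (hHess : ∀ x, ‖iteratedFDeriv ℝ 2 V x‖ ≤ lammax) (y v : E) :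
    V (y + v) ≤ V y + fderiv ℝ V y v + lammax / 2 * ‖v‖ ^ 2 := by
  have hdV : Differentiable ℝ V := hV.differentiable (by norm_num)
  have hd2 : Differentiable ℝ (fderiv ℝ V) :=
    (hV.fderiv_right (m := 1) (by norm_num)).differentiable (by norm_num)
  have hb : ∀ a, ‖fderiv ℝ (fderiv ℝ V) a‖ ≤ lammax := by
    intro a
    have h1 : ‖fderiv ℝ (fderiv ℝ V) a‖ ≤ ‖iteratedFDeriv ℝ 1 (fderiv ℝ V) a‖ := by
      apply ContinuousLinearMap.opNorm_le_bound _ (norm_nonneg _)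
      intro w
      have h2 := (iteratedFDeriv ℝ 1 (fderiv ℝ V) a).le_opNorm (fun _ => w)
      simpa [iteratedFDeriv_one_apply] using h2
    rw [norm_iteratedFDeriv_fderiv] at h1
    exact h1.trans (hHess a)
  have hlip : ∀ a b : E, ‖fderiv ℝ V a - fderiv ℝ V b‖ ≤ lammax * ‖a - b‖ := fun a b =>
    convex_univ.norm_image_sub_le_of_norm_fderiv_le (fun x _ => hd2 x) (fun x _ => hb x)
      trivial trivial
  set c : ℝ := fderiv ℝ V y v with hc
  set K : ℝ := lammax * ‖v‖ ^ 2 with hK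
  set g : ℝ → ℝ := fun t => V (y + t • v) - t * c - K / 2 * t ^ 2 with hg
  have hgd : ∀ t : ℝ, HasDerivAt g (fderiv ℝ V (y + t • v) v - c - K * t) t := by
    intro t
    have h1 := hasDerivAt_line V hdV y v t
    have h2 : HasDerivAt (fun t : ℝ => t * c) c t := hasDerivAt_mul_const c
    have h3 : HasDerivAt (fun t : ℝ => K / 2 * t ^ 2) (K * t) t := by
      have := (hasDerivAt_pow 2 t).const_mul (K / 2)
      exact this.congr_deriv (by norm_num; ring)
    exact (h1.sub h2).sub h3
  have hanti : AntitoneOn g (Set.Icc 0 1) := by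
    apply antitoneOn_of_deriv_nonpos (convex_Icc 0 1)
    · exact fun t _ => ((hgd t).continuousAt).continuousWithinAt
    · exact fun t _ => ((hgd t).differentiableAt).differentiableWithinAt
    · intro t ht
      rw [interior_Icc] at ht
      rw [(hgd t).deriv]
      have h4 : fderiv ℝ V (y + t • v) v - fderiv ℝ V y v ≤ K * t := by
        have h5 : (fderiv ℝ V (y + t • v) - fderiv ℝ V y) v ≤
            ‖fderiv ℝ V (y + t • v) - fderiv ℝ V y‖ * ‖v‖ := by
          calc (fderiv ℝ V (y + t • v) - fderiv ℝ V y) v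
              ≤ ‖(fderiv ℝ V (y + t • v) - fderiv ℝ V y) v‖ := le_abs_self _
            _ ≤ _ := (fderiv ℝ V (y + t • v) - fderiv ℝ V y).le_opNorm v
        have h6 : ‖fderiv ℝ V (y + t • v) - fderiv ℝ V y‖ ≤ lammax * (t * ‖v‖) := by
          have := hlip (y + t • v) y
          simpa [norm_smul, abs_of_pos ht.1] using this
        have h7 : (fderiv ℝ V (y + t • v) - fderiv ℝ V y) v =
            fderiv ℝ V (y + t • v) v - fderiv ℝ V y v := rfl
        calc fderiv ℝ V (y + t • v) v - fderiv ℝ V y v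
            ≤ ‖fderiv ℝ V (y + t • v) - fderiv ℝ V y‖ * ‖v‖ := by rw [← h7]; exact h5
          _ ≤ lammax * (t * ‖v‖) * ‖v‖ :=
              mul_le_mul_of_nonneg_right h6 (norm_nonneg v)
          _ = K * t := by rw [hK]; ring
      linarith
  have := hanti (Set.left_mem_Icc.2 zero_le_one) (Set.right_mem_Icc.2 zero_le_one) zero_le_one
  simp only [hg] at this
  simp only [zero_smul, add_zero, one_smul] at this
  nlinarith [this]

lemma tangent_lower (V : E → ℝ) (hdV : Differentiable ℝ V)
    (hconv : ConvexOn ℝ Set.univ V) (y v : E) :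
    V y + fderiv ℝ V y v ≤ V (y + v) := by
  set φ : ℝ → ℝ := fun t => V (y + t • v) with hφ
  have hφconv : ConvexOn ℝ Set.univ φ := by
    have h := hconv.comp_affineMap
      (AffineMap.lineMap y (y + v) : ℝ →ᵃ[ℝ] E)
    have heq : (V ∘ (AffineMap.lineMap y (y + v) : ℝ →ᵃ[ℝ] E)) = φ := by
      ext t
      simp [hφ, AffineMap.lineMap_apply, add_comm, smul_sub]
    rw [heq] at h
    simpa using h
  have hder : HasDerivAt φ (fderiv ℝ V y v) 0 := by
    have := hasDerivAt_line V hdV y v 0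
    simpa using this
  have := hφconv.le_slope_of_hasDerivAt (Set.mem_univ 0) (Set.mem_univ 1) zero_lt_one hder
  simp only [slope_def_field, hφ] at this
  simp only [zero_smul, add_zero, one_smul] at this
  norm_num at this
  linarith

end Aux

/-- **Deterministic E-ISS Lyapunov function with bounded Hessian is an E-ISSp Lyapunov
function for additive zero-mean noise (core of Corollary 2).**  For the system
`x_{k+1} = f̂(x_k) + d_k` with `d_k` i.i.d. from a zero-mean distribution `μ` on `ℝⁿ` with
finite second moment, if `V : ℝⁿ → ℝ_{≥0}` is `C²`, convex, has `‖∇²V(x)‖₂ ≤ λmax`, and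
satisfies the deterministic decrease `V(f̂(x)) - V(x) ≤ -α V(x)`, then for all `x`,
`E_d[V(f̂(x) + d)] - V(x) ≤ -α V(x) + (λmax/2) · tr(cov(d))`. -/
theorem eiss_plus_bounded_hessian_implies_eissp_drift {n : ℕ}
    (fhat : EuclideanSpace ℝ (Fin n) → EuclideanSpace ℝ (Fin n))
    (hfhat : Continuous fhat)
    (μ : Measure (EuclideanSpace ℝ (Fin n))) [IsProbabilityMeasure μ]
    (hd1 : Integrable (fun v => v) μ) (hmean : (∫ v, v ∂μ) = 0)
    (hmom : Integrable (fun v => ‖v‖ ^ 2) μ)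
    (V : EuclideanSpace ℝ (Fin n) → ℝ)
    (hV : ContDiff ℝ 2 V) (hVnonneg : ∀ x, 0 ≤ V x)
    (hconv : ConvexOn ℝ Set.univ V)
    (lammax : ℝ) (hlam : 0 ≤ lammax)
    (hHess : ∀ x, ‖iteratedFDeriv ℝ 2 V x‖ ≤ lammax)
    (α : ℝ) (hα : α ∈ Set.Ioo (0 : ℝ) 1)
    (hdecrease : ∀ x, V (fhat x) - V x ≤ -(α * V x)) :
    ∀ x, (∫ v, V (fhat x + v) ∂μ) - V x ≤
      -(α * V x) + (lammax / 2) *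
        Matrix.trace (Matrix.of fun i j : Fin n => ∫ v, v i * v j ∂μ) := by
  intro x
  let E := EuclideanSpace ℝ (Fin n)
  have hdV : Differentiable ℝ V := hV.differentiable (by norm_num)
  set y : E := fhat x with hy
  -- norm squared as sum
  have hnormsq : ∀ v : E, ‖v‖ ^ 2 = ∑ i, v i * v i := by
    intro v
    have h1 : ‖v‖ = Real.sqrt (∑ i, v i ^ 2) := by
      simpa [Real.norm_eq_abs, sq_abs] using EuclideanSpace.norm_eq v
    rw [h1, Real.sq_sqrt (Finset.sum_nonneg fun i _ => sq_nonneg _)]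
    exact Finset.sum_congr rfl fun i _ => sq (v i) ▸ (sq (v i)).symm ▸ (pow_two (v i))
  -- trace equals ∫ ‖v‖²
  have happ : ∀ i : Fin n, Continuous fun v : E => v i := fun i =>
    (EuclideanSpace.proj (𝕜 := ℝ) i).continuous
  have hii : ∀ i : Fin n, Integrable (fun v : E => v i * v i) μ := by
    intro i
    refine hmom.mono' (((happ i).mul (happ i)).aestronglyMeasurable) ?_
    refine Filter.Eventually.of_forall fun v => ?_
    have h2 : |v i| ≤ ‖v‖ := by
      have := EuclideanSpace.norm_eq v
      nlinarith [Finset.single_le_sum (f := fun j => ‖v j‖ ^ 2)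
        (fun j _ => sq_nonneg (‖v j‖)) (Finset.mem_univ i),
        Real.sq_sqrt (Finset.sum_nonneg fun j (_ : j ∈ Finset.univ) => sq_nonneg ‖v j‖),
        abs_nonneg (v i), norm_nonneg v, Real.norm_eq_abs (v i)]
    have h3 : ‖v i * v i‖ = |v i| * |v i| := by rw [Real.norm_eq_abs, abs_mul]
    rw [h3]
    nlinarith [abs_nonneg (v i), norm_nonneg v]
  have htrace : Matrix.trace (Matrix.of fun i j : Fin n => ∫ v, v i * v j ∂μ)
      = ∫ v, ‖v‖ ^ 2 ∂μ := by
    rw [Matrix.trace]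
    have h1 : ∀ i : Fin n, Matrix.diag (Matrix.of fun i j : Fin n => ∫ v, v i * v j ∂μ) i
        = ∫ v, v i * v i ∂μ := fun i => rfl
    rw [Finset.sum_congr rfl fun i _ => h1 i, ← integral_finset_sum _ fun i _ => hii i]
    exact integral_congr_ae (Filter.Eventually.of_forall fun v => (hnormsq v).symm)
  -- integrability of the remainder
  set L : E →L[ℝ] ℝ := fderiv ℝ V y with hL
  have hupper : ∀ v : E, V (y + v) ≤ V y + L v + lammax / 2 * ‖v‖ ^ 2 :=
    fun v => taylor_upper V hV lammax hHess y v
  have hlower : ∀ v : E, V y + L v ≤ V (y + v) :=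
    fun v => tangent_lower V hdV hconv y v
  have hlin : Integrable (fun v : E => L v) μ := L.integrable_comp hd1
  have haff : Integrable (fun v : E => V y + L v) μ := (integrable_const _).add hlin
  have hrint : Integrable (fun v : E => V (y + v) - (V y + L v)) μ := by
    refine (hmom.const_mul (lammax / 2)).mono'
      (((hV.continuous.comp (continuous_const.add continuous_id)).sub
        (continuous_const.add L.continuous)).aestronglyMeasurable) ?_
    refine Filter.Eventually.of_forall fun v => ?_
    rw [Real.norm_eq_abs, abs_of_nonneg (by linarith [hlower v])]
    linarith [hupper v]
  have hint : Integrable (fun v : E => V (y + v)) μ := by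
    have heq : (fun v : E => V (y + v))
        = fun v : E => (V y + L v) + (V (y + v) - (V y + L v)) := by ext v; ring
    rw [heq]; exact haff.add hrint
  have hbd : (∫ v, V (y + v) ∂μ) ≤ V y + lammax / 2 * ∫ v, ‖v‖ ^ 2 ∂μ := by
    have h1 : (∫ v, V (y + v) ∂μ) ≤ ∫ v, V y + L v + lammax / 2 * ‖v‖ ^ 2 ∂μ :=
      integral_mono hint (haff.add (hmom.const_mul _)) hupper
    have h2 : (∫ v, V y + L v + lammax / 2 * ‖v‖ ^ 2 ∂μ)
        = V y + L (∫ v, v ∂μ) + lammax / 2 * ∫ v, ‖v‖ ^ 2 ∂μ := by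
      rw [integral_add haff (hmom.const_mul _), integral_add (integrable_const _) hlin,
        integral_const, L.integral_comp_comm hd1, integral_const_mul]
      simp
      exact Or.inl rfl
    rw [h2, hmean, map_zero, add_zero] at h1
    exact h1
  have hdec := hdecrease x
  rw [htrace]
  calc (∫ v, V (fhat x + v) ∂μ) - V x
      ≤ (V y + lammax / 2 * ∫ v, ‖v‖ ^ 2 ∂μ) - V x := by
        have : (∫ v, V (fhat x + v) ∂μ) = ∫ v, V (y + v) ∂μ := rfl
        rw [this]; linarith [hbd]
    _ ≤ -(α * V x) + lammax / 2 * ∫ v, ‖v‖ ^ 2 ∂μ := by linarith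
end

section
/- Consider the discrete-time stochastic system x_{k+1} = f(x_k, d_k) with disturbances d_k drawn i.i.d. from a distribution D on ℝ^m. Suppose V : ℝⁿ → ℝ_{≥0} and there exist γ > 0 and an increasing function h : ℝ_{>0} → ℝ_{>0} such that E_{d∼D}[V(f(x,d))] − V(x) ≤ −h(V(x)) for all x with V(x) > γ. Then for any initial state x₀ with V(x₀) > γ, the hitting time τ_γ = inf{k ∈ ℕ : V(x_k) ≤ γ} of the sublevel set {x : V(x) ≤ γ} satisfies E[τ_γ] ≤ γ/h(γ) + ∫_γ^{V(x₀)} (1/h(σ)) dσ. -/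
open MeasureTheory ProbabilityTheory Filter Set
open scoped ENNReal


section Gfun
variable (γ : ℝ) (h : ℝ → ℝ)

/-- The potential function used in the variable drift theorem. -/
noncomputable def driftG (s : ℝ) : ℝ :=
  if s ≤ γ then s / h γ else γ / h γ + ∫ σ in γ..s, 1 / h σ

variable (hγ : 0 < γ) (hpos : ∀ s, 0 < s → 0 < h s) (hmono : MonotoneOn h (Set.Ioi 0))

include hγ hpos hmono

lemma driftG_inv_anti : AntitoneOn (fun σ => 1 / h σ) (Set.Ici γ) := by
  intro a ha b hb hab
  have ha0 : (0:ℝ) < a := lt_of_lt_of_le hγ ha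
  have hb0 : (0:ℝ) < b := lt_of_lt_of_le hγ hb
  exact one_div_le_one_div_of_le (hpos a ha0) (hmono ha0 hb0 hab)

lemma driftG_intInt {a b : ℝ} (ha : γ ≤ a) (hb : γ ≤ b) :
    IntervalIntegrable (fun σ => 1 / h σ) MeasureTheory.volume a b :=
  ((driftG_inv_anti γ h hγ hpos hmono).mono
    (fun y hy => le_trans (le_min ha hb) hy.1)).intervalIntegrable

lemma driftG_integral_nonneg {s : ℝ} (hs : γ ≤ s) :
    0 ≤ ∫ σ in γ..s, 1 / h σ := by
  apply intervalIntegral.integral_nonneg hs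
  intro u hu
  have : (0:ℝ) < h u := hpos u (lt_of_lt_of_le hγ hu.1)
  positivity

lemma driftG_nonneg {s : ℝ} (hs : 0 ≤ s) : 0 ≤ driftG γ h s := by
  have h0 : (0:ℝ) < h γ := hpos γ hγ
  unfold driftG
  split_ifs with hsle
  · positivity
  · have := driftG_integral_nonneg γ h hγ hpos hmono (le_of_lt (lt_of_not_ge hsle))
    positivity

lemma driftG_le {s : ℝ} (hs : 0 ≤ s) : driftG γ h s ≤ s / h γ := by
  have h0 : (0:ℝ) < h γ := hpos γ hγ
  unfold driftG
  split_ifs with hsle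
  · exact le_rfl
  · push_neg at hsle
    have hint : (∫ σ in γ..s, 1 / h σ) ≤ ∫ σ in γ..s, 1 / h γ := by
      apply intervalIntegral.integral_mono_on hsle.le
        (driftG_intInt γ h hγ hpos hmono le_rfl hsle.le) (intervalIntegrable_const)
      intro u hu
      exact driftG_inv_anti γ h hγ hpos hmono (Set.mem_Ici.mpr le_rfl) hu.1 hu.1
    have heq : γ / h γ + (s - γ) * (1 / h γ) = s / h γ := by field_simp; ring
    have hconst : (∫ σ in γ..s, (1:ℝ) / h γ) = (s - γ) * (1 / h γ) := by
      rw [intervalIntegral.integral_const, smul_eq_mul]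
    calc γ / h γ + ∫ σ in γ..s, 1 / h σ ≤ γ / h γ + (s - γ) * (1/ h γ) :=
          add_le_add_right (hconst ▸ hint) _
      _ = s / h γ := heq

lemma driftG_mono : Monotone (driftG γ h) := by
  have h0 : (0:ℝ) < h γ := hpos γ hγ
  intro a b hab
  unfold driftG
  split_ifs with h1 h2 h2
  · gcongr
  · push_neg at h2
    have : a / h γ ≤ γ / h γ := by gcongr
    exact this.trans (le_add_of_nonneg_right (driftG_integral_nonneg γ h hγ hpos hmono h2.le))
  · exact absurd (hab.trans h2) h1
  · push_neg at h1 h2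
    gcongr ?_ + ?_
    · exact le_rfl
    · rw [← intervalIntegral.integral_add_adjacent_intervals
        (driftG_intInt γ h hγ hpos hmono le_rfl h1.le)
        (driftG_intInt γ h hγ hpos hmono h1.le (h1.le.trans hab))]
      refine le_add_of_nonneg_right (intervalIntegral.integral_nonneg hab ?_)
      intro u hu
      have : (0:ℝ) < h u := hpos u (hγ.trans (lt_of_lt_of_le h1 hu.1))
      positivity

lemma driftG_key {s t : ℝ} (hs : γ < s) (ht : 0 ≤ t) :
    driftG γ h t ≤ driftG γ h s + (t - s) / h s := by
  have hs0 : (0:ℝ) < s := hγ.trans hs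
  have hhs : (0:ℝ) < h s := hpos s hs0
  have hhγ : (0:ℝ) < h γ := hpos γ hγ
  have hinvle : 1 / h s ≤ 1 / h γ := driftG_inv_anti γ h hγ hpos hmono (Set.mem_Ici.mpr le_rfl) hs.le hs.le
  have hGs : driftG γ h s = γ / h γ + ∫ σ in γ..s, 1 / h σ := by
    rw [driftG, if_neg (not_le.mpr hs)]
  rcases le_or_gt t s with hts | hts
  · -- t ≤ s : show driftG s - driftG t ≥ (s - t)/h s
    rcases le_or_gt t γ with htγ | htγ
    · -- t ≤ γ < s
      have hGt : driftG γ h t = t / h γ := by rw [driftG, if_pos htγ]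
      have hbound : (s - γ) * (1 / h s) ≤ ∫ σ in γ..s, 1 / h σ := by
        have := intervalIntegral.integral_mono_on hs.le intervalIntegrable_const
          (driftG_intInt γ h hγ hpos hmono le_rfl hs.le)
          (fun u hu => driftG_inv_anti γ h hγ hpos hmono hu.1 hs.le hu.2)
        simpa [smul_eq_mul] using this
      have h1 : (γ - t) * (1 / h s) ≤ (γ - t) * (1 / h γ) := by
        apply mul_le_mul_of_nonneg_left hinvle (by linarith)
      rw [hGt, hGs]
      have : t / h γ + (s - t) / h s ≤ γ / h γ + ∫ σ in γ..s, 1 / h σ := by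
        have e1 : t / h γ = γ / h γ - (γ - t) * (1 / h γ) := by field_simp; try ring
        have e2 : (s - t) / h s = (s - γ) * (1 / h s) + (γ - t) * (1 / h s) := by
          field_simp; try ring
        rw [e1, e2]; linarith
      have hneg : (t - s) / h s = -((s - t) / h s) := by ring
      linarith [this]
    · -- γ < t ≤ s
      have hGt : driftG γ h t = γ / h γ + ∫ σ in γ..t, 1 / h σ := by
        rw [driftG, if_neg (not_le.mpr htγ)]
      have hsplit : (∫ σ in γ..s, 1 / h σ) =
          (∫ σ in γ..t, 1 / h σ) + ∫ σ in t..s, 1 / h σ :=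
        (intervalIntegral.integral_add_adjacent_intervals
          (driftG_intInt γ h hγ hpos hmono le_rfl htγ.le)
          (driftG_intInt γ h hγ hpos hmono htγ.le (htγ.le.trans hts))).symm
      have hbound : (s - t) * (1 / h s) ≤ ∫ σ in t..s, 1 / h σ := by
        have := intervalIntegral.integral_mono_on hts intervalIntegrable_const
          (driftG_intInt γ h hγ hpos hmono htγ.le (htγ.le.trans hts))
          (fun u hu => driftG_inv_anti γ h hγ hpos hmono (htγ.le.trans hu.1) hs.le hu.2)
        simpa [smul_eq_mul] using this
      rw [hGt, hGs, hsplit]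
      have hneg : (t - s) / h s = -((s - t) * (1 / h s)) := by ring
      linarith
  · -- s < t
    have hGt : driftG γ h t = γ / h γ + ∫ σ in γ..t, 1 / h σ := by
      rw [driftG, if_neg (not_le.mpr (hs.trans hts))]
    have hsplit : (∫ σ in γ..t, 1 / h σ) =
        (∫ σ in γ..s, 1 / h σ) + ∫ σ in s..t, 1 / h σ :=
      (intervalIntegral.integral_add_adjacent_intervals
        (driftG_intInt γ h hγ hpos hmono le_rfl hs.le)
        (driftG_intInt γ h hγ hpos hmono hs.le (hs.le.trans hts.le))).symm
    have hbound : (∫ σ in s..t, 1 / h σ) ≤ (t - s) * (1 / h s) := by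
      have := intervalIntegral.integral_mono_on hts.le
        (driftG_intInt γ h hγ hpos hmono hs.le (hs.le.trans hts.le))
        intervalIntegrable_const
        (fun u hu => driftG_inv_anti γ h hγ hpos hmono hs.le (hs.le.trans hu.1) hu.1)
      simpa [smul_eq_mul] using this
    rw [hGt, hGs, hsplit]
    have : (t - s) / h s = (t - s) * (1 / h s) := by field_simp
    linarith


section Int
variable {α : Type*} [MeasurableSpace α] (μ : Measure α) [IsProbabilityMeasure μ]
  (W : α → ℝ) (hWmeas : AEMeasurable W μ) (hWnn : ∀ a, 0 ≤ W a) (hWint : Integrable W μ)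

include hWmeas hWnn hWint

lemma driftG_comp_integrable : Integrable (fun a => driftG γ h (W a)) μ := by
  have hmeas : AEMeasurable (fun a => driftG γ h (W a)) μ :=
    ((driftG_mono γ h hγ hpos hmono).measurable).comp_aemeasurable hWmeas
  refine (hWint.div_const (h γ)).mono hmeas.aestronglyMeasurable ?_
  filter_upwards with a
  have h1 : 0 ≤ driftG γ h (W a) := driftG_nonneg γ h hγ hpos hmono (hWnn a)
  have h2 : driftG γ h (W a) ≤ W a / h γ := driftG_le γ h hγ hpos hmono (hWnn a)
  rw [Real.norm_eq_abs, Real.norm_eq_abs, abs_of_nonneg h1]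
  exact h2.trans (le_abs_self _)

lemma driftG_int_le {c : ℝ} (hc : γ < c) (hd : (∫ a, W a ∂μ) ≤ c - h c) :
    (∫ a, driftG γ h (W a) ∂μ) ≤ driftG γ h c - 1 ∧ 1 ≤ driftG γ h c := by
  have hhc : (0:ℝ) < h c := hpos c (hγ.trans hc)
  have hint1 : Integrable (fun a => driftG γ h (W a)) μ :=
    driftG_comp_integrable γ h hγ hpos hmono μ W hWmeas hWnn hWint
  have hint3 : Integrable (fun a => (W a - c) / h c) μ :=
    (hWint.sub (integrable_const c)).div_const _
  have hint2 : Integrable (fun a => driftG γ h c + (W a - c) / h c) μ :=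
    (integrable_const _).add hint3
  have hle : (∫ a, driftG γ h (W a) ∂μ) ≤ ∫ a, driftG γ h c + (W a - c) / h c ∂μ := by
    refine integral_mono hint1 hint2 fun a => ?_
    exact driftG_key γ h hγ hpos hmono hc (hWnn a)
  have heval : (∫ a, driftG γ h c + (W a - c) / h c ∂μ)
      = driftG γ h c + ((∫ a, W a ∂μ) - c) / h c := by
    rw [integral_add (integrable_const _) hint3,
      MeasureTheory.integral_const, MeasureTheory.integral_div, integral_sub hWint (integrable_const c), MeasureTheory.integral_const]
    simp
  have hfrac : ((∫ a, W a ∂μ) - c) / h c ≤ -1 := by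
    rw [div_le_iff₀ hhc]
    linarith
  have hmain : (∫ a, driftG γ h (W a) ∂μ) ≤ driftG γ h c - 1 := by
    rw [heval] at hle
    linarith
  refine ⟨hmain, ?_⟩
  have h0 : 0 ≤ ∫ a, driftG γ h (W a) ∂μ :=
    integral_nonneg fun a => driftG_nonneg γ h hγ hpos hmono (hWnn a)
  linarith

end Int

end Gfun

section Traj
variable {En Em : Type*}

/-- Deterministic trajectory map: the state after `j` steps as a function of the first `j`
disturbances. -/
def driftTraj (f : En → Em → En) (x₀ : En) : ∀ j, (Fin j → Em) → En
  | 0 => fun _ => x₀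
  | (j+1) => fun w => f (driftTraj f x₀ j (fun i => w i.castSucc)) (w (Fin.last j))

lemma driftTraj_measurable [MeasurableSpace En] [MeasurableSpace Em]
    {f : En → Em → En} (hf : Measurable (Function.uncurry f)) (x₀ : En) :
    ∀ j, Measurable (driftTraj f x₀ j) := by
  intro j
  induction j with
  | zero => exact measurable_const
  | succ j ih =>
    have h1 : Measurable fun w : Fin (j+1) → Em => driftTraj f x₀ j fun i => w i.castSucc :=
      ih.comp (measurable_pi_lambda _ fun i => measurable_pi_apply _)
    exact hf.comp (h1.prodMk (measurable_pi_apply _))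

lemma driftTraj_spec {Ω : Type*} {f : En → Em → En} {x₀ : En}
    {d : ℕ → Ω → Em} {x : ℕ → Ω → En}
    (hx0 : ∀ ω, x 0 ω = x₀) (hxstep : ∀ k ω, x (k + 1) ω = f (x k ω) (d k ω)) :
    ∀ j ω, x j ω = driftTraj f x₀ j (fun i : Fin j => d i.val ω) := by
  intro j
  induction j with
  | zero => intro ω; simpa [driftTraj] using hx0 ω
  | succ j ih =>
    intro ω
    rw [hxstep j ω, ih ω]
    simp only [driftTraj, Fin.coe_castSucc, Fin.val_last]

end Traj

/-- **Variable drift theorem (Lengler).** For the system `x_{k+1} = f(x_k,d_k)` with `d_k`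
i.i.d. from `μ`, suppose `V : ℝⁿ → ℝ_{≥0}`, `γ > 0`, and there is an increasing
`h : ℝ_{>0} → ℝ_{>0}` with `E_d[V(f(x,d))] - V(x) ≤ -h(V(x))` whenever `V(x) > γ`.  Then for
any initial state with `V(x₀) > γ`, the hitting time `τ_γ = inf{k : V(x_k) ≤ γ}` satisfies
`E[τ_γ] ≤ γ/h(γ) + ∫_γ^{V(x₀)} dσ/h(σ)`. -/
theorem variable_drift_hitting_time {n m : ℕ}
    (f : EuclideanSpace ℝ (Fin n) → EuclideanSpace ℝ (Fin m) → EuclideanSpace ℝ (Fin n))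
    (hf : Continuous (Function.uncurry f))
    (μ : Measure (EuclideanSpace ℝ (Fin m))) [IsProbabilityMeasure μ]
    (V : EuclideanSpace ℝ (Fin n) → ℝ) (hVmeas : Measurable V) (hVnonneg : ∀ x, 0 ≤ V x)
    (γ : ℝ) (hγ : 0 < γ)
    (h : ℝ → ℝ) (hpos : ∀ s, 0 < s → 0 < h s) (hmono : MonotoneOn h (Set.Ioi 0))
    (hVint : ∀ x, Integrable (fun v => V (f x v)) μ)
    (hdrift : ∀ x, γ < V x → (∫ v, V (f x v) ∂μ) - V x ≤ -h (V x))
    {Ω : Type*} {mΩ : MeasurableSpace Ω} (P : Measure Ω) [IsProbabilityMeasure P]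
    (d : ℕ → Ω → EuclideanSpace ℝ (Fin m)) (hdmeas : ∀ k, Measurable (d k))
    (hindep : iIndepFun d P)
    (hdist : ∀ k, Measure.map (d k) P = μ)
    (x₀ : EuclideanSpace ℝ (Fin n)) (hx₀ : γ < V x₀)
    (x : ℕ → Ω → EuclideanSpace ℝ (Fin n))
    (hx0 : ∀ ω, x 0 ω = x₀)
    (hxstep : ∀ k ω, x (k + 1) ω = f (x k ω) (d k ω)) :
    (∫⁻ ω, ⨅ (k : ℕ) (_ : V (x k ω) ≤ γ), (k : ENNReal) ∂P) ≤
      ENNReal.ofReal (γ / h γ + ∫ σ in γ..(V x₀), 1 / h σ) := by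

  classical
  have hfm : Measurable (Function.uncurry f) := hf.measurable
  have hgmeas : Measurable (driftG γ h) := (driftG_mono γ h hγ hpos hmono).measurable
  set X := driftTraj f x₀ with hXdef
  have hXmeas : ∀ j, Measurable (X j) := driftTraj_measurable hfm x₀
  have hxX : ∀ j ω, x j ω = X j (fun i : Fin j => d i.val ω) := driftTraj_spec hx0 hxstep
  have hWmeas : ∀ j, Measurable (fun ω => (fun i : Fin j => d i.val ω)) :=
    fun j => measurable_pi_lambda _ fun i => hdmeas i.val
  have hxmeas : ∀ j, Measurable (x j) := fun j => by
    have hxe : x j = fun ω => X j (fun i : Fin j => d i.val ω) := funext (hxX j)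
    rw [hxe]; exact (hXmeas j).comp (hWmeas j)
  set T : ∀ j, Set (Fin j → EuclideanSpace ℝ (Fin m)) := fun j =>
    {w | ∀ i : ℕ, ∀ hi : i ≤ j, γ < V (X i (fun i' : Fin i => w (Fin.castLE hi i')))} with hT
  have hTmeas : ∀ j, MeasurableSet (T j) := by
    intro j
    have he : T j = ⋂ (i : ℕ) (hi : i ≤ j),
        (fun w : Fin j → EuclideanSpace ℝ (Fin m) =>
          V (X i (fun i' : Fin i => w (Fin.castLE hi i')))) ⁻¹' (Set.Ioi γ) := by
      ext w; simp [hT, Set.mem_iInter]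
    rw [he]
    refine MeasurableSet.iInter fun i => MeasurableSet.iInter fun hi => ?_
    have hr : Measurable (fun w : Fin j → EuclideanSpace ℝ (Fin m) =>
        (fun i' : Fin i => w (Fin.castLE hi i'))) :=
      measurable_pi_lambda _ fun i' => measurable_pi_apply _
    exact (hVmeas.comp ((hXmeas i).comp hr)) measurableSet_Ioi
  set A : ℕ → Set Ω := fun j => {ω | ∀ i, i ≤ j → γ < V (x i ω)} with hA
  have hAW : ∀ j, A j = (fun ω => (fun i : Fin j => d i.val ω)) ⁻¹' (T j) := by
    intro j; ext ω
    simp only [hA, hT, Set.mem_setOf_eq, Set.mem_preimage]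
    constructor
    · intro hω i hi
      have he : (fun i' : Fin i => (fun i'' : Fin j => d i''.val ω) (Fin.castLE hi i')) =
          fun i' : Fin i => d i'.val ω := rfl
      rw [he, ← hxX i ω]
      exact hω i hi
    · intro hω i hi
      have h2 := hω i hi
      rw [hxX i ω]
      exact h2
  have hAmeas : ∀ j, MeasurableSet (A j) := fun j => (hAW j) ▸ (hWmeas j) (hTmeas j)
  have hAmono : ∀ j, A (j+1) ⊆ A j := fun j ω hω i hi => hω i (hi.trans (Nat.le_succ j))
  set G : ℕ → Ω → ℝ≥0∞ := fun j ω => ENNReal.ofReal (driftG γ h (V (x j ω))) with hG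
  have hGmeas : ∀ j, Measurable (G j) :=
    fun j => ENNReal.measurable_ofReal.comp ((hgmeas.comp hVmeas).comp (hxmeas j))
  -- independence of the past from the next disturbance
  have hWd : ∀ j, IndepFun (fun ω => (fun i : Fin j => d i.val ω)) (d j) P := by
    intro j
    have hst : Disjoint (Finset.range j) ({j} : Finset ℕ) := by simp
    have hbase := hindep.indepFun_finset (Finset.range j) {j} hst hdmeas
    have hcomp := hbase.comp (_mγ := inferInstance) (_mγ' := inferInstance)
      (φ := fun u : { a : ℕ // a ∈ Finset.range j } → EuclideanSpace ℝ (Fin m) =>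
        fun i : Fin j => u ⟨i.val, Finset.mem_range.mpr i.isLt⟩)
      (ψ := fun u : { a : ℕ // a ∈ ({j} : Finset ℕ) } → EuclideanSpace ℝ (Fin m) =>
        u ⟨j, Finset.mem_singleton_self j⟩)
      (measurable_pi_lambda _ fun i => measurable_pi_apply _)
      (measurable_pi_apply _)
    exact hcomp
  have hlaw : ∀ j, P.map (fun ω => ((fun i : Fin j => d i.val ω), d j ω))
      = (P.map (fun ω => (fun i : Fin j => d i.val ω))).prod μ := by
    intro j
    rw [← hdist j]
    exact (indepFun_iff_map_prod_eq_prod_map_map (hWmeas j).aemeasurable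
      (hdmeas j).aemeasurable).mp (hWd j)
  have htransfer : ∀ j (F : ((Fin j → EuclideanSpace ℝ (Fin m)) × EuclideanSpace ℝ (Fin m)) → ℝ≥0∞),
      Measurable F →
      ∫⁻ ω, F ((fun i : Fin j => d i.val ω), d j ω) ∂P
        = ∫⁻ w, ∫⁻ v, F (w, v) ∂μ ∂(P.map (fun ω => (fun i : Fin j => d i.val ω))) := by
    intro j F hF
    have hpair : Measurable (fun ω => ((fun i : Fin j => d i.val ω), d j ω)) :=
      (hWmeas j).prodMk (hdmeas j)
    rw [← lintegral_map hF hpair, hlaw j, lintegral_prod _ hF.aemeasurable]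
  -- the key one-step inequality
  have hkey : ∀ j, (∫⁻ ω in A j, G (j+1) ω ∂P) + P (A j) ≤ ∫⁻ ω in A j, G j ω ∂P := by
    intro j
    haveI : IsProbabilityMeasure (P.map (fun ω => (fun i : Fin j => d i.val ω))) :=
      Measure.isProbabilityMeasure_map (hWmeas j).aemeasurable
    set F : ((Fin j → EuclideanSpace ℝ (Fin m)) × EuclideanSpace ℝ (Fin m)) → ℝ≥0∞ :=
      fun p => Set.indicator ((T j) ×ˢ (Set.univ : Set (EuclideanSpace ℝ (Fin m))))
        (fun p => ENNReal.ofReal (driftG γ h (V (f (X j p.1) p.2))) + 1) p with hFdef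
    have hFmeas : Measurable F := by
      refine Measurable.indicator ?_ ((hTmeas j).prod MeasurableSet.univ)
      refine (ENNReal.measurable_ofReal.comp ?_).add measurable_const
      exact (hgmeas.comp hVmeas).comp
        (hfm.comp (((hXmeas j).comp measurable_fst).prodMk measurable_snd))
    have hpt : ∀ ω, F ((fun i : Fin j => d i.val ω), d j ω)
        = (A j).indicator (fun ω => G (j+1) ω + 1) ω := by
      intro ω
      by_cases hω : ω ∈ A j
      · have hωT : (fun i : Fin j => d i.val ω) ∈ T j := by
          rw [hAW j] at hω; exact hω
        rw [Set.indicator_of_mem hω]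
        have hFv : F ((fun i : Fin j => d i.val ω), d j ω)
            = ENNReal.ofReal
                (driftG γ h (V (f (X j (fun i : Fin j => d i.val ω)) (d j ω)))) + 1 :=
          Set.indicator_of_mem (Set.mem_prod.mpr ⟨hωT, Set.mem_univ _⟩) _
        rw [hFv]
        simp only [hG]
        rw [hxstep j ω, hxX j ω]
      · have hωT : (fun i : Fin j => d i.val ω) ∉ T j := by
          rw [hAW j] at hω; exact hω
        rw [Set.indicator_of_notMem hω]
        exact Set.indicator_of_notMem (fun hc => hωT (Set.mem_prod.mp hc).1) _
    calc (∫⁻ ω in A j, G (j+1) ω ∂P) + P (A j)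
        = ∫⁻ ω, (A j).indicator (fun ω => G (j+1) ω + 1) ω ∂P := by
          rw [lintegral_indicator (hAmeas j), lintegral_add_right _ measurable_const,
            setLIntegral_one]
      _ = ∫⁻ ω, F ((fun i : Fin j => d i.val ω), d j ω) ∂P := by
          exact lintegral_congr fun ω => (hpt ω).symm
      _ = ∫⁻ w, ∫⁻ v, F (w, v) ∂μ ∂(P.map (fun ω => (fun i : Fin j => d i.val ω))) :=
          htransfer j F hFmeas
      _ ≤ ∫⁻ w, (T j).indicator
            (fun w => ENNReal.ofReal (driftG γ h (V (X j w)))) w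
            ∂(P.map (fun ω => (fun i : Fin j => d i.val ω))) := by
          refine lintegral_mono fun w => ?_
          by_cases hw : w ∈ T j
          · have hwx : γ < V (X j w) := by
              have h2 := hw j le_rfl
              have he : (fun i' : Fin j => w (Fin.castLE le_rfl i')) = w := by
                funext i'; congr 1
              rwa [he] at h2
            have hfc : Continuous (fun v => f (X j w) v) :=
              hf.comp (Continuous.prodMk_right (X j w))
            have hWm : AEMeasurable (fun v => V (f (X j w) v)) μ :=
              (hVmeas.comp hfc.measurable).aemeasurable
            have hd2 : (∫ v, V (f (X j w) v) ∂μ) ≤ V (X j w) - h (V (X j w)) := by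
              have h3 := hdrift (X j w) hwx; linarith
            obtain ⟨hint_le, hone⟩ := driftG_int_le γ h hγ hpos hmono μ
              (fun v => V (f (X j w) v)) hWm (fun v => hVnonneg _) (hVint (X j w)) hwx hd2
            have hintg : Integrable (fun v => driftG γ h (V (f (X j w) v))) μ :=
              driftG_comp_integrable γ h hγ hpos hmono μ _ hWm (fun v => hVnonneg _)
                (hVint (X j w))
            have hFe : ∀ v, F (w, v) = ENNReal.ofReal (driftG γ h (V (f (X j w) v))) + 1 :=
              fun v => Set.indicator_of_mem (Set.mem_prod.mpr ⟨hw, Set.mem_univ v⟩) _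
            rw [Set.indicator_of_mem hw]
            calc ∫⁻ v, F (w, v) ∂μ
                = ∫⁻ v, (ENNReal.ofReal (driftG γ h (V (f (X j w) v))) + 1) ∂μ :=
                  lintegral_congr hFe
              _ = (∫⁻ v, ENNReal.ofReal (driftG γ h (V (f (X j w) v))) ∂μ) + 1 := by
                  rw [lintegral_add_right _ measurable_const, lintegral_one, measure_univ]
              _ = ENNReal.ofReal (∫ v, driftG γ h (V (f (X j w) v)) ∂μ) + 1 := by
                  rw [ofReal_integral_eq_lintegral_ofReal hintg
                    (Filter.Eventually.of_forall fun v =>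
                      driftG_nonneg γ h hγ hpos hmono (hVnonneg _))]
              _ ≤ ENNReal.ofReal (driftG γ h (V (X j w)) - 1) + 1 := by
                  gcongr
              _ = ENNReal.ofReal (driftG γ h (V (X j w))) := by
                  rw [← ENNReal.ofReal_one,
                    ← ENNReal.ofReal_add (by linarith) (by norm_num)]
                  norm_num
          · rw [Set.indicator_of_notMem hw]
            have hFz : ∀ v, F (w, v) = 0 := fun v =>
              Set.indicator_of_notMem (fun hc => hw (Set.mem_prod.mp hc).1) _
            simp [lintegral_congr hFz]
      _ = ∫⁻ ω in A j, G j ω ∂P := by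
          have hm2 : Measurable
              (fun w : Fin j → EuclideanSpace ℝ (Fin m) =>
                (T j).indicator (fun w => ENNReal.ofReal (driftG γ h (V (X j w)))) w) :=
            Measurable.indicator
              (ENNReal.measurable_ofReal.comp ((hgmeas.comp hVmeas).comp (hXmeas j)))
              (hTmeas j)
          rw [lintegral_map hm2 (hWmeas j)]
          have hpt2 : ∀ ω, (T j).indicator
              (fun w => ENNReal.ofReal (driftG γ h (V (X j w))))
              (fun i : Fin j => d i.val ω)
              = (A j).indicator (fun ω => G j ω) ω := by
            intro ω
            by_cases hω : ω ∈ A j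
            · have hωT : (fun i : Fin j => d i.val ω) ∈ T j := by
                rw [hAW j] at hω; exact hω
              rw [Set.indicator_of_mem hωT, Set.indicator_of_mem hω]
              simp only [hG]
              rw [hxX j ω]
            · have hωT : (fun i : Fin j => d i.val ω) ∉ T j := by
                rw [hAW j] at hω; exact hω
              rw [Set.indicator_of_notMem hωT, Set.indicator_of_notMem hω]
          rw [lintegral_congr hpt2, lintegral_indicator (hAmeas j)]
  -- iterate
  set u : ℕ → ℝ≥0∞ := fun j => ∫⁻ ω in A j, G j ω ∂P with hu
  have hstepu : ∀ j, P (A j) + u (j+1) ≤ u j := by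
    intro j
    have h1 : u (j+1) ≤ ∫⁻ ω in A j, G (j+1) ω ∂P := lintegral_mono_set (hAmono j)
    calc P (A j) + u (j+1) ≤ P (A j) + ∫⁻ ω in A j, G (j+1) ω ∂P := by gcongr
      _ = (∫⁻ ω in A j, G (j+1) ω ∂P) + P (A j) := add_comm _ _
      _ ≤ u j := hkey j
  have hinv : ∀ k, (∑ j ∈ Finset.range k, P (A j)) + u k
      ≤ ENNReal.ofReal (driftG γ h (V x₀)) := by
    intro k
    induction k with
    | zero =>
      simp only [Finset.range_zero, Finset.sum_empty, zero_add]
      calc u 0 ≤ ∫⁻ ω, G 0 ω ∂P := setLIntegral_le_lintegral _ _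
        _ = ENNReal.ofReal (driftG γ h (V x₀)) := by
            have he : ∀ ω, G 0 ω = ENNReal.ofReal (driftG γ h (V x₀)) := fun ω => by
              simp only [hG, hx0 ω]
            rw [lintegral_congr he, lintegral_const, measure_univ, mul_one]
    | succ k ih =>
      rw [Finset.sum_range_succ, add_assoc]
      calc (∑ j ∈ Finset.range k, P (A j)) + (P (A k) + u (k+1))
          ≤ (∑ j ∈ Finset.range k, P (A j)) + u k := add_le_add_right (hstepu k) _
        _ ≤ _ := ih
  -- hitting time identity
  have hτ : ∀ ω, (⨅ (k : ℕ) (_ : V (x k ω) ≤ γ), (k : ℝ≥0∞))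
      = ∑' j, (A j).indicator (fun _ => (1:ℝ≥0∞)) ω := by
    intro ω
    by_cases hex : ∃ k, V (x k ω) ≤ γ
    · have hτval : (⨅ (k : ℕ) (_ : V (x k ω) ≤ γ), (k : ℝ≥0∞)) = (Nat.find hex : ℝ≥0∞) := by
        apply le_antisymm
        · exact iInf₂_le (Nat.find hex) (Nat.find_spec hex)
        · exact le_iInf₂ fun k hk => by exact_mod_cast Nat.find_min' hex hk
      have hmem : ∀ j, ω ∈ A j ↔ j < Nat.find hex := by
        intro j
        rw [hA, Nat.lt_find_iff]
        simp only [Set.mem_setOf_eq]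
        exact ⟨fun hj i hi => not_le.mpr (hj i hi), fun hj i hi => not_le.mp (hj i hi)⟩
      have hterm : ∀ j, (A j).indicator (fun _ => (1:ℝ≥0∞)) ω
          = if j < Nat.find hex then 1 else 0 := by
        intro j; by_cases hj : j < Nat.find hex
        · rw [if_pos hj, Set.indicator_of_mem ((hmem j).mpr hj)]
        · rw [if_neg hj, Set.indicator_of_notMem (fun hc => hj ((hmem j).mp hc))]
      rw [hτval, tsum_congr hterm,
        tsum_eq_sum (s := Finset.range (Nat.find hex))
          (fun j hj => if_neg (by simpa using hj))]
      rw [Finset.sum_congr rfl (fun j hj => if_pos (Finset.mem_range.mp hj))]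
      simp
    · push_neg at hex
      have hτval : (⨅ (k : ℕ) (_ : V (x k ω) ≤ γ), (k : ℝ≥0∞)) = ⊤ := by
        simp only [iInf_eq_top]
        intro k hk
        exact absurd hk (not_le.mpr (hex k))
      have hAall : ∀ j, ω ∈ A j := fun j i _ => hex i
      have hterm : ∀ j : ℕ, (A j).indicator (fun _ => (1:ℝ≥0∞)) ω = 1 := fun j =>
        Set.indicator_of_mem (hAall j) _
      rw [hτval, tsum_congr hterm, ENNReal.tsum_const_eq_top_of_ne_zero one_ne_zero]
  calc (∫⁻ ω, ⨅ (k : ℕ) (_ : V (x k ω) ≤ γ), (k : ENNReal) ∂P)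
      = ∫⁻ ω, ∑' j, (A j).indicator (fun _ => (1:ℝ≥0∞)) ω ∂P := lintegral_congr hτ
    _ = ∑' j, ∫⁻ ω, (A j).indicator (fun _ => (1:ℝ≥0∞)) ω ∂P :=
        lintegral_tsum fun j => (measurable_const.indicator (hAmeas j)).aemeasurable
    _ = ∑' j, P (A j) := tsum_congr fun j => by
        rw [lintegral_indicator (hAmeas j), setLIntegral_one]
    _ ≤ ENNReal.ofReal (driftG γ h (V x₀)) := by
        rw [ENNReal.tsum_eq_iSup_nat]
        refine iSup_le fun k => ?_
        exact le_trans le_self_add (hinv k)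
    _ = ENNReal.ofReal (γ / h γ + ∫ σ in γ..(V x₀), 1 / h σ) := by
        rw [driftG, if_neg (not_le.mpr hx₀)]
end

section
/- Consider the discrete-time stochastic system x_{k+1} = f(x_k, d_k) with disturbances d_k drawn i.i.d. from a distribution D on ℝ^m, and suppose V : ℝⁿ → ℝ_{≥0} satisfies E_{d∼D}[V(f(x,d))] − V(x) ≤ −α V(x) + φ for all x ∈ ℝⁿ, where α ∈ (0,1) and φ ≥ 0. Then for every γ > φ/α and every initial state x₀ with V(x₀) > γ, the hitting time τ_γ = inf{k ∈ ℕ : V(x_k) ≤ γ} satisfies E[τ_γ] ≤ γ/(αγ − φ) + (1/α) · log((α V(x₀) − φ)/(αγ − φ)) < ∞, and consequently P{τ_γ < ∞} = 1. -/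
open MeasureTheory ProbabilityTheory Filter Set
open scoped ENNReal NNReal

private lemma min_add_le {x y : ℝ} (hy : 0 ≤ y) : min 1 (x + y) ≤ min 1 x + y := by
  rcases le_total 1 x with h | h
  · rw [min_eq_left h]
    exact le_trans (min_le_left _ _) (by linarith)
  · rw [min_eq_right h]
    exact le_trans (min_le_right _ _) (by linarith)

private lemma sum_min_le_F {c : ℝ} (hc0 : 0 ≤ c) (hc1 : c < 1) :
    ∀ (N : ℕ) (R : ℝ), 0 ≤ R →
      ∑ k ∈ Finset.range N, min 1 (c ^ k * R) ≤
        if R ≤ 1 then R / (1 - c) else (Real.log R + 1) / (1 - c) := by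
  have ha : (0:ℝ) < 1 - c := by linarith
  intro N
  induction N with
  | zero =>
      intro R hR
      simp only [Finset.range_zero, Finset.sum_empty]
      split_ifs with h
      · positivity
      · have hR1 : (1:ℝ) < R := lt_of_not_ge h
        have : (0:ℝ) ≤ Real.log R := Real.log_nonneg hR1.le
        positivity
  | succ N ih =>
      intro R hR
      rw [Finset.sum_range_succ']
      have hstep : ∀ k, c ^ (k + 1) * R = c ^ k * (c * R) := by
        intro k; ring
      have hsum : ∑ k ∈ Finset.range N, min 1 (c ^ (k+1) * R)
          ≤ if c * R ≤ 1 then (c*R) / (1 - c) else (Real.log (c*R) + 1) / (1 - c) := by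
        calc ∑ k ∈ Finset.range N, min 1 (c ^ (k+1) * R)
            = ∑ k ∈ Finset.range N, min 1 (c ^ k * (c * R)) := by
              refine Finset.sum_congr rfl fun k _ => by rw [hstep]
          _ ≤ _ := ih (c*R) (by positivity)
      simp only [pow_zero, one_mul]
      by_cases hR1 : R ≤ 1
      · -- then c*R ≤ 1
        have hcR : c * R ≤ 1 := le_trans (by nlinarith) hR1
        rw [if_pos hR1]
        rw [if_pos hcR] at hsum
        rw [min_eq_right hR1]
        have : R + c * R / (1 - c) = R / (1 - c) := by field_simp; ring
        linarith
      · have hR1' : (1:ℝ) < R := lt_of_not_ge hR1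
        have hR0 : (0:ℝ) < R := by linarith
        rw [if_neg hR1]
        by_cases hcR : c * R ≤ 1
        · rw [if_pos hcR] at hsum
          -- need: min 1 R + c*R/(1-c) ≤ (log R + 1)/(1-c)
          have hmin : min 1 R = 1 := min_eq_left hR1'.le
          have hlog : 1 - 1/R ≤ Real.log R := by
            have h := Real.log_le_sub_one_of_pos (inv_pos.2 hR0)
            rw [Real.log_inv] at h
            have : 1/R = R⁻¹ := one_div R
            linarith [h]
          have hkey : c * R + 1/R ≤ 1 + c := by
            have hprod : 0 ≤ (R - 1) * (1 - c * R) :=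
              mul_nonneg (by linarith) (by linarith)
            have h1R : 1/R ≤ 1 + c - c*R := by
              rw [div_le_iff₀ hR0]; nlinarith
            linarith
          have : (1 - c) + c * R ≤ Real.log R + 1 := by linarith
          rw [hmin]
          rw [le_div_iff₀ ha]
          have h2 : (1 + c * R / (1 - c)) * (1 - c) = (1 - c) + c * R := by
            field_simp
          have h3 : (∑ k ∈ Finset.range N, min 1 (c ^ (k+1) * R) + 1) * (1 - c)
              ≤ (1 + c * R / (1 - c)) * (1 - c) :=
            mul_le_mul_of_nonneg_right (by linarith) ha.le
          linarith
        · have hcR' : (1:ℝ) < c * R := lt_of_not_ge hcR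
          have hc0' : (0:ℝ) < c := by
            rcases lt_or_eq_of_le hc0 with h | h
            · exact h
            · exfalso; rw [← h] at hcR'; simp at hcR'; linarith
          rw [if_neg hcR] at hsum
          have hmin : min 1 R = 1 := min_eq_left hR1'.le
          have hlogc : Real.log c ≤ c - 1 := Real.log_le_sub_one_of_pos hc0'
          have hlogmul : Real.log (c * R) = Real.log c + Real.log R :=
            Real.log_mul (ne_of_gt hc0') (ne_of_gt hR0)
          rw [hmin]
          have : (Real.log (c*R) + 1) / (1 - c) + 1 ≤ (Real.log R + 1) / (1 - c) := by
            rw [div_add' _ _ _ (ne_of_gt ha), div_le_div_iff₀ ha ha]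
            nlinarith [hlogmul, hlogc]
          linarith

private lemma seq_sum_le {α φ γ V₀ : ℝ} (hα0 : 0 < α) (hα1 : α < 1) (hφ : 0 ≤ φ)
    (hγ : φ / α < γ) (hV₀ : γ < V₀)
    (p a : ℕ → ℝ)
    (hp0 : p 0 = 1) (hpmono : ∀ k, p (k+1) ≤ p k)
    (hpnn : ∀ k, 0 ≤ p k) (hp1 : ∀ k, p k ≤ 1)
    (ha0 : a 0 ≤ V₀)
    (hpa : ∀ k, γ * p k ≤ a k)
    (hrec : ∀ k, a (k+1) ≤ (1-α) * a k + φ * p k) :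
    ∀ N, ∑ k ∈ Finset.range N, p k ≤
      γ/(α*γ-φ) + (1/α) * Real.log ((α*V₀-φ)/(α*γ-φ)) := by
  have hαne : α ≠ 0 := ne_of_gt hα0
  set g := γ - φ/α with hgdef
  have hg : 0 < g := by rw [hgdef]; linarith
  set W := V₀ - φ/α with hWdef
  have hgW : g < W := by rw [hgdef, hWdef]; linarith
  have hW : 0 < W := lt_trans hg hgW
  set R := W / g with hRdef
  have hR1 : 1 < R := (lt_div_iff₀ hg).2 (by linarith)
  set m : ℕ → ℝ := fun k => a k - (φ/α) * p k with hmdef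
  set q : ℕ → ℝ := fun k => p k - p (k+1) with hqdef
  have hq : ∀ k, 0 ≤ q k := fun k => by simp only [hqdef]; linarith [hpmono k]
  obtain ⟨t, ht0, htsucc⟩ : ∃ t : ℕ → ℝ, t 0 = 0 ∧ ∀ k, t (k+1) = (1-α) * t k + q k :=
    ⟨fun k => (Nat.rec 0 (fun j tj => (1-α)*tj + q j) k : ℝ), rfl, fun k => rfl⟩
  have htnn : ∀ k, 0 ≤ t k := by
    intro k
    induction k with
    | zero => rw [ht0]
    | succ k ih => rw [htsucc]; nlinarith [hq k]
  have hm : ∀ k, m (k+1) ≤ (1-α) * m k + (φ/α) * q k := by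
    intro k
    have key : (1-α)*(a k - φ/α*p k) + φ/α*(p k - p (k+1))
        = (1-α)*a k + φ * p k - φ/α * p (k+1) := by field_simp; ring
    simp only [hmdef, hqdef]
    rw [key]
    linarith [hrec k]
  have hmμ : ∀ k, m k ≤ (1-α)^k * W + (φ/α) * t k := by
    intro k
    induction k with
    | zero =>
        simp only [hmdef, pow_zero, one_mul, ht0, mul_zero, add_zero]
        have : φ/α * p 0 = φ/α := by rw [hp0, mul_one]
        rw [this, hWdef]
        linarith
    | succ k ih =>
        have h2 : (1-α) * m k ≤ (1-α) * ((1-α)^k * W + (φ/α) * t k) :=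
          mul_le_mul_of_nonneg_left ih (by linarith)
        calc m (k+1) ≤ (1-α) * m k + (φ/α) * q k := hm k
          _ ≤ (1-α) * ((1-α)^k * W + (φ/α) * t k) + (φ/α) * q k := by linarith
          _ = (1-α)^(k+1) * W + (φ/α) * ((1-α) * t k + q k) := by ring
          _ = (1-α)^(k+1) * W + (φ/α) * t (k+1) := by rw [htsucc]
  have hterm : ∀ k, p k ≤ min 1 ((1-α)^k * R) + (φ/(α*g)) * t k := by
    intro k
    have hgp : g * p k ≤ m k := by
      simp only [hmdef]
      have := hpa k
      rw [hgdef]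
      nlinarith [hpnn k]
    have hpdiv : p k ≤ ((1-α)^k * W + (φ/α) * t k) / g := by
      rw [le_div_iff₀ hg]
      calc p k * g = g * p k := by ring
        _ ≤ m k := hgp
        _ ≤ _ := hmμ k
    have heq : ((1-α)^k * W + (φ/α) * t k) / g
        = (1-α)^k * R + (φ/(α*g)) * t k := by
      rw [hRdef]; field_simp
    have hy : 0 ≤ (φ/(α*g)) * t k := by
      have := htnn k
      positivity
    calc p k ≤ min 1 (((1-α)^k * W + (φ/α) * t k) / g) :=
          le_min (hp1 k) hpdiv
      _ = min 1 ((1-α)^k * R + (φ/(α*g)) * t k) := by rw [heq]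
      _ ≤ min 1 ((1-α)^k * R) + (φ/(α*g)) * t k := min_add_le hy
  intro N
  -- sum of t bound
  have htsum : ∑ k ∈ Finset.range N, t k ≤ 1/α := by
    have h1 : ∑ k ∈ Finset.range N, t (k+1)
        = (1-α) * ∑ k ∈ Finset.range N, t k + ∑ k ∈ Finset.range N, q k := by
      rw [Finset.mul_sum, ← Finset.sum_add_distrib]
      exact Finset.sum_congr rfl fun k _ => htsucc k
    have h2 : ∑ k ∈ Finset.range N, q k = p 0 - p N := by
      simp only [hqdef]
      exact Finset.sum_range_sub' p N
    have h3 : ∑ k ∈ Finset.range N, t k ≤ ∑ k ∈ Finset.range N, t (k+1) := by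
      have := Finset.sum_range_succ' t N
      -- ∑_{range (N+1)} t = ∑_{range N} t(k+1) + t 0
      have h4 : ∑ k ∈ Finset.range (N+1), t k
          = ∑ k ∈ Finset.range N, t (k+1) + t 0 := this
      have h5 : ∑ k ∈ Finset.range (N+1), t k
          = ∑ k ∈ Finset.range N, t k + t N := Finset.sum_range_succ t N
      rw [ht0, add_zero] at h4
      linarith [htnn N, h4, h5]
    rw [le_div_iff₀ hα0]
    have hpN : 0 ≤ p N := hpnn N
    rw [h2] at h1
    rw [hp0] at h1
    nlinarith [h1, h3]
  have hsum1 : ∑ k ∈ Finset.range N, min 1 ((1-α)^k * R)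
      ≤ (Real.log R + 1) / α := by
    have := sum_min_le_F (c := 1-α) (by linarith) (by linarith) N R (by positivity)
    rw [if_neg (not_le.2 hR1), show (1:ℝ) - (1-α) = α from by ring] at this
    exact this
  have hbound : ∑ k ∈ Finset.range N, p k
      ≤ (Real.log R + 1) / α + (φ/(α*g)) * (1/α) := by
    calc ∑ k ∈ Finset.range N, p k
        ≤ ∑ k ∈ Finset.range N, (min 1 ((1-α)^k * R) + (φ/(α*g)) * t k) :=
          Finset.sum_le_sum fun k _ => hterm k
      _ = ∑ k ∈ Finset.range N, min 1 ((1-α)^k * R)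
          + (φ/(α*g)) * ∑ k ∈ Finset.range N, t k := by
          rw [Finset.sum_add_distrib, Finset.mul_sum]
      _ ≤ (Real.log R + 1) / α + (φ/(α*g)) * (1/α) := by
          have hc : 0 ≤ φ/(α*g) := by positivity
          have := mul_le_mul_of_nonneg_left htsum hc
          linarith
  -- final arithmetic
  have hRid : (α*V₀-φ)/(α*γ-φ) = R := by
    rw [hRdef, hWdef, hgdef]
    rw [show α*V₀-φ = α*(V₀ - φ/α) by field_simp]
    rw [show α*γ-φ = α*(γ - φ/α) by field_simp]
    rw [mul_div_mul_left _ _ hαne]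
  have hαg : α*γ-φ = α*g := by rw [hgdef]; field_simp
  have hγid : γ/(α*g) = 1/α + (φ/(α*g)) * (1/α) := by
    have h1 : γ = g + φ/α := by rw [hgdef]; ring
    rw [h1]
    field_simp [hg.ne', hαne]
  rw [hRid, hαg, hγid]
  have hre : (Real.log R + 1)/α = (1/α) * Real.log R + 1/α := by ring
  linarith [hbound, hre]

private def traj {n m : ℕ}
    (f : EuclideanSpace ℝ (Fin n) → EuclideanSpace ℝ (Fin m) → EuclideanSpace ℝ (Fin n))
    (x₀ : EuclideanSpace ℝ (Fin n)) :
    ℕ → (ℕ → EuclideanSpace ℝ (Fin m)) → EuclideanSpace ℝ (Fin n)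
  | 0, _ => x₀
  | (k+1), v => f (traj f x₀ k v) (v k)

private lemma traj_measurable {n m : ℕ}
    {f : EuclideanSpace ℝ (Fin n) → EuclideanSpace ℝ (Fin m) → EuclideanSpace ℝ (Fin n)}
    (hf : Continuous (Function.uncurry f)) (x₀ : EuclideanSpace ℝ (Fin n)) :
    ∀ k, Measurable (traj f x₀ k) := by
  intro k
  induction k with
  | zero => exact measurable_const
  | succ k ih =>
      have : traj f x₀ (k+1) = fun v => Function.uncurry f (traj f x₀ k v, v k) := rfl
      rw [this]
      exact hf.measurable.comp (ih.prodMk (measurable_pi_apply k))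

private lemma traj_congr {n m : ℕ}
    (f : EuclideanSpace ℝ (Fin n) → EuclideanSpace ℝ (Fin m) → EuclideanSpace ℝ (Fin n))
    (x₀ : EuclideanSpace ℝ (Fin n)) :
    ∀ (k : ℕ) (v w : ℕ → EuclideanSpace ℝ (Fin m)),
      (∀ i, i < k → v i = w i) → traj f x₀ k v = traj f x₀ k w := by
  intro k
  induction k with
  | zero => intro v w _; rfl
  | succ k ih =>
      intro v w h
      show f (traj f x₀ k v) (v k) = f (traj f x₀ k w) (w k)
      rw [ih v w (fun i hi => h i (Nat.lt_succ_of_lt hi)), h k (Nat.lt_succ_self k)]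

/-- **Quantitative hitting-time bound for the E-ISSp drift.** For `x_{k+1} = f(x_k,d_k)` with
`d_k` i.i.d. from `μ`, suppose `V : ℝⁿ → ℝ_{≥0}` satisfies
`E_d[V(f(x,d))] - V(x) ≤ -α V(x) + φ` for all `x`, with `α ∈ (0,1)`, `φ ≥ 0`.  Then for any
`γ > φ/α` and initial state with `V(x₀) > γ`, the hitting time
`τ_γ = inf{k : V(x_k) ≤ γ}` satisfies
`E[τ_γ] ≤ γ/(αγ - φ) + (1/α) log((α V(x₀) - φ)/(αγ - φ))`, and hence `P{τ_γ < ∞} = 1`. -/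
theorem eissp_drift_hitting_time {n m : ℕ}
    (f : EuclideanSpace ℝ (Fin n) → EuclideanSpace ℝ (Fin m) → EuclideanSpace ℝ (Fin n))
    (hf : Continuous (Function.uncurry f))
    (μ : Measure (EuclideanSpace ℝ (Fin m))) [IsProbabilityMeasure μ]
    (V : EuclideanSpace ℝ (Fin n) → ℝ) (hVmeas : Measurable V) (hVnonneg : ∀ x, 0 ≤ V x)
    (α φ : ℝ) (hα : α ∈ Set.Ioo (0 : ℝ) 1) (hφ : 0 ≤ φ)
    (hVint : ∀ x, Integrable (fun v => V (f x v)) μ)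
    (hdrift : ∀ x, (∫ v, V (f x v) ∂μ) - V x ≤ -(α * V x) + φ)
    (γ : ℝ) (hγ : φ / α < γ)
    {Ω : Type*} {mΩ : MeasurableSpace Ω} (P : Measure Ω) [IsProbabilityMeasure P]
    (d : ℕ → Ω → EuclideanSpace ℝ (Fin m)) (hdmeas : ∀ k, Measurable (d k))
    (hindep : iIndepFun d P)
    (hdist : ∀ k, Measure.map (d k) P = μ)
    (x₀ : EuclideanSpace ℝ (Fin n)) (hx₀ : γ < V x₀)
    (x : ℕ → Ω → EuclideanSpace ℝ (Fin n))
    (hx0 : ∀ ω, x 0 ω = x₀)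
    (hxstep : ∀ k ω, x (k + 1) ω = f (x k ω) (d k ω)) :
    (∫⁻ ω, ⨅ (k : ℕ) (_ : V (x k ω) ≤ γ), (k : ENNReal) ∂P) ≤
      ENNReal.ofReal (γ / (α * γ - φ) +
        (1 / α) * Real.log ((α * V x₀ - φ) / (α * γ - φ))) ∧
    P {ω | ∃ k : ℕ, V (x k ω) ≤ γ} = 1 := by
  obtain ⟨hα0, hα1⟩ := hα
  have hγ0 : 0 < γ := lt_of_le_of_lt (by positivity) hγ
  -- measurability of the trajectory
  have hxmeas : ∀ k, Measurable (x k) := by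
    intro k
    induction k with
    | zero =>
        have h : x 0 = fun _ => x₀ := funext hx0
        rw [h]; exact measurable_const
    | succ k ih =>
        have h : x (k+1) = fun ω => Function.uncurry f (x k ω, d k ω) :=
          funext fun ω => hxstep k ω
        rw [h]
        exact hf.measurable.comp (ih.prodMk (hdmeas k))
  -- the events A k = {τ > k}
  set A : ℕ → Set Ω := fun k => {ω | ∀ j ≤ k, γ < V (x j ω)} with hAdef
  have hAmeas : ∀ k, MeasurableSet (A k) := by
    intro k
    have h : A k = ⋂ j ∈ Finset.range (k+1), (fun ω => V (x j ω)) ⁻¹' (Set.Ioi γ) := by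
      ext ω
      simp [hAdef, Nat.lt_succ_iff]
    rw [h]
    exact Finset.measurableSet_biInter _
      fun j _ => (hVmeas.comp (hxmeas j)) measurableSet_Ioi
  have hA0 : A 0 = Set.univ := by
    ext ω
    simp only [hAdef, Set.mem_setOf_eq, Set.mem_univ, iff_true]
    intro j hj
    rw [Nat.le_zero] at hj
    subst hj
    rw [hx0]
    exact hx₀
  have hAmono : ∀ k, A (k+1) ⊆ A k := fun k ω hω j hj => hω j (le_trans hj (Nat.le_succ k))
  have hAk_mem : ∀ k ω, ω ∈ A k → γ < V (x k ω) := fun k ω hω => hω k le_rfl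
  -- ENNReal-valued V
  set Vt : EuclideanSpace ℝ (Fin n) → ℝ≥0∞ := fun z => ENNReal.ofReal (V z) with hVtdef
  have hVtmeas : Measurable Vt := ENNReal.measurable_ofReal.comp hVmeas
  -- the one-step expected value function
  set h : EuclideanSpace ℝ (Fin n) → ℝ≥0∞ := fun z => ∫⁻ u, Vt (f z u) ∂μ with hhdef
  have hhmeas : Measurable h := by
    have : Measurable fun zu : EuclideanSpace ℝ (Fin n) × EuclideanSpace ℝ (Fin m) =>
        Vt (f zu.1 zu.2) := hVtmeas.comp hf.measurable
    exact this.lintegral_prod_right'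
  have hstepE : ∀ z, h z ≤ ENNReal.ofReal (1-α) * Vt z + ENNReal.ofReal φ := by
    intro z
    have h1 : h z = ENNReal.ofReal (∫ u, V (f z u) ∂μ) :=
      (ofReal_integral_eq_lintegral_ofReal (hVint z)
        (Filter.Eventually.of_forall fun u => hVnonneg _)).symm
    rw [h1]
    calc ENNReal.ofReal (∫ u, V (f z u) ∂μ)
        ≤ ENNReal.ofReal ((1-α) * V z + φ) :=
          ENNReal.ofReal_le_ofReal (by linarith [hdrift z])
      _ ≤ ENNReal.ofReal (1-α) * Vt z + ENNReal.ofReal φ := by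
          rw [ENNReal.ofReal_add (mul_nonneg (by linarith) (hVnonneg z)) hφ,
            ENNReal.ofReal_mul (by linarith : (0:ℝ) ≤ 1-α)]
  -- trajectory as a function of the noise
  have hxtraj : ∀ j ω, x j ω = traj f x₀ j (fun i => d i ω) := by
    intro j
    induction j with
    | zero => intro ω; rw [hx0]; rfl
    | succ j ih =>
        intro ω
        rw [hxstep, ih]
        rfl
  -- the key independence identity
  have hkey : ∀ k, ∫⁻ ω in A k, Vt (x (k+1) ω) ∂P = ∫⁻ ω in A k, h (x k ω) ∂P := by
    intro k
    -- truncated noise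
    set Φ : (((Finset.range k : Finset ℕ)) → EuclideanSpace ℝ (Fin m)) →
        (ℕ → EuclideanSpace ℝ (Fin m)) :=
      fun y i => if hi : i < k then y ⟨i, Finset.mem_range.2 hi⟩ else 0 with hΦdef
    have hΦmeas : Measurable Φ := by
      refine measurable_pi_lambda _ fun i => ?_
      by_cases hi : i < k
      · simp only [hΦdef, dif_pos hi]
        exact measurable_pi_apply _
      · simp only [hΦdef, dif_neg hi]
        exact measurable_const
    set T : Ω → (ℕ → EuclideanSpace ℝ (Fin m)) :=
      fun ω => Φ (fun i : ((Finset.range k : Finset ℕ)) => d i ω) with hTdef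
    have hTmeas : Measurable T :=
      hΦmeas.comp (measurable_pi_lambda _ fun i => hdmeas i)
    have hTi : ∀ ω i, i < k → T ω i = d i ω := by
      intro ω i hi
      simp only [hTdef, hΦdef, dif_pos hi]
    -- independence of T and d k
    have hindepT : IndepFun T (d k) P := by
      have hdisj : Disjoint (Finset.range k) ({k} : Finset ℕ) := by
        simp [Finset.disjoint_singleton_right]
      have h1 := hindep.indepFun_finset (Finset.range k) {k} hdisj hdmeas
      have h2 := h1.comp hΦmeas
        (measurable_pi_apply (⟨k, Finset.mem_singleton_self k⟩ :
          (({k} : Finset ℕ) : Type)))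
      exact h2
    -- x j ω only depends on T ω for j ≤ k
    have hxT : ∀ ω j, j ≤ k → x j ω = traj f x₀ j (T ω) := by
      intro ω j hj
      rw [hxtraj j ω]
      exact traj_congr f x₀ j _ _ fun i hi => (hTi ω i (lt_of_lt_of_le hi hj)).symm
    -- the set B and the kernel H
    set B : Set (ℕ → EuclideanSpace ℝ (Fin m)) :=
      {y | ∀ j ≤ k, γ < V (traj f x₀ j y)} with hBdef
    have hBmeas : MeasurableSet B := by
      have hB : B = ⋂ j ∈ Finset.range (k+1),
          (fun y => V (traj f x₀ j y)) ⁻¹' (Set.Ioi γ) := by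
        ext y
        simp [hBdef, Nat.lt_succ_iff]
      rw [hB]
      exact Finset.measurableSet_biInter _
        fun j _ => (hVmeas.comp (traj_measurable hf x₀ j)) measurableSet_Ioi
    have hABmem : ∀ ω, ω ∈ A k ↔ T ω ∈ B := by
      intro ω
      constructor
      · intro hω j hj
        rw [← hxT ω j hj]
        exact hω j hj
      · intro hy j hj
        rw [hxT ω j hj]
        exact hy j hj
    set H : (ℕ → EuclideanSpace ℝ (Fin m)) × EuclideanSpace ℝ (Fin m) → ℝ≥0∞ :=
      fun z => B.indicator (fun _ => (1:ℝ≥0∞)) z.1 * Vt (f (traj f x₀ k z.1) z.2)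
      with hHdef
    have hHmeas : Measurable H := by
      refine Measurable.mul ?_ ?_
      · exact (measurable_one.indicator hBmeas).comp measurable_fst
      · exact hVtmeas.comp (hf.measurable.comp
          (((traj_measurable hf x₀ k).comp measurable_fst).prodMk measurable_snd))
    -- pointwise identities
    have h5 : ∀ ω, (A k).indicator (fun ω' => Vt (x (k+1) ω')) ω = H (T ω, d k ω) := by
      intro ω
      have hxx : Vt (f (traj f x₀ k (T ω)) (d k ω)) = Vt (x (k+1) ω) := by
        rw [hxstep k ω, hxT ω k le_rfl]
      by_cases hω : ω ∈ A k
      · rw [Set.indicator_of_mem hω]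
        simp only [hHdef]
        rw [Set.indicator_of_mem ((hABmem ω).1 hω), one_mul, hxx]
      · rw [Set.indicator_of_notMem hω]
        simp only [hHdef]
        rw [Set.indicator_of_notMem (fun hc => hω ((hABmem ω).2 hc)), zero_mul]
    have h6 : ∀ ω, B.indicator (fun _ => (1:ℝ≥0∞)) (T ω) * h (traj f x₀ k (T ω))
        = (A k).indicator (fun ω' => h (x k ω')) ω := by
      intro ω
      by_cases hω : ω ∈ A k
      · rw [Set.indicator_of_mem hω, Set.indicator_of_mem ((hABmem ω).1 hω), one_mul,
          hxT ω k le_rfl]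
      · rw [Set.indicator_of_notMem hω,
          Set.indicator_of_notMem (fun hc => hω ((hABmem ω).2 hc)), zero_mul]
    -- probability measure instances for the pushforward
    have hPT : IsProbabilityMeasure (P.map T) := Measure.isProbabilityMeasure_map hTmeas.aemeasurable
    -- the chain of equalities
    have hjoint : P.map (fun ω => (T ω, d k ω)) = (P.map T).prod μ := by
      rw [(indepFun_iff_map_prod_eq_prod_map_map hTmeas.aemeasurable
        (hdmeas k).aemeasurable).1 hindepT, hdist k]
    calc ∫⁻ ω in A k, Vt (x (k+1) ω) ∂P
        = ∫⁻ ω, (A k).indicator (fun ω' => Vt (x (k+1) ω')) ω ∂P :=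
          (lintegral_indicator (hAmeas k) _).symm
      _ = ∫⁻ ω, H (T ω, d k ω) ∂P := lintegral_congr h5
      _ = ∫⁻ z, H z ∂(P.map (fun ω => (T ω, d k ω))) :=
          (lintegral_map hHmeas (hTmeas.prodMk (hdmeas k))).symm
      _ = ∫⁻ z, H z ∂((P.map T).prod μ) := by rw [hjoint]
      _ = ∫⁻ y, (∫⁻ u, H (y, u) ∂μ) ∂(P.map T) := lintegral_prod _ hHmeas.aemeasurable
      _ = ∫⁻ y, B.indicator (fun _ => (1:ℝ≥0∞)) y * h (traj f x₀ k y) ∂(P.map T) := by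
          refine lintegral_congr fun y => ?_
          simp only [hHdef]
          exact lintegral_const_mul _ (hVtmeas.comp
            (hf.measurable.comp (measurable_const.prodMk measurable_id)))
      _ = ∫⁻ ω, B.indicator (fun _ => (1:ℝ≥0∞)) (T ω) * h (traj f x₀ k (T ω)) ∂P :=
          lintegral_map ((measurable_one.indicator hBmeas).mul
            (hhmeas.comp (traj_measurable hf x₀ k))) hTmeas
      _ = ∫⁻ ω, (A k).indicator (fun ω' => h (x k ω')) ω ∂P := lintegral_congr h6
      _ = ∫⁻ ω in A k, h (x k ω) ∂P := lintegral_indicator (hAmeas k) _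
  -- the ENNReal sequences
  set aE : ℕ → ℝ≥0∞ := fun k => ∫⁻ ω in A k, Vt (x k ω) ∂P with haEdef
  have hrecE : ∀ k, aE (k+1) ≤ ENNReal.ofReal (1-α) * aE k + ENNReal.ofReal φ * P (A k) := by
    intro k
    calc aE (k+1) = ∫⁻ ω in A (k+1), Vt (x (k+1) ω) ∂P := rfl
      _ ≤ ∫⁻ ω in A k, Vt (x (k+1) ω) ∂P := lintegral_mono_set (hAmono k)
      _ = ∫⁻ ω in A k, h (x k ω) ∂P := hkey k
      _ ≤ ∫⁻ ω in A k, (ENNReal.ofReal (1-α) * Vt (x k ω) + ENNReal.ofReal φ) ∂P :=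
          lintegral_mono fun ω => hstepE (x k ω)
      _ = ENNReal.ofReal (1-α) * aE k + ENNReal.ofReal φ * P (A k) := by
          rw [lintegral_add_right _ measurable_const,
            lintegral_const_mul _
              (show Measurable fun ω => Vt (x k ω) from hVtmeas.comp (hxmeas k)),
            setLIntegral_const]
  have hγa : ∀ k, ENNReal.ofReal γ * P (A k) ≤ aE k := by
    intro k
    have h1 : ENNReal.ofReal γ * P (A k) = ∫⁻ _ in A k, ENNReal.ofReal γ ∂P := by
      rw [setLIntegral_const]
    rw [h1]
    exact setLIntegral_mono (hVtmeas.comp (hxmeas k))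
      fun ω hω => ENNReal.ofReal_le_ofReal (hAk_mem k ω hω).le
  have haE0 : aE 0 = ENNReal.ofReal (V x₀) := by
    have hc : ∀ ω, Vt (x 0 ω) = ENNReal.ofReal (V x₀) := fun ω => by rw [hx0]
    calc aE 0 = ∫⁻ ω in A 0, Vt (x 0 ω) ∂P := rfl
      _ = ∫⁻ ω in A 0, ENNReal.ofReal (V x₀) ∂P := lintegral_congr fun ω => hc ω
      _ = ENNReal.ofReal (V x₀) := by
          rw [setLIntegral_const, hA0, measure_univ, mul_one]
  have haEfin : ∀ k, aE k ≠ ⊤ := by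
    intro k
    induction k with
    | zero => rw [haE0]; exact ENNReal.ofReal_ne_top
    | succ k ih =>
        refine ne_top_of_le_ne_top ?_ (hrecE k)
        exact ENNReal.add_ne_top.2
          ⟨ENNReal.mul_ne_top ENNReal.ofReal_ne_top ih,
           ENNReal.mul_ne_top ENNReal.ofReal_ne_top (measure_ne_top P _)⟩
  -- the real sequences
  set pr : ℕ → ℝ := fun k => (P (A k)).toReal with hprdef
  set ar : ℕ → ℝ := fun k => (aE k).toReal with hardef
  have hpr0 : pr 0 = 1 := by simp [hprdef, hA0]
  have hprmono : ∀ k, pr (k+1) ≤ pr k := fun k =>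
    (ENNReal.toReal_le_toReal (measure_ne_top P _) (measure_ne_top P _)).2
      (measure_mono (hAmono k))
  have hprnn : ∀ k, 0 ≤ pr k := fun k => ENNReal.toReal_nonneg
  have hpr1 : ∀ k, pr k ≤ 1 := fun k => by
    have := prob_le_one (μ := P) (s := A k)
    exact (ENNReal.toReal_le_toReal (measure_ne_top P _) ENNReal.one_ne_top).2 this |>.trans_eq
      ENNReal.toReal_one
  have har0 : ar 0 ≤ V x₀ := by
    rw [hardef]
    simp only [haE0]
    rw [ENNReal.toReal_ofReal (hVnonneg x₀)]
  have hpa : ∀ k, γ * pr k ≤ ar k := by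
    intro k
    have h1 := hγa k
    have h2 := ENNReal.toReal_mono (haEfin k) h1
    rwa [ENNReal.toReal_mul, ENNReal.toReal_ofReal hγ0.le] at h2
  have hrecR : ∀ k, ar (k+1) ≤ (1-α) * ar k + φ * pr k := by
    intro k
    have hRHSfin : ENNReal.ofReal (1-α) * aE k + ENNReal.ofReal φ * P (A k) ≠ ⊤ :=
      ENNReal.add_ne_top.2
        ⟨ENNReal.mul_ne_top ENNReal.ofReal_ne_top (haEfin k),
         ENNReal.mul_ne_top ENNReal.ofReal_ne_top (measure_ne_top P _)⟩
    have h2 := ENNReal.toReal_mono hRHSfin (hrecE k)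
    rwa [ENNReal.toReal_add
        (ENNReal.mul_ne_top ENNReal.ofReal_ne_top (haEfin k))
        (ENNReal.mul_ne_top ENNReal.ofReal_ne_top (measure_ne_top P _)),
      ENNReal.toReal_mul, ENNReal.toReal_mul,
      ENNReal.toReal_ofReal (by linarith : (0:ℝ) ≤ 1-α),
      ENNReal.toReal_ofReal hφ] at h2
  have hsum := seq_sum_le hα0 hα1 hφ hγ hx₀ pr ar hpr0 hprmono hprnn hpr1 har0 hpa hrecR
  -- total bound in ENNReal
  set Tr : ℝ := γ / (α * γ - φ) + (1 / α) * Real.log ((α * V x₀ - φ) / (α * γ - φ))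
    with hTrdef
  have hsumP : ∀ N, ∑ k ∈ Finset.range N, P (A k) ≤ ENNReal.ofReal Tr := by
    intro N
    have h1 : ∑ k ∈ Finset.range N, P (A k)
        = ENNReal.ofReal (∑ k ∈ Finset.range N, pr k) := by
      rw [ENNReal.ofReal_sum_of_nonneg fun k _ => hprnn k]
      exact Finset.sum_congr rfl fun k _ => (ENNReal.ofReal_toReal (measure_ne_top P _)).symm
    rw [h1]
    exact ENNReal.ofReal_le_ofReal (hsum N)
  have htsumP : ∑' k, P (A k) ≤ ENNReal.ofReal Tr := by
    rw [ENNReal.tsum_eq_iSup_sum]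
    refine iSup_le fun s => ?_
    obtain ⟨N, hN⟩ := Finset.exists_nat_subset_range s
    exact le_trans (Finset.sum_le_sum_of_subset hN) (hsumP N)
  constructor
  · -- the expectation bound
    have hpt : ∀ ω, (⨅ (k : ℕ) (_ : V (x k ω) ≤ γ), (k : ENNReal))
        ≤ ∑' k, (A k).indicator (fun _ => (1:ℝ≥0∞)) ω := by
      intro ω
      by_cases hex : ∃ k, V (x k ω) ≤ γ
      · set k₀ := Nat.find hex with hk₀def
        have h1 : (⨅ (k : ℕ) (_ : V (x k ω) ≤ γ), (k : ENNReal)) ≤ (k₀ : ℝ≥0∞) :=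
          iInf₂_le k₀ (Nat.find_spec hex)
        have h2 : (k₀ : ℝ≥0∞) ≤ ∑' k, (A k).indicator (fun _ => (1:ℝ≥0∞)) ω := by
          calc (k₀ : ℝ≥0∞) = ∑ k ∈ Finset.range k₀, 1 := by simp
            _ ≤ ∑ k ∈ Finset.range k₀, (A k).indicator (fun _ => (1:ℝ≥0∞)) ω := by
                refine Finset.sum_le_sum fun k hk => ?_
                have hmem : ω ∈ A k := by
                  intro j hj
                  have hjk : j < k₀ := lt_of_le_of_lt hj (Finset.mem_range.1 hk)
                  exact lt_of_not_ge (Nat.find_min hex hjk)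
                rw [Set.indicator_of_mem hmem]
            _ ≤ ∑' k, (A k).indicator (fun _ => (1:ℝ≥0∞)) ω := ENNReal.sum_le_tsum _
        exact le_trans h1 h2
      · have hall : ∀ k, ω ∈ A k := fun k j _ =>
          lt_of_not_ge fun hc => hex ⟨j, hc⟩
        have h2 : ∑' k, (A k).indicator (fun _ => (1:ℝ≥0∞)) ω = ∑' (_ : ℕ), (1:ℝ≥0∞) :=
          tsum_congr fun k => Set.indicator_of_mem (hall k) _
        have hTop : ∑' (_ : ℕ), (1:ℝ≥0∞) = ⊤ :=
          ENNReal.tsum_const_eq_top_of_ne_zero one_ne_zero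
        rw [h2, hTop]
        exact le_top
    calc ∫⁻ ω, ⨅ (k : ℕ) (_ : V (x k ω) ≤ γ), (k : ENNReal) ∂P
        ≤ ∫⁻ ω, ∑' k, (A k).indicator (fun _ => (1:ℝ≥0∞)) ω ∂P := lintegral_mono hpt
      _ = ∑' k, ∫⁻ ω, (A k).indicator (fun _ => (1:ℝ≥0∞)) ω ∂P :=
          lintegral_tsum fun k => (measurable_one.indicator (hAmeas k)).aemeasurable
      _ = ∑' k, P (A k) := tsum_congr fun k => lintegral_indicator_one (hAmeas k)
      _ ≤ ENNReal.ofReal Tr := htsumP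
  · -- recurrence
    set C : Set Ω := {ω | ∃ k : ℕ, V (x k ω) ≤ γ} with hCdef
    have hCmeas : MeasurableSet C := by
      have h1 : C = ⋃ k, (fun ω => V (x k ω)) ⁻¹' (Set.Iic γ) := by
        ext ω; simp [hCdef]
      rw [h1]
      exact MeasurableSet.iUnion fun k => (hVmeas.comp (hxmeas k)) measurableSet_Iic
    have hCc : ∀ N, Cᶜ ⊆ A N := by
      intro N ω hω j _
      exact lt_of_not_ge fun hc => hω ⟨j, hc⟩
    have hanti : Antitone pr := antitone_nat_of_succ_le hprmono
    have hprN : ∀ N : ℕ, (N+1 : ℝ) * pr N ≤ Tr := by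
      intro N
      have h1 : (Finset.range (N+1)).card • pr N ≤ ∑ k ∈ Finset.range (N+1), pr k :=
        Finset.card_nsmul_le_sum _ _ _
          fun k hk => hanti (Nat.lt_succ_iff.1 (Finset.mem_range.1 hk))
      rw [Finset.card_range, nsmul_eq_mul] at h1
      calc (N+1 : ℝ) * pr N = (↑(N+1) : ℝ) * pr N := by push_cast; ring
        _ ≤ ∑ k ∈ Finset.range (N+1), pr k := h1
        _ ≤ Tr := hsum (N+1)
    have hr0 : (P Cᶜ).toReal = 0 := by
      by_contra hne
      have hrpos : 0 < (P Cᶜ).toReal :=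
        lt_of_le_of_ne ENNReal.toReal_nonneg (Ne.symm hne)
      obtain ⟨N, hN⟩ := exists_nat_gt (Tr / (P Cᶜ).toReal)
      have hle : (P Cᶜ).toReal ≤ pr N :=
        (ENNReal.toReal_le_toReal (measure_ne_top P _) (measure_ne_top P _)).2
          (measure_mono (hCc N))
      have h2 : (N+1 : ℝ) * (P Cᶜ).toReal ≤ Tr := by
        calc (N+1 : ℝ) * (P Cᶜ).toReal ≤ (N+1 : ℝ) * pr N := by
              have : (0:ℝ) ≤ (N:ℝ)+1 := by positivity
              nlinarith
          _ ≤ Tr := hprN N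
      have h3 : Tr / (P Cᶜ).toReal < (N:ℝ) + 1 := by
        calc Tr / (P Cᶜ).toReal < N := hN
          _ < (N:ℝ) + 1 := by linarith
      rw [div_lt_iff₀ hrpos] at h3
      linarith
    have hPCc : P Cᶜ = 0 := by
      have := (ENNReal.toReal_eq_zero_iff (P Cᶜ)).1 hr0
      rcases this with h | h
      · exact h
      · exact absurd h (measure_ne_top P _)
    have hcompl := measure_add_measure_compl (μ := P) hCmeas
    rw [hPCc, add_zero, measure_univ] at hcompl
    exact hcompl
end

section
/- Consider the discrete-time stochastic system x_{k+1} = f(x_k, d_k) with disturbances d_k drawn i.i.d. from a distribution D on ℝ^m with ‖D‖_{L^p} < ∞. Suppose V : ℝⁿ → ℝ_{≥0} is continuous and there exist a, b, c > 0, α ∈ (0,1), and a class-K function κ₄ such that a‖x‖^c ≤ V(x) ≤ b‖x‖^c for all x and E_{d∼D}[V(f(x,d))] − V(x) ≤ −α V(x) + κ₄(‖D‖_{L^p}) for all x. Then the system is recurrent: there exists a bounded set A ⊂ ℝⁿ (namely any sublevel set V_γ = {x : V(x) ≤ γ} with γ > κ₄(‖D‖_{L^p})/α) such that for every initial state x₀,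 the hitting time τ_A(x₀) = inf{k ∈ ℕ : x_k ∈ A} satisfies P{τ_A(x₀) < ∞} = 1. -/
open MeasureTheory ProbabilityTheory Filter Set
open scoped ENNReal

/-- A continuous function `γ : [0,∞) → [0,∞)` is of class `K` if it is strictly increasing
and `γ 0 = 0`. -/
def ClassK (γ : ℝ → ℝ) : Prop :=
  ContinuousOn γ (Set.Ici 0) ∧ StrictMonoOn γ (Set.Ici 0) ∧ γ 0 = 0

noncomputable def eisspIter {n m : ℕ}
    (f : EuclideanSpace ℝ (Fin n) → EuclideanSpace ℝ (Fin m) → EuclideanSpace ℝ (Fin n))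
    (x₀ : EuclideanSpace ℝ (Fin n)) :
    (k : ℕ) → (Fin k → EuclideanSpace ℝ (Fin m)) → EuclideanSpace ℝ (Fin n)
  | 0, _ => x₀
  | (k+1), w => f (eisspIter f x₀ k (Fin.init w)) (w (Fin.last k))

lemma eisspIter_measurable {n m : ℕ}
    {f : EuclideanSpace ℝ (Fin n) → EuclideanSpace ℝ (Fin m) → EuclideanSpace ℝ (Fin n)}
    (hf : Continuous (Function.uncurry f)) (x₀ : EuclideanSpace ℝ (Fin n)) :
    ∀ k, Measurable (eisspIter f x₀ k)
  | 0 => measurable_const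
  | (k+1) => by
    have h1 : Measurable fun (w : Fin (k+1) → EuclideanSpace ℝ (Fin m)) => Fin.init w :=
      measurable_pi_lambda _ (fun i => measurable_pi_apply _)
    exact hf.measurable.comp
      (((eisspIter_measurable hf x₀ k).comp h1).prodMk (measurable_pi_apply (Fin.last k)))

/-- **E-ISSp Lyapunov function implies recurrence (Theorem 4).** For `x_{k+1} = f(x_k,d_k)`
with `d_k` i.i.d. from `μ` with finite `L^p`-norm `Dlp`, suppose the continuous
`V : ℝⁿ → ℝ_{≥0}` satisfies `a‖x‖^c ≤ V(x) ≤ b‖x‖^c` and the drift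
`E_d[V(f(x,d))] - V(x) ≤ -α V(x) + κ₄(Dlp)`.  Then the system is recurrent: every sublevel
set `V_γ = {x : V(x) ≤ γ}` with `γ > κ₄(Dlp)/α` is a bounded set that every trajectory,
from every initial state, hits in finite time with probability one. -/
theorem eissp_lyapunov_implies_recurrence {n m : ℕ}
    (f : EuclideanSpace ℝ (Fin n) → EuclideanSpace ℝ (Fin m) → EuclideanSpace ℝ (Fin n))
    (hf : Continuous (Function.uncurry f))
    (μ : Measure (EuclideanSpace ℝ (Fin m))) [IsProbabilityMeasure μ]
    (p : ℝ) (hp : 0 < p)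
    (hmom : Integrable (fun v => ‖v‖ ^ p) μ)
    (Dlp : ℝ) (hDlp : Dlp = (∫ v, ‖v‖ ^ p ∂μ) ^ (1 / p))
    (V : EuclideanSpace ℝ (Fin n) → ℝ) (hVcont : Continuous V) (hVnonneg : ∀ x, 0 ≤ V x)
    (a b c α : ℝ) (ha : 0 < a) (hb : 0 < b) (hc : 0 < c) (hα : α ∈ Set.Ioo (0 : ℝ) 1)
    (κ₄ : ℝ → ℝ) (hκ₄ : ClassK κ₄)
    (hsandwich : ∀ x, a * ‖x‖ ^ c ≤ V x ∧ V x ≤ b * ‖x‖ ^ c)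
    (hVint : ∀ x, Integrable (fun v => V (f x v)) μ)
    (hdrift : ∀ x, (∫ v, V (f x v) ∂μ) - V x ≤ -(α * V x) + κ₄ Dlp)
    {Ω : Type*} {mΩ : MeasurableSpace Ω} (P : Measure Ω) [IsProbabilityMeasure P]
    (d : ℕ → Ω → EuclideanSpace ℝ (Fin m)) (hdmeas : ∀ k, Measurable (d k))
    (hindep : iIndepFun d P)
    (hdist : ∀ k, Measure.map (d k) P = μ) :
    ∀ γ : ℝ, κ₄ Dlp / α < γ →
      Bornology.IsBounded {x' : EuclideanSpace ℝ (Fin n) | V x' ≤ γ} ∧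
      ∀ (x₀ : EuclideanSpace ℝ (Fin n)) (x : ℕ → Ω → EuclideanSpace ℝ (Fin n)),
        (∀ ω, x 0 ω = x₀) → (∀ k ω, x (k + 1) ω = f (x k ω) (d k ω)) →
        P {ω | ∃ k : ℕ, x k ω ∈ {x' : EuclideanSpace ℝ (Fin n) | V x' ≤ γ}} = 1 := by
  intro γ hγ
  obtain ⟨hα0, hα1⟩ := hα
  obtain ⟨hκc, hκmono, hκ0⟩ := hκ₄
  have hint0 : 0 ≤ ∫ v, ‖v‖ ^ p ∂μ := integral_nonneg fun v => by positivity
  have hDlp0 : 0 ≤ Dlp := hDlp ▸ Real.rpow_nonneg hint0 _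
  have hβ0 : 0 ≤ κ₄ Dlp := by
    rcases eq_or_lt_of_le hDlp0 with h | h
    · rw [← h, hκ0]
    · exact le_of_lt (hκ0 ▸ hκmono (le_refl (0:ℝ)) hDlp0 h)
  have hγpos : 0 < γ := lt_of_le_of_lt (div_nonneg hβ0 hα0.le) hγ
  have hβlt : κ₄ Dlp < α * γ := by
    have := (div_lt_iff₀ hα0).1 hγ; linarith
  set β := κ₄ Dlp with hβdef
  set ε := α * γ - β with hεdef
  have hε : 0 < ε := by simp only [hεdef]; linarith
  constructor
  · -- boundedness of the sublevel set
    apply (Metric.isBounded_closedBall (x := (0 : EuclideanSpace ℝ (Fin n)))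
      (r := (γ / a) ^ (1/c))).subset
    intro x hx
    simp only [Set.mem_setOf_eq] at hx
    have h1 : a * ‖x‖ ^ c ≤ γ := le_trans (hsandwich x).1 hx
    have h2 : ‖x‖ ^ c ≤ γ / a := by rw [le_div_iff₀ ha]; linarith
    have h3 : ‖x‖ = (‖x‖ ^ c) ^ (1/c) := by
      rw [← Real.rpow_mul (norm_nonneg x), mul_one_div, div_self hc.ne', Real.rpow_one]
    simp only [Metric.mem_closedBall, dist_zero_right]
    calc ‖x‖ = (‖x‖ ^ c) ^ (1/c) := h3
      _ ≤ (γ / a) ^ (1/c) := Real.rpow_le_rpow (by positivity) h2 (by positivity)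
  · intro x₀ x hx0 hstep
    -- measurability of the trajectory
    have hxmeas : ∀ k, Measurable (x k) := by
      intro k; induction k with
      | zero =>
        have : x 0 = fun _ => x₀ := funext hx0
        rw [this]; exact measurable_const
      | succ k ih =>
        have : x (k+1) = fun ω => Function.uncurry f (x k ω, d k ω) :=
          funext fun ω => hstep k ω
        rw [this]; exact hf.measurable.comp (ih.prodMk (hdmeas k))
    -- the averaged drift
    set g : EuclideanSpace ℝ (Fin n) → ℝ := fun y => ∫ v, V (f y v) ∂μ with hgdef
    have hg0 : ∀ y, 0 ≤ g y := fun y => integral_nonneg fun v => hVnonneg _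
    have hgle : ∀ y, g y ≤ (1 - α) * V y + β := by
      intro y; have := hdrift y; simp only [hgdef]; linarith
    have hgmeas : Measurable g := by
      have hFc : Continuous (fun z : EuclideanSpace ℝ (Fin n) × EuclideanSpace ℝ (Fin m) =>
          V (f z.1 z.2)) := hVcont.comp hf
      exact hFc.stronglyMeasurable.integral_prod_right'.measurable
    have hiterm : ∀ k, Measurable (eisspIter f x₀ k) := eisspIter_measurable hf x₀
    -- trajectory as function of the noise
    have hxiter : ∀ k ω, x k ω = eisspIter f x₀ k (fun i : Fin k => d i ω) := by
      intro k; induction k with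
      | zero => intro ω; exact hx0 ω
      | succ k ih =>
        intro ω
        rw [hstep k ω, ih ω]
        have h1 : Fin.init (fun i : Fin (k+1) => d (i:ℕ) ω) = fun i : Fin k => d (i:ℕ) ω := by
          funext i; simp [Fin.init]
        simp [eisspIter, h1]
    -- the noise tuple
    set D : (k : ℕ) → Ω → (Fin k → EuclideanSpace ℝ (Fin m)) := fun k ω i => d i ω with hDdef
    have hDmeas : ∀ k, Measurable (D k) := fun k => measurable_pi_lambda _ fun i => hdmeas i
    -- the "not yet hit" events and their noise-space representations
    set G : ℕ → Set Ω := fun k => {ω | ∀ j, j ≤ k → γ < V (x j ω)} with hGdef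
    set S : (k : ℕ) → Set (Fin k → EuclideanSpace ℝ (Fin m)) := fun k =>
      {w | ∀ j, ∀ h : j ≤ k, γ < V (eisspIter f x₀ j (fun i => w (Fin.castLE h i)))} with hSdef
    have hSmeas : ∀ k, MeasurableSet (S k) := by
      intro k
      have : S k = ⋂ (j : ℕ), ⋂ (h : j ≤ k),
          (fun w : Fin k → EuclideanSpace ℝ (Fin m) =>
            V (eisspIter f x₀ j (fun i => w (Fin.castLE h i)))) ⁻¹' (Set.Ioi γ) := by
        ext w; simp [hSdef, Set.mem_iInter]
      rw [this]
      refine MeasurableSet.iInter fun j => MeasurableSet.iInter fun h => ?_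
      have hm : Measurable fun w : Fin k → EuclideanSpace ℝ (Fin m) =>
          V (eisspIter f x₀ j (fun i => w (Fin.castLE h i))) :=
        hVcont.measurable.comp ((hiterm j).comp
          (measurable_pi_lambda
            (fun (w : Fin k → EuclideanSpace ℝ (Fin m)) (i : Fin j) => w (Fin.castLE h i))
            (fun i => measurable_pi_apply _)))
      exact hm measurableSet_Ioi
    have hGmeas : ∀ k, MeasurableSet (G k) := by
      intro k
      have : G k = ⋂ (j : ℕ), ⋂ (_ : j ≤ k), (fun ω => V (x j ω)) ⁻¹' (Set.Ioi γ) := by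
        ext ω; simp [hGdef, Set.mem_iInter]
      rw [this]
      exact MeasurableSet.iInter fun j => MeasurableSet.iInter fun _ =>
        (hVcont.measurable.comp (hxmeas j)) measurableSet_Ioi
    have hGS : ∀ k ω, ω ∈ G k ↔ D k ω ∈ S k := by
      intro k ω
      have e : ∀ j, ∀ h : j ≤ k,
          eisspIter f x₀ j (fun i => D k ω (Fin.castLE h i)) = x j ω := by
        intro j h; rw [hxiter j ω]; simp [hDdef, Fin.coe_castLE]
      simp only [hGdef, hSdef, Set.mem_setOf_eq]
      constructor
      · intro H j hj; rw [e j hj]; exact H j hj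
      · intro H j hj; rw [← e j hj]; exact H j hj
    have hGsub : ∀ k, G (k+1) ⊆ G k := by
      intro k ω hω j hj
      exact hω j (hj.trans (Nat.le_succ k))
    -- key identity from independence
    have key : ∀ k, ∫⁻ ω, (G k).indicator (fun _ => (1:ℝ≥0∞)) ω
          * ENNReal.ofReal (V (x (k+1) ω)) ∂P
        = ∫⁻ ω, (G k).indicator (fun _ => (1:ℝ≥0∞)) ω * ENNReal.ofReal (g (x k ω)) ∂P := by
      intro k
      have hdisj : Disjoint (Finset.range k) ({k} : Finset ℕ) := by simp
      have hAB := hindep.indepFun_finset (Finset.range k) {k} hdisj hdmeas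
      have hφ : Measurable (fun g : ((i : (Finset.range k : Finset ℕ)) →
          EuclideanSpace ℝ (Fin m)) => (fun i : Fin k => g ⟨(i : ℕ), Finset.mem_range.2 i.isLt⟩)) :=
        measurable_pi_lambda _ fun i => measurable_pi_apply _
      have hψ : Measurable (fun g : ((i : ({k} : Finset ℕ)) → EuclideanSpace ℝ (Fin m)) =>
          g ⟨k, Finset.mem_singleton_self k⟩) := measurable_pi_apply _
      have hind : IndepFun (D k) (d k) P := hAB.comp hφ hψ
      have hpair : Measure.map (fun ω => (D k ω, d k ω)) P = (Measure.map (D k) P).prod μ := by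
        rw [← hdist k]
        exact (indepFun_iff_map_prod_eq_prod_map_map (hDmeas k).aemeasurable
          (hdmeas k).aemeasurable).1 hind
      haveI : IsProbabilityMeasure (Measure.map (D k) P) :=
        Measure.isProbabilityMeasure_map (hDmeas k).aemeasurable
      set Θ : (Fin k → EuclideanSpace ℝ (Fin m)) × EuclideanSpace ℝ (Fin m) → ℝ≥0∞ :=
        fun z => (S k).indicator (fun _ => (1:ℝ≥0∞)) z.1
          * ENNReal.ofReal (V (f (eisspIter f x₀ k z.1) z.2)) with hΘdef
      have hΘm : Measurable Θ := by
        apply Measurable.mul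
        · exact (measurable_const.indicator (hSmeas k)).comp measurable_fst
        · exact ENNReal.measurable_ofReal.comp (hVcont.measurable.comp
            (hf.measurable.comp (((hiterm k).comp measurable_fst).prodMk measurable_snd)))
      have hL : ∀ ω, (G k).indicator (fun _ => (1:ℝ≥0∞)) ω * ENNReal.ofReal (V (x (k+1) ω))
          = Θ (D k ω, d k ω) := by
        intro ω
        have h1 : (G k).indicator (fun _ => (1:ℝ≥0∞)) ω
            = (S k).indicator (fun _ => (1:ℝ≥0∞)) (D k ω) := by
          by_cases h : ω ∈ G k
          · rw [Set.indicator_of_mem h, Set.indicator_of_mem ((hGS k ω).1 h)]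
          · rw [Set.indicator_of_notMem h,
              Set.indicator_of_notMem (fun hh => h ((hGS k ω).2 hh))]
        rw [h1, hstep k ω, hxiter k ω]
      have hmid : ∀ w, ∫⁻ v, Θ (w, v) ∂μ
          = (S k).indicator (fun _ => (1:ℝ≥0∞)) w
            * ENNReal.ofReal (g (eisspIter f x₀ k w)) := by
        intro w
        have hne : (S k).indicator (fun _ => (1:ℝ≥0∞)) w ≠ ⊤ := by
          by_cases h : w ∈ S k <;> simp [h]
        rw [hΘdef]
        simp only
        rw [lintegral_const_mul' _ _ hne,
          ← ofReal_integral_eq_lintegral_ofReal (hVint _)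
            (Eventually.of_forall fun v => hVnonneg _)]
      have hR : ∀ ω, (S k).indicator (fun _ => (1:ℝ≥0∞)) (D k ω)
            * ENNReal.ofReal (g (eisspIter f x₀ k (D k ω)))
          = (G k).indicator (fun _ => (1:ℝ≥0∞)) ω * ENNReal.ofReal (g (x k ω)) := by
        intro ω
        have h1 : (G k).indicator (fun _ => (1:ℝ≥0∞)) ω
            = (S k).indicator (fun _ => (1:ℝ≥0∞)) (D k ω) := by
          by_cases h : ω ∈ G k
          · rw [Set.indicator_of_mem h, Set.indicator_of_mem ((hGS k ω).1 h)]
          · rw [Set.indicator_of_notMem h,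
              Set.indicator_of_notMem (fun hh => h ((hGS k ω).2 hh))]
        rw [← h1, hxiter k ω]
      calc ∫⁻ ω, (G k).indicator (fun _ => (1:ℝ≥0∞)) ω * ENNReal.ofReal (V (x (k+1) ω)) ∂P
          = ∫⁻ ω, Θ (D k ω, d k ω) ∂P := lintegral_congr hL
        _ = ∫⁻ z, Θ z ∂((Measure.map (D k) P).prod μ) := by
            rw [← hpair, lintegral_map hΘm ((hDmeas k).prodMk (hdmeas k))]
        _ = ∫⁻ w, ∫⁻ v, Θ (w, v) ∂μ ∂(Measure.map (D k) P) := lintegral_prod Θ hΘm.aemeasurable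
        _ = ∫⁻ w, (S k).indicator (fun _ => (1:ℝ≥0∞)) w
              * ENNReal.ofReal (g (eisspIter f x₀ k w)) ∂(Measure.map (D k) P) :=
            lintegral_congr hmid
        _ = ∫⁻ ω, (S k).indicator (fun _ => (1:ℝ≥0∞)) (D k ω)
              * ENNReal.ofReal (g (eisspIter f x₀ k (D k ω))) ∂P := by
            have hm : Measurable fun w : Fin k → EuclideanSpace ℝ (Fin m) =>
                (S k).indicator (fun _ => (1:ℝ≥0∞)) w
                  * ENNReal.ofReal (g (eisspIter f x₀ k w)) :=
              (measurable_const.indicator (hSmeas k)).mul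
                (ENNReal.measurable_ofReal.comp (hgmeas.comp (hiterm k)))
            exact lintegral_map hm (hDmeas k)
        _ = ∫⁻ ω, (G k).indicator (fun _ => (1:ℝ≥0∞)) ω * ENNReal.ofReal (g (x k ω)) ∂P :=
            lintegral_congr hR
    -- the Lyapunov sequence
    set L : ℕ → ℝ≥0∞ := fun k => ∫⁻ ω, (G k).indicator (fun _ => (1:ℝ≥0∞)) ω
      * ENNReal.ofReal (V (x k ω)) ∂P with hLdef
    have hstep2 : ∀ k, L (k+1) + ENNReal.ofReal ε * P (G k) ≤ L k := by
      intro k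
      have h1 : L (k+1) ≤ ∫⁻ ω, (G k).indicator (fun _ => (1:ℝ≥0∞)) ω
          * ENNReal.ofReal (V (x (k+1) ω)) ∂P := by
        apply lintegral_mono; intro ω
        apply mul_le_mul_left
        by_cases h : ω ∈ G (k+1)
        · rw [Set.indicator_of_mem h, Set.indicator_of_mem (hGsub k h)]
        · rw [Set.indicator_of_notMem h]; exact zero_le
      have h2 : ENNReal.ofReal ε * P (G k) = ∫⁻ ω, (G k).indicator (fun _ => (1:ℝ≥0∞)) ω
          * ENNReal.ofReal ε ∂P := by
        rw [← lintegral_indicator_const (hGmeas k) (ENNReal.ofReal ε)]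
        apply lintegral_congr; intro ω
        by_cases h : ω ∈ G k <;> simp [h]
      calc L (k+1) + ENNReal.ofReal ε * P (G k)
          ≤ (∫⁻ ω, (G k).indicator (fun _ => (1:ℝ≥0∞)) ω
              * ENNReal.ofReal (V (x (k+1) ω)) ∂P) + ENNReal.ofReal ε * P (G k) :=
            add_le_add h1 le_rfl
        _ = (∫⁻ ω, (G k).indicator (fun _ => (1:ℝ≥0∞)) ω * ENNReal.ofReal (g (x k ω)) ∂P)
              + ∫⁻ ω, (G k).indicator (fun _ => (1:ℝ≥0∞)) ω * ENNReal.ofReal ε ∂P := by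
            rw [key k, h2]
        _ = ∫⁻ ω, ((G k).indicator (fun _ => (1:ℝ≥0∞)) ω * ENNReal.ofReal (g (x k ω))
              + (G k).indicator (fun _ => (1:ℝ≥0∞)) ω * ENNReal.ofReal ε) ∂P :=
            (lintegral_add_left ((measurable_const.indicator (hGmeas k)).mul
              (ENNReal.measurable_ofReal.comp (hgmeas.comp (hxmeas k)))) _).symm
        _ ≤ L k := by
            apply lintegral_mono; intro ω
            by_cases h : ω ∈ G k
            · simp only [Set.indicator_of_mem h, one_mul]
              have hV : γ < V (x k ω) := h k le_rfl
              have hαV : α * γ ≤ α * V (x k ω) :=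
                mul_le_mul_of_nonneg_left hV.le hα0.le
              have hsum : g (x k ω) + ε ≤ V (x k ω) := by
                have := hgle (x k ω); simp only [hεdef]; nlinarith
              calc ENNReal.ofReal (g (x k ω)) + ENNReal.ofReal ε
                  = ENNReal.ofReal (g (x k ω) + ε) :=
                    (ENNReal.ofReal_add (hg0 _) hε.le).symm
                _ ≤ ENNReal.ofReal (V (x k ω)) := ENNReal.ofReal_le_ofReal hsum
            · simp [Set.indicator_of_notMem h]
    have hsum : ∀ k : ℕ, L k + ENNReal.ofReal ε * (k : ℝ≥0∞) * P (G k) ≤ L 0 := by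
      intro k; induction k with
      | zero => simp
      | succ k ih =>
        have hPle : P (G (k+1)) ≤ P (G k) := measure_mono (hGsub k)
        calc L (k+1) + ENNReal.ofReal ε * ((k+1 : ℕ) : ℝ≥0∞) * P (G (k+1))
            ≤ L (k+1) + ENNReal.ofReal ε * ((k+1 : ℕ) : ℝ≥0∞) * P (G k) := by gcongr
          _ = (L (k+1) + ENNReal.ofReal ε * P (G k))
              + ENNReal.ofReal ε * (k : ℝ≥0∞) * P (G k) := by push_cast; ring
          _ ≤ L k + ENNReal.ofReal ε * (k : ℝ≥0∞) * P (G k) := add_le_add (hstep2 k) le_rfl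
          _ ≤ L 0 := ih
    have hL0 : L 0 ≤ ENNReal.ofReal (V x₀) := by
      calc L 0 ≤ ∫⁻ _ω, ENNReal.ofReal (V x₀) ∂P := by
            refine lintegral_mono fun ω => ?_
            by_cases h : ω ∈ G 0 <;> simp [Set.indicator_apply, h, hx0 ω]
          _ = ENNReal.ofReal (V x₀) := by simp
    have hbound : ∀ k : ℕ, ENNReal.ofReal ε * (k : ℝ≥0∞) * P (G k) ≤ ENNReal.ofReal (V x₀) :=
      fun k => le_trans (le_trans le_add_self (hsum k)) hL0
    -- conclude P(⋂ G k) = 0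
    have hPcap : P (⋂ k, G k) = 0 := by
      by_contra h
      have hq : 0 < P (⋂ k, G k) := pos_iff_ne_zero.2 h
      have hqk : ∀ k : ℕ, P (⋂ i, G i) ≤ P (G k) := fun k => measure_mono (Set.iInter_subset _ k)
      have hεq : 0 < ENNReal.ofReal ε := ENNReal.ofReal_pos.2 hε
      have hcb : ∀ k : ℕ, ENNReal.ofReal ε * (k : ℝ≥0∞) * P (⋂ i, G i)
          ≤ ENNReal.ofReal (V x₀) := by
        intro k
        calc ENNReal.ofReal ε * (k : ℝ≥0∞) * P (⋂ i, G i)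
            ≤ ENNReal.ofReal ε * (k : ℝ≥0∞) * P (G k) := mul_le_mul_right (hqk k) _
          _ ≤ ENNReal.ofReal (V x₀) := hbound k
      have hfin : P (⋂ i, G i) ≠ ⊤ := measure_ne_top P _
      -- take toReal
      have hreal : ∀ k : ℕ, ε * (k : ℝ) * (P (⋂ i, G i)).toReal ≤ V x₀ := by
        intro k
        have := hcb k
        have h1 : (ENNReal.ofReal ε * (k : ℝ≥0∞) * P (⋂ i, G i)).toReal
            ≤ (ENNReal.ofReal (V x₀)).toReal :=
          ENNReal.toReal_mono ENNReal.ofReal_ne_top this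
        simp only [ENNReal.toReal_mul, ENNReal.toReal_ofReal hε.le,
          ENNReal.toReal_natCast, ENNReal.toReal_ofReal (hVnonneg x₀)] at h1
        exact h1
      have hqr : 0 < (P (⋂ i, G i)).toReal := ENNReal.toReal_pos h hfin
      obtain ⟨k, hk⟩ := exists_nat_gt (V x₀ / (ε * (P (⋂ i, G i)).toReal))
      have := hreal k
      rw [div_lt_iff₀ (by positivity)] at hk
      nlinarith
    -- finish
    have hTmeas : MeasurableSet {ω | ∃ k : ℕ, x k ω
        ∈ {x' : EuclideanSpace ℝ (Fin n) | V x' ≤ γ}} := by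
      have : {ω | ∃ k : ℕ, x k ω ∈ {x' : EuclideanSpace ℝ (Fin n) | V x' ≤ γ}}
          = ⋃ k, (x k) ⁻¹' {x' | V x' ≤ γ} := by
        ext ω; simp
      rw [this]
      exact MeasurableSet.iUnion fun k => (hxmeas k)
        (hVcont.measurable measurableSet_Iic)
    rw [← prob_compl_eq_zero_iff hTmeas]
    have hcompl : {ω | ∃ k : ℕ, x k ω ∈ {x' : EuclideanSpace ℝ (Fin n) | V x' ≤ γ}}ᶜ
        = ⋂ k, G k := by
      ext ω
      simp only [Set.mem_compl_iff, Set.mem_setOf_eq, not_exists, not_le, Set.mem_iInter,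
        hGdef]
      exact ⟨fun h k j hj => h j, fun h j => h j j le_rfl⟩
    rw [hcompl]
    exact hPcap
end

section
/- Let A, B be real matrices with A ∈ ℝ^{n×n}, B ∈ ℝ^{n×m}, let P, Q ∈ ℝ^{n×n} be symmetric positive definite, let K ∈ ℝ^{m×n}, and set A_cl = A − BK. Suppose the closed-loop Lyapunov inequality A_clᵀ P A_cl − P ≼ −Q holds (in the positive-semidefinite order). Let d be a random vector in ℝⁿ with E[d] = 0 and E[‖d‖²] < ∞, and define V(x) = xᵀ P x. Then for every x ∈ ℝⁿ, E[V(A_cl x + d)] − V(x) ≤ −α V(x) + σ E[‖d‖²], where α = λ_min(Q)/λ_max(P) and σ = λ_max(P). -/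
open MeasureTheory Matrix


lemma smul_one_diag {n : ℕ} (C : ℝ) :
    (diagonal fun _ : Fin n => C) = C • (1 : Matrix (Fin n) (Fin n) ℝ) := by
  ext i j
  by_cases h : i = j <;> simp [diagonal, Matrix.smul_apply, h, Matrix.one_apply]

lemma aux_psd_upper {n : ℕ} (M : Matrix (Fin n) (Fin n) ℝ) (hM : M.IsHermitian) (C : ℝ)
    (h : ∀ i, hM.eigenvalues i ≤ C) : (C • (1 : Matrix (Fin n) (Fin n) ℝ) - M).PosSemidef := by
  have hU : (hM.eigenvectorUnitary : Matrix (Fin n) (Fin n) ℝ) *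
      star (hM.eigenvectorUnitary : Matrix (Fin n) (Fin n) ℝ) = 1 :=
    (Matrix.mem_unitaryGroup_iff).mp hM.eigenvectorUnitary.2
  have key : C • (1 : Matrix (Fin n) (Fin n) ℝ) - M =
      (hM.eigenvectorUnitary : Matrix (Fin n) (Fin n) ℝ) *
        diagonal (fun i => C - hM.eigenvalues i) *
        star (hM.eigenvectorUnitary : Matrix (Fin n) (Fin n) ℝ) := by
    have hd : diagonal (fun i => C - hM.eigenvalues i) =
        C • (1 : Matrix (Fin n) (Fin n) ℝ) - diagonal (RCLike.ofReal ∘ hM.eigenvalues) := by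
      rw [← diagonal_sub, ← smul_one_diag]
      congr 1
    rw [hd, mul_sub, sub_mul]
    rw [Matrix.mul_smul, mul_one, Matrix.smul_mul, hU]
    exact congrArg (fun X => C • (1 : Matrix (Fin n) (Fin n) ℝ) - X) hM.spectral_theorem
  rw [key]
  exact (posSemidef_diagonal_iff.mpr (fun i => sub_nonneg.mpr (h i))).mul_mul_conjTranspose_same _

/-- Upper quadratic-form bound. -/
lemma quad_le_mul {n : ℕ} (M : Matrix (Fin n) (Fin n) ℝ) (hM : M.IsHermitian) (C : ℝ)
    (h : ∀ i, hM.eigenvalues i ≤ C) (x : Fin n → ℝ) :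
    x ⬝ᵥ (M *ᵥ x) ≤ C * (x ⬝ᵥ x) := by
  have := (aux_psd_upper M hM C h).re_dotProduct_nonneg x
  simp only [RCLike.re_to_real, star_trivial, sub_mulVec, smul_mulVec, one_mulVec,
    dotProduct_sub, dotProduct_smul, smul_eq_mul] at this
  linarith

lemma aux_psd_lower {n : ℕ} (M : Matrix (Fin n) (Fin n) ℝ) (hM : M.IsHermitian) (c : ℝ)
    (h : ∀ i, c ≤ hM.eigenvalues i) : (M - c • (1 : Matrix (Fin n) (Fin n) ℝ)).PosSemidef := by
  have hU : (hM.eigenvectorUnitary : Matrix (Fin n) (Fin n) ℝ) *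
      star (hM.eigenvectorUnitary : Matrix (Fin n) (Fin n) ℝ) = 1 :=
    (Matrix.mem_unitaryGroup_iff).mp hM.eigenvectorUnitary.2
  have key : M - c • (1 : Matrix (Fin n) (Fin n) ℝ) =
      (hM.eigenvectorUnitary : Matrix (Fin n) (Fin n) ℝ) *
        diagonal (fun i => hM.eigenvalues i - c) *
        star (hM.eigenvectorUnitary : Matrix (Fin n) (Fin n) ℝ) := by
    have hd : diagonal (fun i => hM.eigenvalues i - c) =
        diagonal (RCLike.ofReal ∘ hM.eigenvalues) - c • (1 : Matrix (Fin n) (Fin n) ℝ) := by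
      rw [← diagonal_sub, ← smul_one_diag]
      congr 1
    rw [hd, mul_sub, sub_mul]
    rw [Matrix.mul_smul, mul_one, Matrix.smul_mul, hU]
    exact congrArg (fun X => X - c • (1 : Matrix (Fin n) (Fin n) ℝ)) hM.spectral_theorem
  rw [key]
  exact (posSemidef_diagonal_iff.mpr (fun i => sub_nonneg.mpr (h i))).mul_mul_conjTranspose_same _

lemma mul_le_quad {n : ℕ} (M : Matrix (Fin n) (Fin n) ℝ) (hM : M.IsHermitian) (c : ℝ)
    (h : ∀ i, c ≤ hM.eigenvalues i) (x : Fin n → ℝ) :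
    c * (x ⬝ᵥ x) ≤ x ⬝ᵥ (M *ᵥ x) := by
  have := (aux_psd_lower M hM c h).re_dotProduct_nonneg x
  simp only [RCLike.re_to_real, star_trivial, sub_mulVec, smul_mulVec, one_mulVec,
    dotProduct_sub, dotProduct_smul, smul_eq_mul] at this
  linarith

/-- **LQR Lyapunov function is an E-ISSp Lyapunov function for the closed loop (LQG
example).** Let `A_cl = A - B K` and suppose the symmetric positive definite `P, Q` satisfy
the closed-loop Lyapunov inequality `A_clᵀ P A_cl - P ≼ -Q`.  Let `d` be a zero-mean random
vector with finite second moment, and let `V(x) = xᵀ P x`.  Then for every `x`,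
`E[V(A_cl x + d)] - V(x) ≤ -α V(x) + σ E[‖d‖²]`, with `α = λ_min(Q)/λ_max(P)` and
`σ = λ_max(P)` (here `E[‖d‖²] = E[∑ i, d_i²]` is the Euclidean second moment). -/
theorem lqr_lyapunov_is_eissp {n m : ℕ}
    (A : Matrix (Fin n) (Fin n) ℝ) (B : Matrix (Fin n) (Fin m) ℝ)
    (Pm Qm : Matrix (Fin n) (Fin n) ℝ) (K : Matrix (Fin m) (Fin n) ℝ)
    (hP : Pm.PosDef) (hQ : Qm.PosDef)
    (hLyap : (Pm - (A - B * K)ᵀ * Pm * (A - B * K) - Qm).PosSemidef)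
    {Ω : Type*} {mΩ : MeasurableSpace Ω} (Pr : Measure Ω) [IsProbabilityMeasure Pr]
    (d : Ω → (Fin n → ℝ)) (hdmeas : Measurable d)
    (hd1 : Integrable d Pr) (hmean : (∫ ω, d ω ∂Pr) = 0)
    (hmom : Integrable (fun ω => ∑ i, d ω i ^ 2) Pr) :
    ∀ x : Fin n → ℝ,
      (∫ ω, ((A - B * K) *ᵥ x + d ω) ⬝ᵥ (Pm *ᵥ ((A - B * K) *ᵥ x + d ω)) ∂Pr)
          - x ⬝ᵥ (Pm *ᵥ x) ≤
        -(((⨅ i, hQ.1.eigenvalues i) / (⨆ i, hP.1.eigenvalues i)) * (x ⬝ᵥ (Pm *ᵥ x))) +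
          (⨆ i, hP.1.eigenvalues i) * ∫ ω, ∑ i, d ω i ^ 2 ∂Pr := by
  intro x
  rcases Nat.eq_zero_or_pos n with hn | hn
  · subst hn
    simp [dotProduct]
  haveI : Nonempty (Fin n) := ⟨⟨0, hn⟩⟩
  set lP := ⨆ i, hP.1.eigenvalues i with hlP
  set lQ := ⨅ i, hQ.1.eigenvalues i with hlQ
  have hsup_le : ∀ i, hP.1.eigenvalues i ≤ lP :=
    fun i => le_ciSup (Set.Finite.bddAbove (Set.finite_range _)) i
  have hinf_le : ∀ i, lQ ≤ hQ.1.eigenvalues i :=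
    fun i => ciInf_le (Set.Finite.bddBelow (Set.finite_range _)) i
  have hlP_pos : 0 < lP := lt_of_lt_of_le (hP.eigenvalues_pos (Classical.arbitrary _))
    (hsup_le _)
  have hlQ_nonneg : 0 ≤ lQ := le_ciInf fun i => (hQ.eigenvalues_pos i).le
  -- quadratic form bounds
  have quadP_le : ∀ v : Fin n → ℝ, v ⬝ᵥ (Pm *ᵥ v) ≤ lP * (v ⬝ᵥ v) :=
    fun v => quad_le_mul Pm hP.1 lP hsup_le v
  have quadQ_ge : lQ * (x ⬝ᵥ x) ≤ x ⬝ᵥ (Qm *ᵥ x) := mul_le_quad Qm hQ.1 lQ hinf_le x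
  set y := (A - B * K) *ᵥ x with hy
  -- Lyapunov inequality pointwise
  have hLy : y ⬝ᵥ (Pm *ᵥ y) ≤ x ⬝ᵥ (Pm *ᵥ x) - x ⬝ᵥ (Qm *ᵥ x) := by
    have h0 := hLyap.re_dotProduct_nonneg x
    simp only [RCLike.re_to_real, star_trivial, sub_mulVec, dotProduct_sub] at h0
    have hx : x ⬝ᵥ (((A - B * K)ᵀ * Pm * (A - B * K)) *ᵥ x) = y ⬝ᵥ (Pm *ᵥ y) := by
      rw [← Matrix.mulVec_mulVec, ← Matrix.mulVec_mulVec, Matrix.dotProduct_mulVec,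
        Matrix.vecMul_transpose]
    rw [hx] at h0
    linarith
  -- components of d are integrable / square-integrable
  have hdi : ∀ i, Integrable (fun ω => d ω i) Pr := fun i =>
    (ContinuousLinearMap.proj (R := ℝ) (φ := fun _ : Fin n => ℝ) i).integrable_comp hd1
  have hdi_meas : ∀ i, Measurable fun ω => d ω i := fun i => (measurable_pi_apply i).comp hdmeas
  have hdi2 : ∀ i, Integrable (fun ω => d ω i ^ 2) Pr := by
    intro i
    refine hmom.mono ((hdi_meas i).pow_const 2).aestronglyMeasurable ?_
    refine Filter.Eventually.of_forall fun ω => ?_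
    rw [Real.norm_eq_abs, Real.norm_eq_abs, abs_of_nonneg (sq_nonneg _),
      abs_of_nonneg (Finset.sum_nonneg fun j _ => sq_nonneg _)]
    exact Finset.single_le_sum (fun j _ => sq_nonneg (d ω j)) (Finset.mem_univ i)
  have hdij : ∀ i j, Integrable (fun ω => d ω i * d ω j) Pr := by
    intro i j
    refine (((hdi2 i).add (hdi2 j)).div_const 2).mono
      ((hdi_meas i).mul (hdi_meas j)).aestronglyMeasurable ?_
    refine Filter.Eventually.of_forall fun ω => ?_
    rw [Real.norm_eq_abs, Real.norm_eq_abs, abs_mul]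
    have h1 : |d ω i| * |d ω j| ≤ (d ω i ^ 2 + d ω j ^ 2) / 2 := by
      nlinarith [sq_nonneg (|d ω i| - |d ω j|), sq_abs (d ω i), sq_abs (d ω j)]
    calc |d ω i| * |d ω j| ≤ (d ω i ^ 2 + d ω j ^ 2) / 2 := h1
      _ ≤ |(d ω i ^ 2 + d ω j ^ 2) / 2| := le_abs_self _
  -- linear term integrates to zero
  have lin_int : ∀ L : (Fin n → ℝ) →L[ℝ] ℝ,
      Integrable (fun ω => L (d ω)) Pr ∧ (∫ ω, L (d ω) ∂Pr) = 0 := by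
    intro L
    refine ⟨L.integrable_comp hd1, ?_⟩
    rw [L.integral_comp_comm hd1, hmean, map_zero]
  -- the two cross terms, as continuous linear maps
  let L1 : (Fin n → ℝ) →L[ℝ] ℝ := LinearMap.toContinuousLinearMap
    { toFun := fun v => y ⬝ᵥ (Pm *ᵥ v)
      map_add' := fun u v => by simp [mulVec_add, dotProduct_add]
      map_smul' := fun c v => by simp [mulVec_smul, dotProduct_smul, smul_eq_mul] }
  let L2 : (Fin n → ℝ) →L[ℝ] ℝ := LinearMap.toContinuousLinearMap
    { toFun := fun v => v ⬝ᵥ (Pm *ᵥ y)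
      map_add' := fun u v => by simp [add_dotProduct]
      map_smul' := fun c v => by simp [smul_dotProduct, smul_eq_mul] }
  -- quadratic term in d
  have hg_int : Integrable (fun ω => d ω ⬝ᵥ (Pm *ᵥ d ω)) Pr := by
    have : (fun ω => d ω ⬝ᵥ (Pm *ᵥ d ω)) =
        fun ω => ∑ i, ∑ j, Pm i j * (d ω i * d ω j) := by
      funext ω
      simp only [dotProduct, mulVec, Finset.mul_sum]
      exact Finset.sum_congr rfl fun i _ => Finset.sum_congr rfl fun j _ => by ring
    rw [this]
    exact integrable_finset_sum _ fun i _ =>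
      integrable_finset_sum _ fun j _ => (hdij i j).const_mul _
  have hg_le : (∫ ω, d ω ⬝ᵥ (Pm *ᵥ d ω) ∂Pr) ≤ lP * ∫ ω, ∑ i, d ω i ^ 2 ∂Pr := by
    rw [← integral_const_mul]
    refine integral_mono hg_int (hmom.const_mul _) fun ω => ?_
    have := quadP_le (d ω)
    have hdd : d ω ⬝ᵥ d ω = ∑ i, d ω i ^ 2 := by
      simp [dotProduct, sq]
    rw [hdd] at this
    exact this
  -- expand the integrand
  have expand : ∀ ω, (y + d ω) ⬝ᵥ (Pm *ᵥ (y + d ω)) =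
      y ⬝ᵥ (Pm *ᵥ y) + (L1 (d ω) + (L2 (d ω) + d ω ⬝ᵥ (Pm *ᵥ d ω))) := by
    intro ω
    simp only [L1, L2, LinearMap.coe_toContinuousLinearMap', LinearMap.coe_mk, AddHom.coe_mk,
      mulVec_add, dotProduct_add, add_dotProduct]
    ring
  have hIL1 := lin_int L1
  have hIL2 := lin_int L2
  have int_eq : (∫ ω, (y + d ω) ⬝ᵥ (Pm *ᵥ (y + d ω)) ∂Pr) =
      y ⬝ᵥ (Pm *ᵥ y) + ∫ ω, d ω ⬝ᵥ (Pm *ᵥ d ω) ∂Pr := by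
    have h3 : Integrable (fun ω => L2 (d ω) + d ω ⬝ᵥ (Pm *ᵥ d ω)) Pr := hIL2.1.add hg_int
    have h2 : Integrable (fun ω => L1 (d ω) + (L2 (d ω) + d ω ⬝ᵥ (Pm *ᵥ d ω))) Pr :=
      hIL1.1.add h3
    simp only [expand]
    rw [integral_add (integrable_const _) h2, integral_add hIL1.1 h3,
      integral_add hIL2.1 hg_int, integral_const, hIL1.2, hIL2.2]
    simp
  rw [int_eq]
  -- combine the bounds
  have hPx_le : x ⬝ᵥ (Pm *ᵥ x) ≤ lP * (x ⬝ᵥ x) := quadP_le x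
  have hQd : (lQ / lP) * (x ⬝ᵥ (Pm *ᵥ x)) ≤ x ⬝ᵥ (Qm *ᵥ x) := by
    calc (lQ / lP) * (x ⬝ᵥ (Pm *ᵥ x)) ≤ (lQ / lP) * (lP * (x ⬝ᵥ x)) := by
          exact mul_le_mul_of_nonneg_left hPx_le (div_nonneg hlQ_nonneg hlP_pos.le)
      _ = lQ * (x ⬝ᵥ x) := by field_simp
      _ ≤ x ⬝ᵥ (Qm *ᵥ x) := quadQ_ge
  linarith
end

section
/- Consider the discrete-time stochastic system x_{k+1} = f(x_k, d_k) with disturbances d_k drawn i.i.d. from a distribution D, and suppose V : ℝⁿ → ℝ_{≥0} satisfies E_{d∼D}[V(f(x,d))] − V(x) ≤ −α V(x) + σ̃ for all x ∈ ℝⁿ, with α ∈ (0,1) and σ̃ ≥ 0. Fix K ∈ ℕ, an initial state x₀, and a level ρ̃ > 0 with V(x₀) ≤ ρ̃ and ρ̃ ≥ σ̃/α. Then P{ V(x_k) ≤ ρ̃ for all k ≤ K } ≥ ((ρ̃ − V(x₀))/ρ̃) · ((ρ̃ − σ̃)/ρ̃)^K. -/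
open MeasureTheory ProbabilityTheory Filter Set

noncomputable section

variable {n m : ℕ}

/-- Trajectory as a measurable function of the first `k` disturbances. -/
def kushnerTraj (f : EuclideanSpace ℝ (Fin n) → EuclideanSpace ℝ (Fin m) → EuclideanSpace ℝ (Fin n))
    (x₀ : EuclideanSpace ℝ (Fin n)) :
    ∀ k, (Fin k → EuclideanSpace ℝ (Fin m)) → EuclideanSpace ℝ (Fin n)
  | 0 => fun _ => x₀
  | (k+1) => fun v => f (kushnerTraj f x₀ k (fun i => v i.castSucc)) (v (Fin.last k))

lemma kushnerTraj_measurable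
    (f : EuclideanSpace ℝ (Fin n) → EuclideanSpace ℝ (Fin m) → EuclideanSpace ℝ (Fin n))
    (hf : Continuous (Function.uncurry f)) (x₀ : EuclideanSpace ℝ (Fin n)) (k : ℕ) :
    Measurable (kushnerTraj f x₀ k) := by
  induction k with
  | zero => exact measurable_const
  | succ k ih =>
    have h0 : Measurable fun v : Fin (k+1) → EuclideanSpace ℝ (Fin m) =>
        (fun i : Fin k => v i.castSucc) :=
      measurable_pi_lambda _ fun i => measurable_pi_apply _
    have h1 : Measurable fun v : Fin (k+1) → EuclideanSpace ℝ (Fin m) =>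
        (kushnerTraj f x₀ k (fun i => v i.castSucc), v (Fin.last k)) :=
      (ih.comp h0).prodMk (measurable_pi_apply _)
    exact hf.measurable.comp h1

end

/-- **Kushner's finite-horizon invariance bound.** For `x_{k+1} = f(x_k,d_k)` with `d_k`
i.i.d. from `μ`, suppose `V : ℝⁿ → ℝ_{≥0}` satisfies
`E_d[V(f(x,d))] - V(x) ≤ -α V(x) + σ̃` for all `x`, with `α ∈ (0,1)`, `σ̃ ≥ 0`.  Fix a
horizon `K`, an initial state `x₀`, and a level `ρ̃ > 0` with `V(x₀) ≤ ρ̃` and `ρ̃ ≥ σ̃/α`.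
Then `P{V(x_k) ≤ ρ̃, ∀ k ≤ K} ≥ ((ρ̃ - V(x₀))/ρ̃) ((ρ̃ - σ̃)/ρ̃)^K`. -/
theorem kushner_invariance_bound {n m : ℕ}
    (f : EuclideanSpace ℝ (Fin n) → EuclideanSpace ℝ (Fin m) → EuclideanSpace ℝ (Fin n))
    (hf : Continuous (Function.uncurry f))
    (μ : Measure (EuclideanSpace ℝ (Fin m))) [IsProbabilityMeasure μ]
    (V : EuclideanSpace ℝ (Fin n) → ℝ) (hVmeas : Measurable V) (hVnonneg : ∀ x, 0 ≤ V x)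
    (α σt : ℝ) (hα : α ∈ Set.Ioo (0 : ℝ) 1) (hσ : 0 ≤ σt)
    (hVint : ∀ x, Integrable (fun v => V (f x v)) μ)
    (hdrift : ∀ x, (∫ v, V (f x v) ∂μ) - V x ≤ -(α * V x) + σt)
    (K : ℕ) (x₀ : EuclideanSpace ℝ (Fin n))
    (ρt : ℝ) (hρ : 0 < ρt) (hx₀ : V x₀ ≤ ρt) (hρσ : σt / α ≤ ρt)
    {Ω : Type*} {mΩ : MeasurableSpace Ω} (P : Measure Ω) [IsProbabilityMeasure P]
    (d : ℕ → Ω → EuclideanSpace ℝ (Fin m)) (hdmeas : ∀ k, Measurable (d k))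
    (hindep : iIndepFun d P)
    (hdist : ∀ k, Measure.map (d k) P = μ)
    (x : ℕ → Ω → EuclideanSpace ℝ (Fin n))
    (hx0 : ∀ ω, x 0 ω = x₀)
    (hxstep : ∀ k ω, x (k + 1) ω = f (x k ω) (d k ω)) :
    P {ω | ∀ k ≤ K, V (x k ω) ≤ ρt} ≥
      ENNReal.ofReal (((ρt - V x₀) / ρt) * ((ρt - σt) / ρt) ^ K) := by
  -- basic real facts
  obtain ⟨hα0, hα1⟩ := hα
  have hσρ' : σt ≤ ρt * α := (div_le_iff₀ hα0).mp hρσ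
  have hσρ : σt ≤ ρt := hσρ'.trans (by nlinarith)
  set c : ℝ := (ρt - σt) / ρt with hc_def
  have hc0 : 0 ≤ c := div_nonneg (by linarith) hρ.le
  -- measurability of the state process
  have hxmeas : ∀ k, Measurable (x k) := by
    intro k
    induction k with
    | zero =>
      have : x 0 = fun _ => x₀ := funext hx0
      rw [this]; exact measurable_const
    | succ k ih =>
      have : x (k+1) = fun ω => f (x k ω) (d k ω) := funext (hxstep k)
      rw [this]
      exact hf.measurable.comp (ih.prodMk (hdmeas k))
  -- the state is a function of disturbances
  have hxtraj : ∀ k ω, x k ω = kushnerTraj f x₀ k (fun i => d i ω) := by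
    intro k
    induction k with
    | zero => intro ω; rw [hx0]; rfl
    | succ k ih =>
      intro ω
      rw [hxstep k ω, ih ω]
      rfl
  -- safe sets
  set S : ℕ → Set Ω := fun k => {ω | ∀ j ≤ k, V (x j ω) ≤ ρt} with hS_def
  have hSmeas : ∀ k, MeasurableSet (S k) := by
    intro k
    have : S k = ⋂ j ∈ Set.Iic k, (fun ω => V (x j ω)) ⁻¹' Set.Iic ρt := by
      ext ω; simp [hS_def]
    rw [this]
    exact MeasurableSet.biInter (Set.to_countable _)
      (fun j _ => (hVmeas.comp (hxmeas j)) measurableSet_Iic)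
  set q : ℕ → ENNReal := fun k => ∫⁻ ω in S k, ENNReal.ofReal (ρt - V (x k ω)) ∂P with hq_def
  -- the key one-step estimate
  have key : ∀ k, ENNReal.ofReal c * q k ≤ q (k+1) := by
    intro k
    classical
    set Y : Ω → (Fin k → EuclideanSpace ℝ (Fin m)) := fun ω i => d i ω with hY_def
    have hYmeas : Measurable Y := measurable_pi_lambda _ fun i => hdmeas i
    -- independence of the history from the next disturbance
    have hYindep : IndepFun Y (d k) P := by
      have hdisj : Disjoint (Finset.range k) ({k} : Finset ℕ) := by
        simp [Finset.disjoint_singleton_right]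
      have h1 := hindep.indepFun_finset (Finset.range k) {k} hdisj hdmeas
      have hφ : Measurable fun g : {i // i ∈ Finset.range k} → EuclideanSpace ℝ (Fin m) =>
          (fun i : Fin k => g ⟨i, Finset.mem_range.mpr i.isLt⟩) :=
        measurable_pi_lambda _ fun i => measurable_pi_apply _
      have hψ : Measurable fun g : {i // i ∈ ({k} : Finset ℕ)} → EuclideanSpace ℝ (Fin m) =>
          g ⟨k, Finset.mem_singleton_self k⟩ := measurable_pi_apply _
      exact h1.comp hφ hψ
    have hmap : Measure.map (fun ω => (Y ω, d k ω)) P = (Measure.map Y P).prod μ := by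
      rw [← hdist k]
      exact (indepFun_iff_map_prod_eq_prod_map_map hYmeas.aemeasurable
        (hdmeas k).aemeasurable).mp hYindep
    -- safe set in terms of the first k disturbances
    set T : Set (Fin k → EuclideanSpace ℝ (Fin m)) :=
      {v | ∀ j, ∀ h : j ≤ k,
        V (kushnerTraj f x₀ j (fun i => v ⟨i.1, lt_of_lt_of_le i.2 h⟩)) ≤ ρt} with hT_def
    have hTmeas : MeasurableSet T := by
      have hTeq : T = ⋂ (j : ℕ) (h : j ≤ k),
          (fun v : Fin k → EuclideanSpace ℝ (Fin m) =>
            V (kushnerTraj f x₀ j (fun i => v ⟨i.1, lt_of_lt_of_le i.2 h⟩))) ⁻¹' Set.Iic ρt := by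
        ext v; simp [hT_def]
      rw [hTeq]
      refine MeasurableSet.iInter fun j => MeasurableSet.iInter fun h => ?_
      have hres : Measurable fun v : Fin k → EuclideanSpace ℝ (Fin m) =>
          (fun i : Fin j => v ⟨i.1, lt_of_lt_of_le i.2 h⟩) :=
        measurable_pi_lambda _ fun i => measurable_pi_apply _
      exact (hVmeas.comp ((kushnerTraj_measurable f hf x₀ j).comp hres)) measurableSet_Iic
    have hST : S k = Y ⁻¹' T := by
      ext ω
      simp only [hS_def, Set.mem_setOf_eq, Set.mem_preimage, hT_def]
      constructor
      · intro h j hj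
        have h2 := h j hj
        rw [hxtraj j ω] at h2
        exact h2
      · intro h j hj
        have h2 := h j hj
        rw [hxtraj j ω]
        exact h2
    -- the integrand on the product space
    set g1 : (Fin k → EuclideanSpace ℝ (Fin m)) × EuclideanSpace ℝ (Fin m) → ENNReal :=
      fun p => ENNReal.ofReal (ρt - V (f (kushnerTraj f x₀ k p.1) p.2)) with hg1_def
    have hg1meas : Measurable g1 := by
      apply ENNReal.measurable_ofReal.comp
      apply measurable_const.sub
      exact hVmeas.comp (hf.measurable.comp
        (((kushnerTraj_measurable f hf x₀ k).comp measurable_fst).prodMk measurable_snd))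
    set G : (Fin k → EuclideanSpace ℝ (Fin m)) × EuclideanSpace ℝ (Fin m) → ENNReal :=
      fun p => (T ×ˢ (Set.univ : Set (EuclideanSpace ℝ (Fin m)))).indicator g1 p with hG_def
    have hGmeas : Measurable G := hg1meas.indicator (hTmeas.prod MeasurableSet.univ)
    -- step (b): extend the integral from S (k+1) to S k
    have hb : q (k+1) = ∫⁻ ω in S k, ENNReal.ofReal (ρt - V (x (k+1) ω)) ∂P := by
      show (∫⁻ ω in S (k+1), ENNReal.ofReal (ρt - V (x (k+1) ω)) ∂P) = _
      rw [← lintegral_indicator (hSmeas (k+1)), ← lintegral_indicator (hSmeas k)]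
      congr 1
      funext ω
      by_cases h1 : ω ∈ S (k+1)
      · have h2 : ω ∈ S k := fun j hj => h1 j (hj.trans (Nat.le_succ k))
        rw [Set.indicator_of_mem h1, Set.indicator_of_mem h2]
      · by_cases h2 : ω ∈ S k
        · have h3 : ¬ V (x (k+1) ω) ≤ ρt := by
            intro hcon
            apply h1
            intro j hj
            rcases Nat.lt_or_ge j (k+1) with h4 | h4
            · exact h2 j (Nat.lt_succ_iff.mp h4)
            · have h5 : j = k + 1 := le_antisymm hj h4
              rw [h5]; exact hcon
          rw [Set.indicator_of_notMem h1, Set.indicator_of_mem h2]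
          symm
          rw [ENNReal.ofReal_eq_zero]
          linarith
        · rw [Set.indicator_of_notMem h1, Set.indicator_of_notMem h2]
    -- step (c): rewrite as a function of (Y, d k)
    have hc : (∫⁻ ω in S k, ENNReal.ofReal (ρt - V (x (k+1) ω)) ∂P)
        = ∫⁻ ω, G (Y ω, d k ω) ∂P := by
      rw [← lintegral_indicator (hSmeas k)]
      congr 1
      funext ω
      by_cases h1 : ω ∈ S k
      · have h2 : Y ω ∈ T := by rw [hST] at h1; exact h1
        rw [Set.indicator_of_mem h1]
        simp only [hG_def]
        rw [Set.indicator_of_mem (show (Y ω, d k ω) ∈ T ×ˢ Set.univ from ⟨h2, trivial⟩)]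
        simp only [hg1_def]
        rw [hxstep k ω, hxtraj k ω]
      · have h2 : Y ω ∉ T := by rw [hST] at h1; exact h1
        rw [Set.indicator_of_notMem h1]
        simp only [hG_def]
        rw [Set.indicator_of_notMem
          (fun hcon : (Y ω, d k ω) ∈ T ×ˢ Set.univ => h2 hcon.1)]
    -- step (d): product structure
    have hd : (∫⁻ ω, G (Y ω, d k ω) ∂P)
        = ∫⁻ v, ∫⁻ z, G (v, z) ∂μ ∂(Measure.map Y P) := by
      have hpm : Measurable fun ω => (Y ω, d k ω) := hYmeas.prodMk (hdmeas k)
      rw [← lintegral_map hGmeas hpm, hmap, lintegral_prod _ hGmeas.aemeasurable]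
    -- step (e): pointwise lower bound on the inner integral
    set h' : (Fin k → EuclideanSpace ℝ (Fin m)) → ENNReal :=
      fun v => ENNReal.ofReal (ρt - V (kushnerTraj f x₀ k v)) with hh'_def
    have hh'meas : Measurable h' :=
      ENNReal.measurable_ofReal.comp
        (measurable_const.sub (hVmeas.comp (kushnerTraj_measurable f hf x₀ k)))
    have he : ∀ v, ENNReal.ofReal c * T.indicator h' v ≤ ∫⁻ z, G (v, z) ∂μ := by
      intro v
      by_cases hv : v ∈ T
      · rw [Set.indicator_of_mem hv, hh'_def]
        set y := kushnerTraj f x₀ k v with hy_def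
        have hVy0 : 0 ≤ V y := hVnonneg y
        have hVyρ : V y ≤ ρt := by
          have h2 := hv k le_rfl
          exact h2
        have hfym : Measurable fun z => V (f y z) :=
          hVmeas.comp ((hf.comp (Continuous.prodMk_right y)).measurable)
        have hG2 : ∀ z, G (v, z) = ENNReal.ofReal (ρt - V (f y z)) := fun z => by
          simp only [hG_def]
          rw [Set.indicator_of_mem (show (v, z) ∈ T ×ˢ Set.univ from ⟨hv, trivial⟩)]
        calc ENNReal.ofReal c * ENNReal.ofReal (ρt - V y)
            = ENNReal.ofReal (c * (ρt - V y)) := (ENNReal.ofReal_mul hc0).symm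
          _ ≤ ENNReal.ofReal (ρt - ((1-α) * V y + σt)) := by
              apply ENNReal.ofReal_le_ofReal
              rw [hc_def, div_mul_eq_mul_div, div_le_iff₀ hρ]
              nlinarith
          _ = ENNReal.ofReal ρt - ENNReal.ofReal ((1-α) * V y + σt) :=
              ENNReal.ofReal_sub _ (by nlinarith)
          _ ≤ ENNReal.ofReal ρt - ENNReal.ofReal (∫ z, V (f y z) ∂μ) := by
              apply tsub_le_tsub_left
              apply ENNReal.ofReal_le_ofReal
              have h3 := hdrift y
              linarith
          _ = (∫⁻ _z, ENNReal.ofReal ρt ∂μ) - ∫⁻ z, ENNReal.ofReal (V (f y z)) ∂μ := by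
              rw [lintegral_const, measure_univ, mul_one,
                ofReal_integral_eq_lintegral_ofReal (hVint y)
                  (Filter.Eventually.of_forall fun z => hVnonneg _)]
          _ ≤ ∫⁻ z, (ENNReal.ofReal ρt - ENNReal.ofReal (V (f y z))) ∂μ :=
              lintegral_sub_le _ _ (ENNReal.measurable_ofReal.comp hfym)
          _ = ∫⁻ z, ENNReal.ofReal (ρt - V (f y z)) ∂μ := by
              congr 1
              funext z
              rw [ENNReal.ofReal_sub _ (hVnonneg _)]
          _ = ∫⁻ z, G (v, z) ∂μ := by
              congr 1
              funext z
              rw [hG2 z]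
      · rw [Set.indicator_of_notMem hv, mul_zero]
        exact zero_le
    -- put everything together
    have hfq : ENNReal.ofReal c * q k
        = ∫⁻ v, ENNReal.ofReal c * T.indicator h' v ∂(Measure.map Y P) := by
      rw [lintegral_const_mul _ (hh'meas.indicator hTmeas)]
      congr 1
      rw [lintegral_map (hh'meas.indicator hTmeas) hYmeas]
      show q k = _
      rw [show (q k) = ∫⁻ ω in S k, ENNReal.ofReal (ρt - V (x k ω)) ∂P from rfl,
        ← lintegral_indicator (hSmeas k)]
      congr 1
      funext ω
      by_cases h1 : ω ∈ S k
      · have h2 : Y ω ∈ T := by rw [hST] at h1; exact h1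
        rw [Set.indicator_of_mem h1, Set.indicator_of_mem h2, hh'_def, hxtraj k ω]
      · have h2 : Y ω ∉ T := by rw [hST] at h1; exact h1
        rw [Set.indicator_of_notMem h1, Set.indicator_of_notMem h2]
    rw [hb, hc, hd, hfq]
    exact lintegral_mono he
  -- q 0
  have hq0 : q 0 = ENNReal.ofReal (ρt - V x₀) := by
    have hS0 : S 0 = Set.univ := by
      ext ω
      simp only [hS_def, Set.mem_setOf_eq, Set.mem_univ, iff_true, Nat.le_zero]
      rintro j rfl
      rw [hx0]; exact hx₀
    simp [hq_def, hS0, hx0, lintegral_const]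
  -- iterate
  have hqK : ENNReal.ofReal c ^ K * ENNReal.ofReal (ρt - V x₀) ≤ q K := by
    induction K with
    | zero => simp [hq0]
    | succ K ih =>
      calc ENNReal.ofReal c ^ (K+1) * ENNReal.ofReal (ρt - V x₀)
          = ENNReal.ofReal c * (ENNReal.ofReal c ^ K * ENNReal.ofReal (ρt - V x₀)) := by ring
        _ ≤ ENNReal.ofReal c * q K := by exact mul_le_mul_right ih _
        _ ≤ q (K+1) := key K
  -- upper bound for q K
  have hqKle : q K ≤ ENNReal.ofReal ρt * P (S K) := by
    calc q K ≤ ∫⁻ _ω in S K, ENNReal.ofReal ρt ∂P := by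
          apply lintegral_mono
          intro ω
          exact ENNReal.ofReal_le_ofReal (by linarith [hVnonneg (x K ω)])
      _ = ENNReal.ofReal ρt * P (S K) := by rw [setLIntegral_const]
  -- conclude
  have hfinal : ENNReal.ofReal (ρt - V x₀) * ENNReal.ofReal c ^ K ≤ P (S K) * ENNReal.ofReal ρt := by
    rw [mul_comm (P (S K))]
    calc ENNReal.ofReal (ρt - V x₀) * ENNReal.ofReal c ^ K
        = ENNReal.ofReal c ^ K * ENNReal.ofReal (ρt - V x₀) := by ring
      _ ≤ q K := hqK
      _ ≤ ENNReal.ofReal ρt * P (S K) := hqKle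
  have hrw : ENNReal.ofReal (((ρt - V x₀) / ρt) * c ^ K)
      = ENNReal.ofReal (ρt - V x₀) * ENNReal.ofReal c ^ K / ENNReal.ofReal ρt := by
    rw [div_mul_eq_mul_div, ENNReal.ofReal_div_of_pos hρ,
      ENNReal.ofReal_mul (by linarith), ENNReal.ofReal_pow hc0]
  rw [ge_iff_le]
  show ENNReal.ofReal (((ρt - V x₀) / ρt) * c ^ K) ≤ P (S K)
  rw [hrw]
  exact ENNReal.div_le_of_le_mul hfinal
end
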